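/- arXiv:1201.5335 — 8 statements merged into one kernel-verified Lean document; each statement's English description precedes it below -/
import Mathlib

section
/- For every e ∈ E and every f ∈ E with f ≠ e, the mapping Y ↦ R_e(Y) takes values in (0,1] and is non-increasing in the variable Y_f when all other coordinates are held fixed. -/
open scoped Classical

/-- `R_e(Y) = (Σ_{S ⊆ E\{e}, |S| ≤ w−1} Y^S) / (Σ_{S ⊆ E\{e}, |S| ≤ w} Y^S)`,
where `Y^S = ∏_{f ∈ S} Y_f`. -/
noncomputable def Re {α : Type*} [DecidableEq α] (E : Finset α) (w : ℕ) (e : α)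
    (Y : α → ℝ) : ℝ :=
  (∑ S ∈ (E.erase e).powerset.filter (fun S => S.card ≤ w - 1), ∏ f ∈ S, Y f) /
  (∑ S ∈ (E.erase e).powerset.filter (fun S => S.card ≤ w), ∏ f ∈ S, Y f)

open Finset

noncomputable def Pp {α : Type*} [DecidableEq α] (F : Finset α) (Y : α → ℝ) (k : ℕ) : ℝ :=
  ∑ S ∈ F.powerset.filter (fun S => S.card ≤ k), ∏ a ∈ S, Y a

section aux
variable {α : Type*} [DecidableEq α]

lemma prod_nonneg_of_subset {F : Finset α} {Y : α → ℝ} (hY : ∀ a ∈ F, 0 ≤ Y a)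
    {S : Finset α} (hS : S ⊆ F) : 0 ≤ ∏ a ∈ S, Y a :=
  Finset.prod_nonneg fun a ha => hY a (hS ha)

lemma one_le_Pp {F : Finset α} {Y : α → ℝ} (hY : ∀ a ∈ F, 0 ≤ Y a) (k : ℕ) :
    1 ≤ Pp F Y k := by
  have h1 : (∅ : Finset α) ∈ F.powerset.filter (fun S => S.card ≤ k) := by simp
  have := Finset.single_le_sum (f := fun S : Finset α => ∏ a ∈ S, Y a)
    (fun S hS => prod_nonneg_of_subset hY (Finset.mem_powerset.mp (Finset.mem_filter.mp hS).1)) h1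
  simpa [Pp] using this

lemma Pp_nonneg {F : Finset α} {Y : α → ℝ} (hY : ∀ a ∈ F, 0 ≤ Y a) (k : ℕ) :
    0 ≤ Pp F Y k := le_trans zero_le_one (one_le_Pp hY k)

lemma sum_split {F : Finset α} {x : α} (hx : x ∉ F) (Z : α → ℝ) (k : ℕ) :
    ∑ S ∈ (insert x F).powerset.filter (fun S => S.card ≤ k), ∏ a ∈ S, Z a
      = (∑ S ∈ F.powerset.filter (fun S => S.card ≤ k), ∏ a ∈ S, Z a)
        + Z x * ∑ S ∈ F.powerset.filter (fun S => S.card + 1 ≤ k), ∏ a ∈ S, Z a := by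
  rw [Finset.sum_filter, Finset.sum_filter, Finset.sum_filter,
    Finset.sum_powerset_insert hx, Finset.mul_sum]
  congr 1
  refine Finset.sum_congr rfl fun S hS => ?_
  have hxS : x ∉ S := fun h => hx (Finset.mem_powerset.mp hS h)
  rw [Finset.card_insert_of_notMem hxS, Finset.prod_insert hxS]
  by_cases h : S.card + 1 ≤ k <;> simp [h]

lemma Pp_insert {F : Finset α} {x : α} (hx : x ∉ F) (Y : α → ℝ) (k : ℕ) :
    Pp (insert x F) Y (k+1) = Pp F Y (k+1) + Y x * Pp F Y k := by
  unfold Pp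
  rw [sum_split hx]
  simp only [Nat.add_le_add_iff_right]

lemma Pp_zero (F : Finset α) (Y : α → ℝ) : Pp F Y 0 = 1 := by
  have h : F.powerset.filter (fun S => S.card ≤ 0) = {∅} := by
    ext S
    simp only [Finset.mem_filter, Finset.mem_powerset, Nat.le_zero,
      Finset.card_eq_zero, Finset.mem_singleton]
    constructor
    · rintro ⟨_, h⟩; exact h
    · rintro rfl; exact ⟨Finset.empty_subset F, rfl⟩
  rw [Pp, h]
  simp

lemma Pp_logconcave {Y : α → ℝ} : ∀ (F : Finset α), (∀ a ∈ F, 0 ≤ Y a) → ∀ k,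
    Pp F Y k * Pp F Y (k+2) ≤ Pp F Y (k+1)^2 := by
  intro F
  induction F using Finset.induction_on with
  | empty =>
      intro _ k
      have : ∀ m, Pp (∅ : Finset α) Y m = 1 := fun m => by
        simp [Pp, Finset.powerset_empty, Finset.filter_singleton]
      simp [this]
  | @insert x F hx ih =>
      intro hY k
      have ht : 0 ≤ Y x := hY x (Finset.mem_insert_self x F)
      have hYF : ∀ a ∈ F, 0 ≤ Y a := fun a ha => hY a (Finset.mem_insert_of_mem ha)
      cases k with
      | zero =>
          have h2 : Pp (insert x F) Y 2 = Pp F Y 2 + Y x * Pp F Y 1 := Pp_insert hx Y 1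
          have h1 : Pp (insert x F) Y 1 = Pp F Y 1 + Y x * Pp F Y 0 := Pp_insert hx Y 0
          have h0 : Pp (insert x F) Y 0 = 1 := Pp_zero _ _
          have hih := ih hYF 0
          rw [Pp_zero] at hih
          have hb := one_le_Pp hYF 1
          rw [h0, h1, h2, Pp_zero]
          nlinarith [mul_nonneg ht ht]
      | succ m =>
          have e1 : Pp (insert x F) Y (m+1) = Pp F Y (m+1) + Y x * Pp F Y m :=
            Pp_insert hx Y m
          have e2 : Pp (insert x F) Y (m+2) = Pp F Y (m+2) + Y x * Pp F Y (m+1) :=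
            Pp_insert hx Y (m+1)
          have e3 : Pp (insert x F) Y (m+3) = Pp F Y (m+3) + Y x * Pp F Y (m+2) :=
            Pp_insert hx Y (m+2)
          set a := Pp F Y m
          set b := Pp F Y (m+1)
          set c := Pp F Y (m+2)
          set d := Pp F Y (m+3)
          have h1 : a * c ≤ b^2 := ih hYF m
          have h2 : b * d ≤ c^2 := ih hYF (m+1)
          have ha : 0 ≤ a := Pp_nonneg hYF m
          have hb : 1 ≤ b := one_le_Pp hYF (m+1)
          have hc : 1 ≤ c := one_le_Pp hYF (m+2)
          have hd : 0 ≤ d := Pp_nonneg hYF (m+3)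
          have hbc : 0 < b * c := by nlinarith
          have had : a * d ≤ b * c := by
            have hkey := mul_le_mul h1 h2 (mul_nonneg (le_trans zero_le_one hb) hd)
              (sq_nonneg b)
            have : (a * d) * (b * c) ≤ (b * c) * (b * c) := by nlinarith [hkey]
            exact le_of_mul_le_mul_right this hbc
          show Pp (insert x F) Y (m+1) * Pp (insert x F) Y (m+3)
              ≤ Pp (insert x F) Y (m+2)^2
          rw [e1, e2, e3]
          nlinarith [mul_nonneg (mul_nonneg ht ht) (sub_nonneg.mpr h1),
            mul_nonneg ht (sub_nonneg.mpr had)]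

lemma keyB {F : Finset α} {Y : α → ℝ} (hY : ∀ a ∈ F, 0 ≤ Y a) (k : ℕ) :
    (∑ S ∈ F.powerset.filter (fun S => S.card + 1 ≤ k), ∏ a ∈ S, Y a) * Pp F Y (k+1)
      ≤ Pp F Y k * Pp F Y k := by
  cases k with
  | zero =>
      have h : F.powerset.filter (fun S : Finset α => S.card + 1 ≤ 0) = ∅ := by
        ext S; simp
      rw [h]
      simp
      nlinarith [one_le_Pp hY 0]
  | succ m =>
      have h : (∑ S ∈ F.powerset.filter (fun S => S.card + 1 ≤ m + 1), ∏ a ∈ S, Y a)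
          = Pp F Y m := by
        unfold Pp
        simp only [Nat.add_le_add_iff_right]
      rw [h]
      have := Pp_logconcave F hY m
      nlinarith [this]

end aux

/-- For `e ∈ E` and `f ∈ E` with `f ≠ e`, `R_e` takes values in `(0,1]` and is
non-increasing in the variable `Y_f` (the other coordinates being held fixed). -/
theorem statement_4 {α : Type*} [DecidableEq α] (E : Finset α) (w : ℕ) (hw : 1 ≤ w)
    (e f : α) (he : e ∈ E) (hf : f ∈ E) (hfe : f ≠ e)
    (Y : α → ℝ) (hY : ∀ a ∈ E, 0 ≤ Y a) :
    (0 < Re E w e Y ∧ Re E w e Y ≤ 1) ∧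
    (∀ t₁ t₂ : ℝ, 0 ≤ t₁ → t₁ ≤ t₂ →
      Re E w e (Function.update Y f t₂) ≤ Re E w e (Function.update Y f t₁)) := by
  have hYD : ∀ a ∈ E.erase e, 0 ≤ Y a := fun a ha => hY a (Finset.mem_of_mem_erase ha)
  have hRe : ∀ Z : α → ℝ, Re E w e Z = Pp (E.erase e) Z (w-1) / Pp (E.erase e) Z w :=
    fun Z => rfl
  constructor
  · -- part 1
    have hN : 1 ≤ Pp (E.erase e) Y (w-1) := one_le_Pp hYD _
    have hND : Pp (E.erase e) Y (w-1) ≤ Pp (E.erase e) Y w := by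
      unfold Pp
      refine Finset.sum_le_sum_of_subset_of_nonneg ?_ ?_
      · intro S hS
        obtain ⟨h1, h2⟩ := Finset.mem_filter.mp hS
        exact Finset.mem_filter.mpr ⟨h1, by omega⟩
      · intro S hS _
        exact prod_nonneg_of_subset hYD (Finset.mem_powerset.mp (Finset.mem_filter.mp hS).1)
    have hD : (0:ℝ) < Pp (E.erase e) Y w := lt_of_lt_of_le one_pos (le_trans hN hND)
    rw [hRe]
    exact ⟨div_pos (lt_of_lt_of_le one_pos hN) hD, (div_le_one hD).mpr hND⟩
  · -- part 2
    intro t₁ t₂ ht₁ ht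
    have hfD : f ∈ E.erase e := Finset.mem_erase.mpr ⟨hfe, hf⟩
    set F : Finset α := (E.erase e).erase f with hFdef
    have hx : f ∉ F := Finset.notMem_erase f _
    have hDins : E.erase e = insert f F := (Finset.insert_erase hfD).symm
    have hYF : ∀ a ∈ F, 0 ≤ Y a := fun a ha => hYD a (Finset.mem_of_mem_erase ha)
    have hprod : ∀ (t : ℝ) (S : Finset α), S ∈ F.powerset →
        ∏ a ∈ S, Function.update Y f t a = ∏ a ∈ S, Y a := by
      intro t S hS
      refine Finset.prod_congr rfl fun a ha => ?_
      exact Function.update_of_ne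
        (Finset.ne_of_mem_erase (Finset.mem_powerset.mp hS ha)) _ _
    set B : ℝ := ∑ S ∈ F.powerset.filter (fun S => S.card + 1 ≤ w - 1), ∏ a ∈ S, Y a
      with hBdef
    set n : ℝ := Pp F Y (w-1) with hndef
    set d : ℝ := Pp F Y w with hddef
    have hfil : F.powerset.filter (fun S => S.card + 1 ≤ w)
        = F.powerset.filter (fun S => S.card ≤ w - 1) :=
      Finset.filter_congr fun S _ => by omega
    have hnum : ∀ t : ℝ, Pp (E.erase e) (Function.update Y f t) (w-1)
        = n + t * B := by
      intro t
      rw [hndef, Pp, Pp, hDins, sum_split hx, Function.update_self, hBdef]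
      congr 1
      · exact Finset.sum_congr rfl fun S hS => hprod t S (Finset.mem_filter.mp hS).1
      · congr 1
        exact Finset.sum_congr rfl fun S hS => hprod t S (Finset.mem_filter.mp hS).1
    have hden : ∀ t : ℝ, Pp (E.erase e) (Function.update Y f t) w
        = d + t * n := by
      intro t
      rw [hddef, hndef, Pp, Pp, Pp, hDins, sum_split hx, Function.update_self, hfil]
      congr 1
      · exact Finset.sum_congr rfl fun S hS => hprod t S (Finset.mem_filter.mp hS).1
      · congr 1
        exact Finset.sum_congr rfl fun S hS => hprod t S (Finset.mem_filter.mp hS).1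
    have hw1 : w - 1 + 1 = w := Nat.succ_pred_eq_of_pos hw
    have key : B * d ≤ n * n := by
      have := keyB hYF (w - 1)
      rwa [hw1, ← hBdef, ← hddef, ← hndef] at this
    have hn : 1 ≤ n := one_le_Pp hYF _
    have hd1 : 1 ≤ d := one_le_Pp hYF _
    have ht₂ : 0 ≤ t₂ := le_trans ht₁ ht
    have hpos₁ : (0:ℝ) < d + t₁ * n := by nlinarith
    have hpos₂ : (0:ℝ) < d + t₂ * n := by nlinarith
    rw [hRe, hRe, hnum t₁, hnum t₂, hden t₁, hden t₂, div_le_div_iff₀ hpos₂ hpos₁]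
    nlinarith [mul_nonneg (sub_nonneg.mpr ht) (sub_nonneg.mpr key)]
end

section
/- Let E be a finite set, Y = (Y_e)_{e∈E} ∈ [0,∞)^E and e ∈ E. For j ≥ 0 set σ_j = Σ_{S ⊆ E, |S| = j} Y^S and τ_j = Σ_{S ⊆ E\{e}, |S| = j} Y^S, with τ_{−1} = 0. Then for every integer k ≥ 1, τ_{k−1}·σ_{k−1} ≥ τ_{k−2}·σ_k. Equivalently, if B_f (f ∈ E) are independent Bernoulli random variables with P(B_f = 1) = Y_f/(1+Y_f), then k ↦ P(B_e = 1 | Σ_{f∈E} B_f = k) is non-decreasing on the set of k with P(Σ_{f∈E} B_f = k) > 0. -/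
open scoped Classical

/-- `σ_j = Σ_{S ⊆ E, |S| = j} Y^S`. -/
noncomputable def sigmaSum {α : Type*} [DecidableEq α] (E : Finset α) (Y : α → ℝ)
    (j : ℕ) : ℝ :=
  ∑ S ∈ E.powerset.filter (fun S => S.card = j), ∏ f ∈ S, Y f

/-- `τ_j = Σ_{S ⊆ E\{e}, |S| = j} Y^S`. -/
noncomputable def tauSum {α : Type*} [DecidableEq α] (E : Finset α) (e : α) (Y : α → ℝ)
    (j : ℕ) : ℝ :=
  ∑ S ∈ (E.erase e).powerset.filter (fun S => S.card = j), ∏ f ∈ S, Y f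

lemma sigmaSum_eq {α : Type*} [DecidableEq α] (E : Finset α) (Y : α → ℝ) (j : ℕ) :
    sigmaSum E Y j = ∑ S ∈ E.powersetCard j, ∏ f ∈ S, Y f := by
  rw [sigmaSum, Finset.powersetCard_eq_filter]

lemma sigmaSum_nonneg {α : Type*} [DecidableEq α] (E : Finset α) (Y : α → ℝ)
    (hY : ∀ a ∈ E, 0 ≤ Y a) (j : ℕ) : 0 ≤ sigmaSum E Y j := by
  apply Finset.sum_nonneg
  intro S hS
  simp only [Finset.mem_filter, Finset.mem_powerset] at hS
  exact Finset.prod_nonneg fun f hf => hY f (hS.1 hf)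

lemma sigmaSum_zero {α : Type*} [DecidableEq α] (E : Finset α) (Y : α → ℝ) :
    sigmaSum E Y 0 = 1 := by
  rw [sigmaSum_eq]
  simp

lemma sigmaSum_empty {α : Type*} [DecidableEq α] (Y : α → ℝ) (j : ℕ) :
    sigmaSum (∅ : Finset α) Y j = if j = 0 then 1 else 0 := by
  rw [sigmaSum_eq]
  cases j with
  | zero => simp
  | succ n =>
    rw [Finset.powersetCard_eq_empty.2 (by simp)]
    simp

lemma sigmaSum_insert {α : Type*} [DecidableEq α] (F : Finset α) (a : α) (ha : a ∉ F)
    (Y : α → ℝ) (j : ℕ) :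
    sigmaSum (insert a F) Y (j + 1) = sigmaSum F Y (j + 1) + Y a * sigmaSum F Y j := by
  rw [sigmaSum_eq, sigmaSum_eq, sigmaSum_eq, Finset.powersetCard_succ_insert ha]
  rw [Finset.sum_union]
  · congr 1
    rw [Finset.sum_image, Finset.mul_sum]
    · apply Finset.sum_congr rfl
      intro S hS
      rw [Finset.mem_powersetCard] at hS
      rw [Finset.prod_insert (fun h => ha (hS.1 h))]
    · intro S hS T hT hST
      rw [Finset.mem_coe, Finset.mem_powersetCard] at hS hT
      have haS : a ∉ S := fun h => ha (hS.1 h)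
      have haT : a ∉ T := fun h => ha (hT.1 h)
      have := congrArg (fun (U : Finset α) => U.erase a) hST
      simpa [Finset.erase_insert haS, Finset.erase_insert haT] using this
  · rw [Finset.disjoint_left]
    intro S hS hS'
    rw [Finset.mem_powersetCard] at hS
    rw [Finset.mem_image] at hS'
    obtain ⟨T, _, rfl⟩ := hS'
    exact ha (hS.1 (Finset.mem_insert_self a T))

/-- ℤ-indexed elementary symmetric sums, `0` for negative index. -/
noncomputable def esZ {α : Type*} [DecidableEq α] (F : Finset α) (Y : α → ℝ) (j : ℤ) : ℝ :=
  if 0 ≤ j then sigmaSum F Y j.toNat else 0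

lemma esZ_coe {α : Type*} [DecidableEq α] (F : Finset α) (Y : α → ℝ) (n : ℕ) :
    esZ F Y (n : ℤ) = sigmaSum F Y n := by
  simp [esZ]

lemma esZ_nonneg {α : Type*} [DecidableEq α] (F : Finset α) (Y : α → ℝ)
    (hY : ∀ a ∈ F, 0 ≤ Y a) (j : ℤ) : 0 ≤ esZ F Y j := by
  unfold esZ
  split_ifs
  · exact sigmaSum_nonneg F Y hY _
  · exact le_refl 0

lemma esZ_empty {α : Type*} [DecidableEq α] (Y : α → ℝ) (j : ℤ) :
    esZ (∅ : Finset α) Y j = if j = 0 then 1 else 0 := by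
  unfold esZ
  split_ifs with h1 h2 h3
  · rw [sigmaSum_empty]; simp [h2]
  · rw [sigmaSum_empty]; simp; omega
  · omega
  · rfl

lemma esZ_insert {α : Type*} [DecidableEq α] (F : Finset α) (a : α) (ha : a ∉ F)
    (Y : α → ℝ) (j : ℤ) :
    esZ (insert a F) Y j = esZ F Y j + Y a * esZ F Y (j - 1) := by
  rcases lt_trichotomy j 0 with h | h | h
  · unfold esZ
    rw [if_neg (by omega), if_neg (by omega), if_neg (by omega)]
    ring
  · subst h
    unfold esZ
    rw [if_pos le_rfl, if_pos le_rfl, if_neg (by omega)]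
    simp [sigmaSum_zero]
  · obtain ⟨n, rfl⟩ : ∃ n : ℕ, j = (n : ℤ) + 1 := ⟨(j - 1).toNat, by omega⟩
    have : ((n : ℤ) + 1) - 1 = (n : ℤ) := by ring
    rw [this, esZ_coe]
    have : ((n : ℤ) + 1) = ((n + 1 : ℕ) : ℤ) := by push_cast; ring
    rw [this, esZ_coe, esZ_coe, sigmaSum_insert F a ha]

/-- Log-concavity (strong two-index form) of elementary symmetric sums. -/
lemma esZ_log_concave {α : Type*} [DecidableEq α] (Y : α → ℝ) :
    ∀ F : Finset α, (∀ a ∈ F, 0 ≤ Y a) → ∀ i j : ℤ, i ≤ j →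
      esZ F Y (i - 1) * esZ F Y (j + 1) ≤ esZ F Y i * esZ F Y j := by
  intro F
  induction F using Finset.induction_on with
  | empty =>
    intro _ i j hij
    rw [esZ_empty, esZ_empty, esZ_empty, esZ_empty]
    have h1 : ¬(i - 1 = 0 ∧ j + 1 = 0) := by omega
    have hL : (if i - 1 = 0 then (1:ℝ) else 0) * (if j + 1 = 0 then (1:ℝ) else 0) = 0 := by
      split_ifs with h h' <;> simp_all
    rw [hL]
    split_ifs <;> norm_num
  | @insert a F ha ih =>
    intro hY i j hij
    have hy : 0 ≤ Y a := hY a (Finset.mem_insert_self a F)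
    have hYF : ∀ b ∈ F, 0 ≤ Y b := fun b hb => hY b (Finset.mem_insert_of_mem hb)
    have Q := ih hYF
    rw [esZ_insert F a ha, esZ_insert F a ha, esZ_insert F a ha, esZ_insert F a ha,
      show (j:ℤ) + 1 - 1 = j from by ring]
    have h0 := Q i j hij
    have h2 := Q (i - 1) (j - 1) (by omega)
    rw [show (j:ℤ) - 1 + 1 = j from by ring] at h2
    have hmid : esZ F Y (i - 1 - 1) * esZ F Y (j + 1) ≤ esZ F Y i * esZ F Y (j - 1) := by
      rcases eq_or_lt_of_le hij with rfl | hlt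
      · have := Q (i - 1) i (by omega)
        calc esZ F Y (i - 1 - 1) * esZ F Y (i + 1) ≤ esZ F Y (i - 1) * esZ F Y i := this
          _ = esZ F Y i * esZ F Y (i - 1) := by ring
      · have ha1 := Q (i - 1) j (by omega)
        have ha2 := Q i (j - 1) (by omega)
        calc esZ F Y (i - 1 - 1) * esZ F Y (j + 1) ≤ esZ F Y (i - 1) * esZ F Y j := ha1
          _ = esZ F Y (i - 1) * esZ F Y (j - 1 + 1) := by ring_nf
          _ ≤ esZ F Y i * esZ F Y (j - 1) := ha2
    nlinarith [mul_nonneg hy (sub_nonneg.2 hmid),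
      mul_nonneg (mul_nonneg hy hy) (sub_nonneg.2 h2)]

lemma tauSum_eq {α : Type*} [DecidableEq α] (E : Finset α) (e : α) (Y : α → ℝ) (j : ℕ) :
    tauSum E e Y j = sigmaSum (E.erase e) Y j := rfl

/-- For every `k ≥ 1`, `τ_{k−1}·σ_{k−1} ≥ τ_{k−2}·σ_k` (with the convention
`τ_{−1} = 0`, which is the `k = 1` case). -/
theorem statement_7 {α : Type*} [DecidableEq α] (E : Finset α) (e : α) (he : e ∈ E)
    (Y : α → ℝ) (hY : ∀ a ∈ E, 0 ≤ Y a) (k : ℕ) (hk : 1 ≤ k) :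
    (if k = 1 then 0 else tauSum E e Y (k - 2) * sigmaSum E Y k)
      ≤ tauSum E e Y (k - 1) * sigmaSum E Y (k - 1) := by
  set F := E.erase e with hF
  have hYF : ∀ b ∈ F, 0 ≤ Y b := fun b hb => hY b (Finset.mem_of_mem_erase hb)
  rcases eq_or_lt_of_le hk with rfl | hk2
  · rw [if_pos rfl]
    exact mul_nonneg (sigmaSum_nonneg _ _ hYF _) (sigmaSum_nonneg _ _ hY _)
  · obtain ⟨m, rfl⟩ : ∃ m : ℕ, k = m + 2 := ⟨k - 2, by omega⟩
    rw [if_neg (by omega)]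
    have h1 : m + 2 - 2 = m := by omega
    have h2 : m + 2 - 1 = m + 1 := by omega
    rw [h1, h2, tauSum_eq, tauSum_eq, ← hF]
    have heF : e ∉ F := Finset.notMem_erase e E
    have hEF : insert e F = E := Finset.insert_erase he
    have hs1 : sigmaSum E Y (m + 1) = sigmaSum F Y (m + 1) + Y e * sigmaSum F Y m := by
      rw [← hEF]; exact sigmaSum_insert F e heF Y m
    have hs2 : sigmaSum E Y (m + 2) = sigmaSum F Y (m + 2) + Y e * sigmaSum F Y (m + 1) := by
      rw [← hEF]; exact sigmaSum_insert F e heF Y (m + 1)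
    have hQ := esZ_log_concave Y F hYF (m + 1 : ℕ) (m + 1 : ℕ) le_rfl
    have e1 : ((m + 1 : ℕ) : ℤ) - 1 = (m : ℤ) := by push_cast; ring
    have e2 : ((m + 1 : ℕ) : ℤ) + 1 = ((m + 2 : ℕ) : ℤ) := by push_cast; ring
    rw [e1, e2, esZ_coe, esZ_coe, esZ_coe] at hQ
    have hy : 0 ≤ Y e := hY e he
    nlinarith [sigmaSum_nonneg F Y hYF m, sigmaSum_nonneg F Y hYF (m + 1)]
end

section
/- Let E be a finite set, w ≥ 1 an integer and X ∈ [0,1]^E. For e ∈ E say Q_e(X) is finite when Σ_{S ⊆ E\{e}, |S| = w} X^S > 0 (equivalently, at least w of the coordinates X_f with f ≠ e are positive), in which case Q_e(X) = (Σ_{S ⊆ E\{e}, |S| = w−1} X^S)/(Σ_{S ⊆ E\{e}, |S| = w} X^S); otherwise set Q_e(X) = ∞. Then Σ_{e∈E} [X_e Q_e(X)/(1 + X_e Q_e(X))]·1(Q_e(X) < ∞) = w · 1( #{e ∈ E : X_e > 0} ≥ w+1 ). -/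
open scoped Classical

/-- `Σ_{S ⊆ E\{e}, |S| = j} X^S`. -/
noncomputable def sigEq {α : Type*} [DecidableEq α] (E : Finset α) (e : α) (j : ℕ)
    (X : α → ℝ) : ℝ :=
  ∑ S ∈ (E.erase e).powerset.filter (fun S => S.card = j), ∏ f ∈ S, X f

/-- `Q_e(X) = (Σ_{S ⊆ E\{e}, |S| = w−1} X^S)/(Σ_{S ⊆ E\{e}, |S| = w} X^S)` (finite case). -/
noncomputable def Qe {α : Type*} [DecidableEq α] (E : Finset α) (w : ℕ) (e : α)
    (X : α → ℝ) : ℝ :=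
  sigEq E e (w - 1) X / sigEq E e w X

lemma sigEq_eq_powersetCard {α : Type*} [DecidableEq α] (E : Finset α) (e : α) (j : ℕ)
    (X : α → ℝ) :
    sigEq E e j X = ∑ S ∈ Finset.powersetCard j (E.erase e), ∏ f ∈ S, X f := by
  rw [sigEq, Finset.powersetCard_eq_filter]

lemma sigEq_nonneg {α : Type*} [DecidableEq α] (E : Finset α) (e : α) (j : ℕ)
    (X : α → ℝ) (hX : ∀ a ∈ E, 0 ≤ X a) : 0 ≤ sigEq E e j X := by
  rw [sigEq_eq_powersetCard]
  refine Finset.sum_nonneg fun S hS => Finset.prod_nonneg fun f hf => ?_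
  rw [Finset.mem_powersetCard] at hS
  exact hX f (Finset.mem_of_mem_erase (hS.1 hf))

lemma sigEq_pos_iff {α : Type*} [DecidableEq α] (E : Finset α) (e : α) (j : ℕ)
    (X : α → ℝ) (hX : ∀ a ∈ E, 0 ≤ X a) :
    0 < sigEq E e j X ↔ j ≤ (((E.filter fun a => 0 < X a)).erase e).card := by
  set P := E.filter fun a => 0 < X a with hP
  rw [sigEq_eq_powersetCard]
  constructor
  · intro h
    have h0 : (0 : ℝ) = ∑ S ∈ Finset.powersetCard j (E.erase e), (0 : ℝ) := by simp
    rw [h0] at h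
    obtain ⟨S, hS, hSpos⟩ := Finset.exists_lt_of_sum_lt h
    rw [Finset.mem_powersetCard] at hS
    have hsub : S ⊆ P.erase e := by
      rw [Finset.subset_erase]
      constructor
      · intro f hf
        rw [hP, Finset.mem_filter]
        have hfE : f ∈ E := Finset.mem_of_mem_erase (hS.1 hf)
        refine ⟨hfE, ?_⟩
        by_contra hneg
        have hf0 : X f = 0 := le_antisymm (not_lt.mp hneg) (hX f hfE)
        have : ∏ g ∈ S, X g = 0 := Finset.prod_eq_zero hf hf0
        rw [this] at hSpos; exact lt_irrefl 0 hSpos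
      · intro heS
        exact Finset.notMem_erase e E (hS.1 heS)
    calc j = S.card := hS.2.symm
      _ ≤ (P.erase e).card := Finset.card_le_card hsub
  · intro h
    obtain ⟨S, hS, hScard⟩ := Finset.exists_subset_card_eq h
    have hSE : S ∈ Finset.powersetCard j (E.erase e) := by
      rw [Finset.mem_powersetCard]
      refine ⟨hS.trans (Finset.erase_subset_erase e (Finset.filter_subset _ _)), hScard⟩
    refine Finset.sum_pos' (fun T hT => ?_) ⟨S, hSE, ?_⟩
    · rw [Finset.mem_powersetCard] at hT
      exact Finset.prod_nonneg fun f hf => hX f (Finset.mem_of_mem_erase (hT.1 hf))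
    · refine Finset.prod_pos fun f hf => ?_
      have := hS hf
      rw [Finset.mem_erase, hP, Finset.mem_filter] at this
      exact this.2.2

lemma sig_split {α : Type*} [DecidableEq α] (E : Finset α) (e : α) (he : e ∈ E) (w : ℕ)
    (hw : 1 ≤ w) (X : α → ℝ) :
    sigEq E e w X + X e * sigEq E e (w - 1) X
      = ∑ S ∈ Finset.powersetCard w E, ∏ f ∈ S, X f := by
  obtain ⟨k, rfl⟩ : ∃ k, w = k + 1 := ⟨w - 1, by omega⟩
  rw [sigEq_eq_powersetCard, sigEq_eq_powersetCard]
  have hk : k + 1 - 1 = k := by omega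
  rw [hk]
  conv_rhs => rw [← Finset.insert_erase he,
    Finset.powersetCard_succ_insert (Finset.notMem_erase e E)]
  have hdisj : Disjoint (Finset.powersetCard (k+1) (E.erase e))
      (Finset.image (insert e) (Finset.powersetCard k (E.erase e))) := by
    rw [Finset.disjoint_left]
    intro S hS hS'
    rw [Finset.mem_powersetCard] at hS
    obtain ⟨T, hT, rfl⟩ := Finset.mem_image.mp hS'
    exact Finset.notMem_erase e E (hS.1 (Finset.mem_insert_self e T))
  rw [Finset.sum_union hdisj]
  congr 1
  rw [Finset.sum_image (by
    intro S hS T hT hST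
    rw [Finset.mem_coe, Finset.mem_powersetCard] at hS hT
    have heS : e ∉ S := fun h => Finset.notMem_erase e E (hS.1 h)
    have heT : e ∉ T := fun h => Finset.notMem_erase e E (hT.1 h)
    rw [← Finset.erase_insert heS, ← Finset.erase_insert heT, hST]), Finset.mul_sum]
  refine Finset.sum_congr rfl fun S hS => ?_
  rw [Finset.mem_powersetCard] at hS
  have heS : e ∉ S := fun h => Finset.notMem_erase e E (hS.1 h)
  rw [Finset.prod_insert heS]

lemma sigEq_eq_filter {α : Type*} [DecidableEq α] (E : Finset α) (e : α) (j : ℕ)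
    (X : α → ℝ) :
    sigEq E e j X = ∑ S ∈ (Finset.powersetCard j E).filter (fun S => e ∉ S),
      ∏ f ∈ S, X f := by
  rw [sigEq_eq_powersetCard]
  congr 1
  ext S
  simp only [Finset.mem_powersetCard, Finset.mem_filter, Finset.subset_erase]
  tauto

lemma sum_sigEq {α : Type*} [DecidableEq α] (E : Finset α) (w : ℕ) (X : α → ℝ) :
    ∑ e ∈ E, sigEq E e w X
      = (E.card - w : ℕ) • ∑ S ∈ Finset.powersetCard w E, ∏ f ∈ S, X f := by
  have h1 : ∀ e ∈ E, sigEq E e w X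
      = ∑ S ∈ Finset.powersetCard w E, if e ∉ S then ∏ f ∈ S, X f else 0 := by
    intro e _
    rw [sigEq_eq_filter, Finset.sum_filter]
  rw [Finset.sum_congr rfl h1, Finset.sum_comm, Finset.smul_sum]
  refine Finset.sum_congr rfl fun S hS => ?_
  rw [Finset.mem_powersetCard] at hS
  rw [← Finset.sum_filter, Finset.sum_const]
  congr 1
  rw [← Finset.sdiff_eq_filter, Finset.card_sdiff_of_subset hS.1, hS.2]

lemma sum_X_sigEq {α : Type*} [DecidableEq α] (E : Finset α) (w : ℕ) (hw : 1 ≤ w)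
    (hwE : w ≤ E.card) (X : α → ℝ) :
    ∑ e ∈ E, X e * sigEq E e (w - 1) X
      = (w : ℝ) * ∑ S ∈ Finset.powersetCard w E, ∏ f ∈ S, X f := by
  set σ := ∑ S ∈ Finset.powersetCard w E, ∏ f ∈ S, X f with hσ
  have h1 : ∀ e ∈ E, X e * sigEq E e (w - 1) X = σ - sigEq E e w X := by
    intro e he
    have := sig_split E e he w hw X
    linarith
  rw [Finset.sum_congr rfl h1, Finset.sum_sub_distrib, Finset.sum_const, sum_sigEq]
  rw [nsmul_eq_mul, nsmul_eq_mul, Nat.cast_sub hwE]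
  ring

/-- `Σ_{e∈E} [X_e Q_e(X)/(1 + X_e Q_e(X))]·1(Q_e(X) < ∞) = w·1(#{e : X_e > 0} ≥ w+1)`,
where `Q_e(X)` is finite exactly when `Σ_{S ⊆ E\{e}, |S| = w} X^S > 0`. -/
theorem statement_8 {α : Type*} [DecidableEq α] (E : Finset α) (w : ℕ) (hw : 1 ≤ w)
    (X : α → ℝ) (hX : ∀ a ∈ E, 0 ≤ X a ∧ X a ≤ 1) :
    (∑ e ∈ E, if 0 < sigEq E e w X then
        X e * Qe E w e X / (1 + X e * Qe E w e X) else 0)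
      = w * (if w + 1 ≤ (E.filter fun a => 0 < X a).card then 1 else 0) := by
  have hX0 : ∀ a ∈ E, 0 ≤ X a := fun a ha => (hX a ha).1
  set P := E.filter fun a => 0 < X a with hPdef
  have hPE : P ⊆ E := Finset.filter_subset _ _
  by_cases hP : w + 1 ≤ P.card
  · rw [if_pos hP, mul_one]
    set σ := ∑ S ∈ Finset.powersetCard w E, ∏ f ∈ S, X f with hσdef
    have hwE : w ≤ E.card := le_trans (by omega) (Finset.card_le_card hPE)
    have hσpos : 0 < σ := by
      obtain ⟨S, hS, hScard⟩ := Finset.exists_subset_card_eq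
        (show w ≤ P.card by omega)
      refine Finset.sum_pos' (fun T hT => ?_) ⟨S, ?_, ?_⟩
      · rw [Finset.mem_powersetCard] at hT
        exact Finset.prod_nonneg fun f hf => hX0 f (hT.1 hf)
      · rw [Finset.mem_powersetCard]
        exact ⟨hS.trans hPE, hScard⟩
      · refine Finset.prod_pos fun f hf => ?_
        have := hS hf
        rw [hPdef, Finset.mem_filter] at this
        exact this.2
    have key : ∀ e ∈ E,
        (if 0 < sigEq E e w X then X e * Qe E w e X / (1 + X e * Qe E w e X) else 0)
          = X e * sigEq E e (w - 1) X / σ := by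
      intro e he
      have hb : 0 < sigEq E e w X := by
        rw [sigEq_pos_iff E e w X hX0, ← hPdef]
        have := Finset.pred_card_le_card_erase (s := P) (a := e)
        omega
      rw [if_pos hb, Qe]
      set a := sigEq E e (w - 1) X
      set b := sigEq E e w X
      have hsplit : b + X e * a = σ := sig_split E e he w hw X
      have hbne : b ≠ 0 := ne_of_gt hb
      have hσne : σ ≠ 0 := ne_of_gt hσpos
      have hden : 1 + X e * (a / b) = σ / b := by
        field_simp
        linarith
      rw [hden]
      rw [div_eq_div_iff (by positivity) hσne]
      field_simp
    rw [Finset.sum_congr rfl key, ← Finset.sum_div, sum_X_sigEq E w hw hwE X,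
      ← hσdef, mul_div_assoc, div_self (ne_of_gt hσpos), mul_one]
  · rw [if_neg hP, mul_zero]
    refine Finset.sum_eq_zero fun e he => ?_
    by_cases hb : 0 < sigEq E e w X
    · rw [if_pos hb]
      rw [sigEq_pos_iff E e w X hX0] at hb
      have hcard : (P.erase e).card ≤ P.card := Finset.card_erase_le
      have heP : e ∉ P := by
        intro heP
        rw [Finset.card_erase_of_mem heP] at hb
        omega
      have hXe : X e = 0 := by
        rw [hPdef, Finset.mem_filter] at heP
        push_neg at heP
        exact le_antisymm (heP he) (hX0 e he)
      rw [hXe]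
      norm_num
    · rw [if_neg hb]
end

section
/- Let G = (V,E) be a finite acyclic simple graph with degree constraints w = (w_v)_{v∈V}, w_v ≥ 1. Then for every z > 0 the fixed-point equation Y = z·R_G(Y) has a unique solution Y(z) ∈ [0,∞)^{oriented edges of G}. Moreover, for every vertex i, the joint law of (B_e)_{e incident to i} under the Gibbs measure μ_G^z equals the law of independent Bernoulli random variables (β_{x→i})_{x adjacent to i} with P(β_{x→i} = 1) = Y_{x→i}(z)/(1 + Y_{x→i}(z)), conditioned on Σ_{x adjacent to i} β_{x→i} ≤ w_i. -/
open scoped Classical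

variable {V : Type*} [Fintype V] [DecidableEq V]

/-- Admissible spanning subgraphs `F ⊆ E(G)`: every vertex `v` lies on at most `w v`
edges of `F`. -/
noncomputable def admFinset (G : SimpleGraph V) [DecidableRel G.Adj] (w : V → ℕ) :
    Finset (Finset (Sym2 V)) :=
  G.edgeFinset.powerset.filter (fun F => ∀ v : V, (F.filter fun e => v ∈ e).card ≤ w v)

/-- The message-passing map `R_G`: `(R_G Y) i j` is the message on the oriented edge
`i → j`, computed from the incoming messages `Y x i`, `x` a neighbour of `i`, `x ≠ j`:
`(Σ_{S ⊆ ∂i\{j→i}, |S| ≤ w_i − 1} Y^S)/(Σ_{S ⊆ ∂i\{j→i}, |S| ≤ w_i} Y^S)`. -/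
noncomputable def RG (G : SimpleGraph V) [DecidableRel G.Adj] (w : V → ℕ)
    (Y : V → V → ℝ) : V → V → ℝ := fun i j =>
  (∑ S ∈ ((G.neighborFinset i).erase j).powerset.filter (fun S => S.card < w i),
      ∏ x ∈ S, Y x i) /
  (∑ S ∈ ((G.neighborFinset i).erase j).powerset.filter (fun S => S.card ≤ w i),
      ∏ x ∈ S, Y x i)

set_option linter.unusedSectionVars false

namespace BPaux


/-- degree of a vertex in an edge-subset -/
noncomputable def deg (F : Finset (Sym2 V)) (v : V) : ℕ := (F.filter (fun e => v ∈ e)).card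

/-- admissibility with extra offsets `a` -/
def adm (w : V → ℕ) (a : V → ℕ) (F : Finset (Sym2 V)) : Prop := ∀ v, deg F v + a v ≤ w v

/-- partition function over admissible subsets of `K` -/
noncomputable def Zq (w : V → ℕ) (z : ℝ) (K : Finset (Sym2 V)) (a : V → ℕ) : ℝ :=
  ∑ F ∈ K.powerset.filter (adm w a), z ^ F.card

/-- supports of the two edge-sets are disjoint -/
def supDisj (K₁ K₂ : Finset (Sym2 V)) : Prop :=
  ∀ e₁ ∈ K₁, ∀ e₂ ∈ K₂, ∀ v : V, v ∈ e₁ → v ∉ e₂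

lemma deg_mono {F F' : Finset (Sym2 V)} (h : F ⊆ F') (v : V) : deg F v ≤ deg F' v :=
  Finset.card_le_card (Finset.filter_subset_filter _ h)

lemma deg_eq_zero {F : Finset (Sym2 V)} {v : V} (h : ∀ e ∈ F, v ∉ e) : deg F v = 0 := by
  simp only [deg, Finset.card_eq_zero, Finset.filter_eq_empty_iff]
  exact h

lemma deg_union {F₁ F₂ : Finset (Sym2 V)} (h : Disjoint F₁ F₂) (v : V) :
    deg (F₁ ∪ F₂) v = deg F₁ v + deg F₂ v := by
  simp only [deg, Finset.filter_union]
  exact Finset.card_union_of_disjoint (Finset.disjoint_filter_filter h)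

lemma supDisj_disjoint {K₁ K₂ : Finset (Sym2 V)} (h : supDisj K₁ K₂) : Disjoint K₁ K₂ := by
  rw [Finset.disjoint_left]
  intro e h1 h2
  induction e with
  | _ a b => exact h _ h1 _ h2 a (Sym2.mem_mk_left a b) (Sym2.mem_mk_left a b)

lemma supDisj_symm {K₁ K₂ : Finset (Sym2 V)} (h : supDisj K₁ K₂) : supDisj K₂ K₁ :=
  fun e₂ h2 e₁ h1 v hv2 hv1 => h e₁ h1 e₂ h2 v hv1 hv2

/-- Key splitting lemma with side conditions. -/
lemma split (w : V → ℕ) (z : ℝ) (K₁ K₂ : Finset (Sym2 V)) (hd : supDisj K₁ K₂) (a : V → ℕ)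
    (Q₁ Q₂ : Finset (Sym2 V) → Prop) :
    ∑ F ∈ (K₁ ∪ K₂).powerset.filter
        (fun F => adm w a F ∧ Q₁ (F ∩ K₁) ∧ Q₂ (F ∩ K₂)), z ^ F.card
    = (∑ F ∈ K₁.powerset.filter (fun F => adm w a F ∧ Q₁ F), z ^ F.card)
      * ∑ F ∈ K₂.powerset.filter (fun F => adm w a F ∧ Q₂ F), z ^ F.card := by
  have hKd : Disjoint K₁ K₂ := supDisj_disjoint hd
  rw [Finset.sum_mul_sum, ← Finset.sum_product']
  -- adm splits over support-disjoint unions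
  have key : ∀ F₁ ⊆ K₁, ∀ F₂ ⊆ K₂, (adm w a (F₁ ∪ F₂) ↔ adm w a F₁ ∧ adm w a F₂) := by
    intro F₁ h₁ F₂ h₂
    have hdisj : Disjoint F₁ F₂ := hKd.mono h₁ h₂
    constructor
    · intro h
      constructor <;> intro v <;>
        [exact le_trans (by have := deg_union hdisj v; omega) (h v);
         exact le_trans (by have := deg_union hdisj v; omega) (h v)]
    · rintro ⟨ha1, ha2⟩ v
      have h0 : deg F₁ v = 0 ∨ deg F₂ v = 0 := by
        by_contra hc
        push_neg at hc
        obtain ⟨hc1, hc2⟩ := hc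
        have e1 : ∃ e ∈ F₁, v ∈ e := by
          by_contra he; push_neg at he; exact hc1 (deg_eq_zero he)
        have e2 : ∃ e ∈ F₂, v ∈ e := by
          by_contra he; push_neg at he; exact hc2 (deg_eq_zero he)
        obtain ⟨e1, he1, hv1⟩ := e1
        obtain ⟨e2, he2, hv2⟩ := e2
        exact hd e1 (h₁ he1) e2 (h₂ he2) v hv1 hv2
      have := deg_union hdisj v
      have := ha1 v; have := ha2 v
      omega
  apply Finset.sum_nbij' (i := fun F => (F ∩ K₁, F ∩ K₂)) (j := fun p => p.1 ∪ p.2)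
  · intro F hF
    simp only [Finset.mem_filter, Finset.mem_powerset] at hF
    obtain ⟨hsub, hadm, hq1, hq2⟩ := hF
    simp only [Finset.mem_product, Finset.mem_filter, Finset.mem_powerset]
    have hF1 : F ∩ K₁ ⊆ K₁ := Finset.inter_subset_right
    have hF2 : F ∩ K₂ ⊆ K₂ := Finset.inter_subset_right
    have hFeq : (F ∩ K₁) ∪ (F ∩ K₂) = F := by
      rw [← Finset.inter_union_distrib_left]
      exact Finset.inter_eq_left.mpr hsub
    have := (key _ hF1 _ hF2).mp (by rwa [hFeq])
    exact ⟨⟨hF1, this.1, hq1⟩, ⟨hF2, this.2, hq2⟩⟩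
  · intro p hp
    simp only [Finset.mem_product, Finset.mem_filter, Finset.mem_powerset] at hp
    obtain ⟨⟨h1, ha1, hq1⟩, ⟨h2, ha2, hq2⟩⟩ := hp
    simp only [Finset.mem_filter, Finset.mem_powerset]
    have hi1 : (p.1 ∪ p.2) ∩ K₁ = p.1 := by
      ext e
      simp only [Finset.mem_inter, Finset.mem_union]
      constructor
      · rintro ⟨h | h, hk⟩
        · exact h
        · exact absurd hk (Finset.disjoint_right.mp hKd (h2 h))
      · intro h; exact ⟨Or.inl h, h1 h⟩
    have hi2 : (p.1 ∪ p.2) ∩ K₂ = p.2 := by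
      ext e
      simp only [Finset.mem_inter, Finset.mem_union]
      constructor
      · rintro ⟨h | h, hk⟩
        · exact absurd hk (Finset.disjoint_left.mp hKd (h1 h))
        · exact h
      · intro h; exact ⟨Or.inr h, h2 h⟩
    refine ⟨Finset.union_subset_union h1 h2, (key _ h1 _ h2).mpr ⟨ha1, ha2⟩, ?_, ?_⟩
    · rwa [hi1]
    · rwa [hi2]
  · intro F hF
    simp only [Finset.mem_filter, Finset.mem_powerset] at hF
    rw [← Finset.inter_union_distrib_left]
    exact Finset.inter_eq_left.mpr hF.1
  · intro p hp
    simp only [Finset.mem_product, Finset.mem_filter, Finset.mem_powerset] at hp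
    obtain ⟨⟨h1, _, _⟩, ⟨h2, _, _⟩⟩ := hp
    ext : 1
    · show (p.1 ∪ p.2) ∩ K₁ = p.1
      ext e
      simp only [Finset.mem_inter, Finset.mem_union]
      constructor
      · rintro ⟨h | h, hk⟩
        · exact h
        · exact absurd hk (Finset.disjoint_right.mp hKd (h2 h))
      · intro h; exact ⟨Or.inl h, h1 h⟩
    · show (p.1 ∪ p.2) ∩ K₂ = p.2
      ext e
      simp only [Finset.mem_inter, Finset.mem_union]
      constructor
      · rintro ⟨h | h, hk⟩
        · exact absurd hk (Finset.disjoint_left.mp hKd (h1 h))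
        · exact h
      · intro h; exact ⟨Or.inr h, h2 h⟩
  · intro F hF
    simp only [Finset.mem_filter, Finset.mem_powerset] at hF
    have hFeq : (F ∩ K₁) ∪ (F ∩ K₂) = F := by
      rw [← Finset.inter_union_distrib_left]
      exact Finset.inter_eq_left.mpr hF.1
    have hdisj : Disjoint (F ∩ K₁) (F ∩ K₂) :=
      hKd.mono Finset.inter_subset_right Finset.inter_subset_right
    rw [← pow_add, ← Finset.card_union_of_disjoint hdisj, hFeq]

variable {w : V → ℕ} {z : ℝ}

lemma Zq_split {K₁ K₂ : Finset (Sym2 V)} (hd : supDisj K₁ K₂) (a : V → ℕ) :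
    Zq w z (K₁ ∪ K₂) a = Zq w z K₁ a * Zq w z K₂ a := by
  have h := split w z K₁ K₂ hd a (fun _ => True) (fun _ => True)
  simpa [Zq, and_true] using h

lemma Zq_family (J : Finset V) (P : V → Finset (Sym2 V))
    (hPd : ∀ x ∈ J, ∀ y ∈ J, x ≠ y → supDisj (P x) (P y)) (a : V → ℕ)
    (haw : ∀ v, a v ≤ w v) :
    Zq w z (J.sup P) a = ∏ x ∈ J, Zq w z (P x) a := by
  induction J using Finset.cons_induction with
  | empty =>
    simp only [Finset.sup_empty, Finset.prod_empty, Zq, Finset.bot_eq_empty,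
      Finset.powerset_empty, Finset.filter_singleton]
    have hadm : adm w a ∅ := fun v => by simpa [deg] using haw v
    rw [if_pos hadm]
    simp
  | cons x J hx ih =>
    rw [Finset.sup_cons, Finset.prod_cons, Finset.sup_eq_union]
    have hd : supDisj (P x) (J.sup P) := by
      intro e₁ h1 e₂ h2 v hv1 hv2
      rw [Finset.mem_sup] at h2
      obtain ⟨y, hy, h2⟩ := h2
      exact hPd x (Finset.mem_cons_self x J) y (Finset.mem_cons_of_mem hy)
        (fun hxy => hx (hxy ▸ hy)) e₁ h1 e₂ h2 v hv1 hv2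
    rw [Zq_split hd, ih (fun x hx y hy hxy =>
      hPd x (Finset.mem_cons_of_mem hx) y (Finset.mem_cons_of_mem hy) hxy)]

lemma Zq_nonneg (hz : 0 < z) (K : Finset (Sym2 V)) (a : V → ℕ) : 0 ≤ Zq w z K a :=
  Finset.sum_nonneg (fun F _ => le_of_lt (pow_pos hz _))

lemma Zq_pos (hz : 0 < z) (K : Finset (Sym2 V)) {a : V → ℕ} (ha : ∀ v, a v ≤ w v) :
    0 < Zq w z K a := by
  apply Finset.sum_pos (fun F _ => pow_pos hz _)
  refine ⟨∅, ?_⟩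
  simp only [Finset.mem_filter, Finset.mem_powerset]
  exact ⟨Finset.empty_subset _, fun v => by simp [deg]; exact ha v⟩

lemma Zq_congr {K : Finset (Sym2 V)} {a b : V → ℕ}
    (h1 : ∀ v, (∃ e ∈ K, v ∈ e) → a v = b v)
    (h2 : ∀ v, (a v ≤ w v ↔ b v ≤ w v)) :
    Zq w z K a = Zq w z K b := by
  unfold Zq
  apply Finset.sum_congr _ (fun _ _ => rfl)
  apply Finset.filter_congr
  intro F hF
  rw [Finset.mem_powerset] at hF
  have key : ∀ v, (deg F v + a v ≤ w v ↔ deg F v + b v ≤ w v) := by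
    intro v
    by_cases hv : ∃ e ∈ F, v ∈ e
    · obtain ⟨e, he, hve⟩ := hv
      rw [h1 v ⟨e, hF he, hve⟩]
    · push_neg at hv
      rw [deg_eq_zero hv]
      simpa using h2 v
  exact ⟨fun h v => (key v).mp (h v), fun h v => (key v).mpr (h v)⟩

lemma fiberFact (w : V → ℕ) (z : ℝ) (i : V) (J : Finset V) (hiJ : i ∉ J)
    (P : V → Finset (Sym2 V))
    (hPi : ∀ x ∈ J, ∀ e ∈ P x, i ∉ e)
    (hPy : ∀ x ∈ J, ∀ y ∈ J, y ≠ x → ∀ e ∈ P x, y ∉ e)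
    (hPd : ∀ x ∈ J, ∀ y ∈ J, x ≠ y → supDisj (P x) (P y))
    (a : V → ℕ) (haw : ∀ v, a v ≤ w v) (hJw : ∀ x ∈ J, a x + 1 ≤ w x)
    (T : Finset V) (hT : T ⊆ J) :
    ∑ F ∈ (J.image (fun x => s(x, i)) ∪ J.sup P).powerset.filter
        (fun F => adm w a F ∧ J.filter (fun x => s(x, i) ∈ F) = T), z ^ F.card
    = if T.card + a i ≤ w i then
        z ^ T.card * ((∏ x ∈ T, Zq w z (P x) (fun v => a v + if v = x then 1 else 0)) *
          ∏ x ∈ J \ T, Zq w z (P x) a)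
      else 0 := by
  set U := J.sup P with hU
  set Tstar := T.image (fun x => s(x, i)) with hTstar
  -- basic facts
  have hU_i : ∀ e ∈ U, i ∉ e := by
    intro e he
    rw [hU, Finset.mem_sup] at he
    obtain ⟨x, hx, he⟩ := he
    exact hPi x hx e he
  have hmemJ_ne_i : ∀ x ∈ J, x ≠ i := fun x hx hxi => hiJ (hxi ▸ hx)
  have hinj : ∀ x ∈ J, ∀ y ∈ J, s(x, i) = s(y, i) → x = y := by
    intro x hx y hy hxy
    rw [Sym2.eq_iff] at hxy
    rcases hxy with ⟨h, _⟩ | ⟨h1, h2⟩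
    · exact h
    · exact absurd h1 (hmemJ_ne_i x hx)
  have hTstar_card : Tstar.card = T.card :=
    Finset.card_image_of_injOn (fun x hx y hy => hinj x (hT hx) y (hT hy))
  have hTstarU : Disjoint Tstar U := by
    rw [Finset.disjoint_left]
    intro e he heU
    rw [hTstar, Finset.mem_image] at he
    obtain ⟨x, _, rfl⟩ := he
    exact hU_i _ heU (Sym2.mem_mk_right x i)
  have hdegTstar_i : deg Tstar i = T.card := by
    have : Tstar.filter (fun e => i ∈ e) = Tstar := by
      apply Finset.filter_true_of_mem
      intro e he
      rw [hTstar, Finset.mem_image] at he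
      obtain ⟨x, _, rfl⟩ := he
      exact Sym2.mem_mk_right x i
    rw [deg, this, hTstar_card]
  have hdegTstar : ∀ v : V, v ≠ i → deg Tstar v = if v ∈ T then 1 else 0 := by
    intro v hv
    by_cases hvT : v ∈ T
    · have : Tstar.filter (fun e => v ∈ e) = {s(v, i)} := by
        ext e
        simp only [Finset.mem_filter, Finset.mem_singleton, hTstar, Finset.mem_image]
        constructor
        · rintro ⟨⟨x, hx, rfl⟩, hve⟩
          rw [Sym2.mem_iff] at hve
          rcases hve with rfl | rfl
          · rfl
          · exact absurd rfl hv
        · rintro rfl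
          exact ⟨⟨v, hvT, rfl⟩, Sym2.mem_mk_left v i⟩
      rw [deg, this, if_pos hvT, Finset.card_singleton]
    · have : Tstar.filter (fun e => v ∈ e) = ∅ := by
        rw [Finset.filter_eq_empty_iff]
        intro e he
        rw [hTstar, Finset.mem_image] at he
        obtain ⟨x, hx, rfl⟩ := he
        rw [Sym2.mem_iff]
        rintro (rfl | rfl)
        · exact hvT hx
        · exact hv rfl
      rw [deg, this, if_neg hvT, Finset.card_empty]
  by_cases hcond : T.card + a i ≤ w i
  · rw [if_pos hcond]
    set aT : V → ℕ := fun v => a v + if v ∈ T then 1 else 0 with haT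
    -- equivalence of admissibility
    have equivAdm : ∀ F' ⊆ U, (adm w a (Tstar ∪ F') ↔ adm w aT F') := by
      intro F' hF'
      have hdisj : Disjoint Tstar F' := hTstarU.mono_right hF'
      have hdeg : ∀ v, deg (Tstar ∪ F') v = deg Tstar v + deg F' v :=
        fun v => deg_union hdisj v
      have hdegF'i : deg F' i = 0 := deg_eq_zero (fun e he => hU_i e (hF' he))
      constructor
      · intro h v
        have hv := h v
        rw [hdeg v] at hv
        by_cases hvi : v = i
        · subst hvi
          have hvT : v ∉ T := fun h => hiJ (hT h)
          have haTv : aT v = a v := by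
            rw [haT]; simp [if_neg hvT]
          rw [haTv, hdegF'i]
          omega
        · rw [hdegTstar v hvi] at hv
          rw [haT]
          simp only []
          omega
      · intro h v
        rw [hdeg v]
        by_cases hvi : v = i
        · subst hvi
          rw [hdegTstar_i, hdegF'i]
          omega
        · have hv := h v
          rw [haT] at hv
          simp only [] at hv
          rw [hdegTstar v hvi]
          omega
    -- the bijection
    have stepA : ∑ F ∈ (J.image (fun x => s(x, i)) ∪ U).powerset.filter
          (fun F => adm w a F ∧ J.filter (fun x => s(x, i) ∈ F) = T), z ^ F.card
        = z ^ T.card * Zq w z U aT := by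
      rw [Zq, Finset.mul_sum]
      apply Finset.sum_nbij' (i := fun F => F ∩ U) (j := fun F' => Tstar ∪ F')
      · intro F hF
        simp only [Finset.mem_filter, Finset.mem_powerset] at hF ⊢
        obtain ⟨hsub, hadm, hfib⟩ := hF
        have hFeq : F = Tstar ∪ (F ∩ U) := by
          ext e
          simp only [Finset.mem_union, Finset.mem_inter]
          constructor
          · intro he
            rcases Finset.mem_union.mp (hsub he) with hstar | hU'
            · rw [Finset.mem_image] at hstar
              obtain ⟨x, hx, rfl⟩ := hstar
              left
              rw [hTstar, Finset.mem_image]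
              refine ⟨x, ?_, rfl⟩
              rw [← hfib, Finset.mem_filter]
              exact ⟨hx, he⟩
            · exact Or.inr ⟨he, hU'⟩
          · rintro (he | ⟨he, _⟩)
            · rw [hTstar, Finset.mem_image] at he
              obtain ⟨x, hx, rfl⟩ := he
              have : x ∈ J.filter (fun x => s(x, i) ∈ F) := hfib ▸ hx
              exact (Finset.mem_filter.mp this).2
            · exact he
        exact ⟨Finset.inter_subset_right,
          (equivAdm _ Finset.inter_subset_right).mp (hFeq ▸ hadm)⟩
      · intro F' hF'
        simp only [Finset.mem_filter, Finset.mem_powerset] at hF' ⊢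
        obtain ⟨hsub, hadm⟩ := hF'
        refine ⟨Finset.union_subset ?_ (hsub.trans Finset.subset_union_right),
          (equivAdm _ hsub).mpr hadm, ?_⟩
        · intro e he
          rw [hTstar, Finset.mem_image] at he
          obtain ⟨x, hx, rfl⟩ := he
          exact Finset.mem_union_left _ (Finset.mem_image_of_mem _ (hT hx))
        · ext x
          simp only [Finset.mem_filter, Finset.mem_union]
          constructor
          · rintro ⟨hxJ, hmem | hmem⟩
            · rw [hTstar, Finset.mem_image] at hmem
              obtain ⟨y, hy, hxy⟩ := hmem
              exact (hinj x hxJ y (hT hy) hxy.symm) ▸ hy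
            · exact absurd (hU_i _ (hsub hmem)) (fun h => h (Sym2.mem_mk_right x i))
          · intro hxT
            exact ⟨hT hxT, Or.inl (hTstar ▸ Finset.mem_image_of_mem _ hxT)⟩
      · intro F hF
        simp only [Finset.mem_filter, Finset.mem_powerset] at hF
        obtain ⟨hsub, hadm, hfib⟩ := hF
        ext e
        simp only [Finset.mem_union, Finset.mem_inter]
        constructor
        · rintro (he | ⟨he, _⟩)
          · rw [hTstar, Finset.mem_image] at he
            obtain ⟨x, hx, rfl⟩ := he
            have : x ∈ J.filter (fun x => s(x, i) ∈ F) := hfib ▸ hx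
            exact (Finset.mem_filter.mp this).2
          · exact he
        · intro he
          rcases Finset.mem_union.mp (hsub he) with hstar | hU'
          · rw [Finset.mem_image] at hstar
            obtain ⟨x, hx, rfl⟩ := hstar
            left
            rw [hTstar, Finset.mem_image]
            refine ⟨x, ?_, rfl⟩
            rw [← hfib, Finset.mem_filter]
            exact ⟨hx, he⟩
          · exact Or.inr ⟨he, hU'⟩
      · intro F' hF'
        simp only [Finset.mem_filter, Finset.mem_powerset] at hF'
        rw [Finset.union_inter_distrib_right,
          Finset.disjoint_iff_inter_eq_empty.mp hTstarU,
          Finset.inter_eq_left.mpr hF'.1, Finset.empty_union]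
      · intro F hF
        simp only [Finset.mem_filter, Finset.mem_powerset] at hF
        obtain ⟨hsub, hadm, hfib⟩ := hF
        have hFeq : F = Tstar ∪ (F ∩ U) := by
          ext e
          simp only [Finset.mem_union, Finset.mem_inter]
          constructor
          · intro he
            rcases Finset.mem_union.mp (hsub he) with hstar | hU'
            · rw [Finset.mem_image] at hstar
              obtain ⟨x, hx, rfl⟩ := hstar
              left
              rw [hTstar, Finset.mem_image]
              refine ⟨x, ?_, rfl⟩
              rw [← hfib, Finset.mem_filter]
              exact ⟨hx, he⟩
            · exact Or.inr ⟨he, hU'⟩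
          · rintro (he | ⟨he, _⟩)
            · rw [hTstar, Finset.mem_image] at he
              obtain ⟨x, hx, rfl⟩ := he
              have : x ∈ J.filter (fun x => s(x, i) ∈ F) := hfib ▸ hx
              exact (Finset.mem_filter.mp this).2
            · exact he
        have hdisj : Disjoint Tstar (F ∩ U) := hTstarU.mono_right Finset.inter_subset_right
        have hc : F.card = T.card + (F ∩ U).card := by
          conv_lhs => rw [hFeq]
          rw [Finset.card_union_of_disjoint hdisj, hTstar_card]
        rw [hc, pow_add]
    have haTw : ∀ v, aT v ≤ w v := by
      intro v
      by_cases hvT : v ∈ T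
      · have := hJw v (hT hvT); simp only [haT, if_pos hvT]; omega
      · simp only [haT, if_neg hvT]; simpa using haw v
    rw [stepA, Zq_family J P hPd aT haTw]
    congr 1
    rw [← Finset.prod_sdiff hT, mul_comm]
    congr 1
    · apply Finset.prod_congr rfl
      intro x hxT
      apply Zq_congr
      · intro v ⟨e, he, hve⟩
        have hvi : v ≠ i := fun h => hPi x (hT hxT) e he (h ▸ hve)
        have hvJ : ∀ y ∈ J, y ≠ x → v ≠ y := fun y hy hyx h =>
          hPy x (hT hxT) y hy hyx e he (h ▸ hve)
        by_cases hvx : v = x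
        · subst hvx
          simp [haT, if_pos hxT]
        · have hvT : v ∉ T := fun h => hvJ v (hT h) hvx rfl
          simp [haT, if_neg hvT, if_neg hvx]
      · intro v
        by_cases hvx : v = x
        · subst hvx
          simp [haT, if_pos hxT]
        · by_cases hvT : v ∈ T
          · simp only [haT, if_pos hvT, if_neg hvx]
            have := hJw v (hT hvT)
            constructor <;> intro <;> omega
          · simp [haT, if_neg hvT, if_neg hvx]
    · apply Finset.prod_congr rfl
      intro x hxJT
      rw [Finset.mem_sdiff] at hxJT
      obtain ⟨hxJ, hxT⟩ := hxJT
      apply Zq_congr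
      · intro v ⟨e, he, hve⟩
        have hvT : v ∉ T := by
          intro hvT
          have hvx : v ≠ x := fun h => hxT (h ▸ hvT)
          exact hPy x hxJ v (hT hvT) hvx e he hve
        simp [haT, if_neg hvT]
      · intro v
        by_cases hvT : v ∈ T
        · simp only [haT, if_pos hvT]
          have := hJw v (hT hvT)
          constructor <;> intro <;> omega
        · simp [haT, if_neg hvT]
  · rw [if_neg hcond]
    apply Finset.sum_eq_zero
    intro F hF
    exfalso
    simp only [Finset.mem_filter, Finset.mem_powerset] at hF
    obtain ⟨hsub, hadm, hfib⟩ := hF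
    have hTstarF : Tstar ⊆ F := by
      intro e he
      rw [hTstar, Finset.mem_image] at he
      obtain ⟨x, hx, rfl⟩ := he
      have : x ∈ J.filter (fun x => s(x, i) ∈ F) := hfib ▸ hx
      exact (Finset.mem_filter.mp this).2
    have h1 : T.card ≤ deg F i := by
      rw [← hdegTstar_i]
      exact deg_mono hTstarF i
    have := hadm i
    omega

lemma starFact (w : V → ℕ) (z : ℝ) (i : V) (J : Finset V) (hiJ : i ∉ J)
    (P : V → Finset (Sym2 V))
    (hPi : ∀ x ∈ J, ∀ e ∈ P x, i ∉ e)
    (hPy : ∀ x ∈ J, ∀ y ∈ J, y ≠ x → ∀ e ∈ P x, y ∉ e)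
    (hPd : ∀ x ∈ J, ∀ y ∈ J, x ≠ y → supDisj (P x) (P y))
    (a : V → ℕ) (haw : ∀ v, a v ≤ w v) (hJw : ∀ x ∈ J, a x + 1 ≤ w x) :
    Zq w z (J.image (fun x => s(x, i)) ∪ J.sup P) a
    = ∑ T ∈ J.powerset.filter (fun T => T.card + a i ≤ w i),
        z ^ T.card * ((∏ x ∈ T, Zq w z (P x) (fun v => a v + if v = x then 1 else 0)) *
          ∏ x ∈ J \ T, Zq w z (P x) a) := by
  rw [Zq, ← Finset.sum_fiberwise_of_maps_to (g := fun F => J.filter (fun x => s(x, i) ∈ F))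
    (t := J.powerset) (fun F _ => Finset.mem_powerset.mpr (Finset.filter_subset _ _))]
  conv_rhs => rw [Finset.sum_filter]
  apply Finset.sum_congr rfl
  intro T hT
  rw [Finset.mem_powerset] at hT
  rw [Finset.filter_filter]
  exact fiberFact w z i J hiJ P hPi hPy hPd a haw hJw T hT


section Graph

variable (G : SimpleGraph V) [DecidableRel G.Adj]

/-- the set of vertices on the `x` side of the (removed) edge `x–i` -/
noncomputable def side (x i : V) : Finset V :=
  Finset.univ.filter (fun v => (G.deleteEdges {s(x, i)}).Reachable x v)

/-- the edges of `G` strictly on the `x` side of the edge `x–i` -/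
noncomputable def Esub (x i : V) : Finset (Sym2 V) :=
  G.edgeFinset.filter (fun e => e ≠ s(x, i) ∧ ∀ v ∈ e, v ∈ side G x i)

variable {G}

lemma mem_side {x i v : V} : v ∈ side G x i ↔ (G.deleteEdges {s(x, i)}).Reachable x v := by
  simp [side]

lemma self_mem_side {x i : V} : x ∈ side G x i := mem_side.mpr (SimpleGraph.Reachable.refl x)

lemma mem_support_of_mem_edges' {u v t : V} {H : SimpleGraph V} (p : H.Walk u v)
    {e : Sym2 V} (he : e ∈ p.edges) (ht : t ∈ e) : t ∈ p.support := by
  induction e with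
  | _ a b =>
    rw [Sym2.mem_iff] at ht
    rcases ht with rfl | rfl
    · exact p.fst_mem_support_of_mem_edges he
    · exact p.snd_mem_support_of_mem_edges he

lemma side_extend {x i v u : V} (hv : v ∈ side G x i) (hadj : G.Adj v u)
    (hne : s(v, u) ≠ s(x, i)) : u ∈ side G x i :=
  mem_side.mpr ((mem_side.mp hv).trans
    (SimpleGraph.Adj.reachable (SimpleGraph.deleteEdges_adj.mpr ⟨hadj, by simp [hne]⟩)))

variable (hG : G.IsAcyclic)
include hG

lemma bridge_na {x i : V} (hxi : G.Adj x i) :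
    ¬(G.deleteEdges {s(x, i)}).Reachable x i := by
  have hb := (SimpleGraph.isAcyclic_iff_forall_edge_isBridge.mp hG)
    ((G.mem_edgeSet).mpr hxi)
  exact (SimpleGraph.isBridge_iff.mp hb)

lemma not_mem_side_self {x i : V} (hxi : G.Adj x i) : i ∉ side G x i := by
  rw [mem_side]
  exact fun h => bridge_na hG hxi h

lemma i_not_mem_Esub {x i : V} (hxi : G.Adj x i) {e : Sym2 V} (he : e ∈ Esub G x i) :
    i ∉ e := by
  rw [Esub, Finset.mem_filter] at he
  exact fun hie => not_mem_side_self hG hxi (he.2.2 i hie)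

/-- any walk from `x` within the deleted graph avoids the vertex `i` entirely -/
lemma reach_avoid {x i v : V} (hxi : G.Adj x i) (hv : v ∈ side G x i)
    (s' : Set (Sym2 V)) (hs' : ∀ e ∈ s', i ∈ e) : (G.deleteEdges s').Reachable x v := by
  rw [mem_side] at hv
  obtain ⟨p⟩ := hv
  have hni : i ∉ p.support := fun hi => bridge_na hG hxi ⟨p.takeUntil i hi⟩
  refine ⟨p.transfer _ ?_⟩
  intro e he
  have h1 := p.edges_subset_edgeSet he
  rw [SimpleGraph.edgeSet_deleteEdges] at h1 ⊢
  exact ⟨h1.1, fun hes => hni (mem_support_of_mem_edges' p he (hs' e hes))⟩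

/-- sides of distinct neighbours of `i` are disjoint -/
lemma side_disj {x y i : V} (hxi : G.Adj x i) (hyi : G.Adj y i) (hxy : x ≠ y)
    {v : V} (hvx : v ∈ side G x i) (hvy : v ∈ side G y i) : False := by
  have hne : s(x, i) ≠ s(y, i) := by
    intro hEq
    rw [Sym2.eq_iff] at hEq
    rcases hEq with ⟨rfl, -⟩ | ⟨rfl, h2⟩
    · exact hxy rfl
    · exact G.irrefl (h2 ▸ hyi)
  have h1 : (G.deleteEdges {s(y, i)}).Reachable x v := by
    refine (reach_avoid hG hxi hvx {s(x, i), s(y, i)} ?_).mono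
      (SimpleGraph.deleteEdges_anti (by intro e he; exact Set.mem_insert_iff.mpr (Or.inr he)))
    rintro e (rfl | rfl)
    · exact Sym2.mem_mk_right x i
    · exact Sym2.mem_mk_right y i
  have h2 : (G.deleteEdges {s(y, i)}).Reachable y x := (mem_side.mp hvy).trans h1.symm
  have h3 : (G.deleteEdges {s(y, i)}).Adj x i := by
    rw [SimpleGraph.deleteEdges_adj]
    exact ⟨hxi, by simpa using hne⟩
  exact bridge_na hG hyi (h2.trans h3.reachable)

lemma side_mono {i j x v : V} (hij : G.Adj i j) (hxi : G.Adj x i) (hxj : x ≠ j)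
    (hv : v ∈ side G x i) : v ∈ side G i j := by
  have hne : s(i, x) ≠ s(i, j) := by
    intro hEq
    rw [Sym2.eq_iff] at hEq
    rcases hEq with ⟨-, rfl⟩ | ⟨rfl, rfl⟩
    · exact hxj rfl
    · exact hxj rfl
  have h1 : (G.deleteEdges {s(i, j)}).Reachable x v := by
    refine (reach_avoid hG hxi hv {s(x, i), s(i, j)} ?_).mono
      (SimpleGraph.deleteEdges_anti (by intro e he; exact Set.mem_insert_iff.mpr (Or.inr he)))
    rintro e (rfl | rfl)
    · exact Sym2.mem_mk_right x i
    · exact Sym2.mem_mk_left i j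
  have h2 : (G.deleteEdges {s(i, j)}).Adj i x := by
    rw [SimpleGraph.deleteEdges_adj]
    exact ⟨hxi.symm, by simpa using hne⟩
  exact mem_side.mpr (h2.reachable.trans h1)

lemma exists_branch {i j u : V} (hij : G.Adj i j) (hu : u ∈ side G i j) (hui : u ≠ i) :
    ∃ x, G.Adj i x ∧ x ≠ j ∧ u ∈ side G x i := by
  rw [mem_side] at hu
  obtain ⟨p0⟩ := hu
  obtain ⟨q, hq⟩ := p0.toPath
  cases q with
  | nil => exact absurd rfl hui.symm
  | @cons _ x _ h q' =>
    rw [SimpleGraph.Walk.cons_isPath_iff] at hq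
    obtain ⟨hq', hnotin⟩ := hq
    have hGix : G.Adj i x := (SimpleGraph.deleteEdges_adj.mp h).1
    have hxj : x ≠ j := by
      rintro rfl
      exact (SimpleGraph.deleteEdges_adj.mp h).2 rfl
    refine ⟨x, hGix, hxj, ?_⟩
    rw [mem_side]
    refine ⟨q'.transfer _ ?_⟩
    intro e he
    have h1 := q'.edges_subset_edgeSet he
    rw [SimpleGraph.edgeSet_deleteEdges] at h1 ⊢
    refine ⟨h1.1, ?_⟩
    simp only [Set.mem_singleton_iff]
    rintro rfl
    exact hnotin (mem_support_of_mem_edges' q' he (Sym2.mem_mk_right x i))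

/-- decomposition of the edges on the `i`-side of `i–j` -/
lemma Esub_decomp {i j : V} (hij : G.Adj i j) :
    Esub G i j =
      ((G.neighborFinset i).erase j).image (fun x => s(x, i)) ∪
        ((G.neighborFinset i).erase j).sup (fun x => Esub G x i) := by
  ext e
  simp only [Finset.mem_union, Finset.mem_image, Finset.mem_sup, Finset.mem_erase,
    SimpleGraph.mem_neighborFinset]
  constructor
  · intro he
    rw [Esub, Finset.mem_filter] at he
    obtain ⟨heE, hne, hside⟩ := he
    by_cases hie : i ∈ e
    · left
      induction e with
      | _ a b =>
        have hab : G.Adj a b := (G.mem_edgeSet).mp (SimpleGraph.mem_edgeFinset.mp heE)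
        rw [Sym2.mem_iff] at hie
        rcases hie with rfl | rfl
        · refine ⟨b, ⟨?_, hab⟩, Sym2.eq_swap⟩
          rintro rfl
          exact hne rfl
        · refine ⟨a, ⟨?_, hab.symm⟩, rfl⟩
          rintro rfl
          exact hne (Sym2.eq_swap)
    · right
      induction e with
      | _ a b =>
        have hab : G.Adj a b := (G.mem_edgeSet).mp (SimpleGraph.mem_edgeFinset.mp heE)
        have hai : a ≠ i := fun h => hie (h ▸ Sym2.mem_mk_left a b)
        obtain ⟨x, hix, hxj, hax⟩ :=
          exists_branch hG hij (hside a (Sym2.mem_mk_left a b)) hai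
        refine ⟨x, ⟨hxj, hix⟩, ?_⟩
        rw [Esub, Finset.mem_filter]
        refine ⟨heE, fun h => hie (h ▸ Sym2.mem_mk_right x i), ?_⟩
        intro v hv
        rw [Sym2.mem_iff] at hv
        rcases hv with rfl | rfl
        · exact hax
        · refine side_extend hax hab ?_
          intro h
          exact hie (h ▸ Sym2.mem_mk_right x i)
  · rintro (⟨x, ⟨hxj, hix⟩, rfl⟩ | ⟨x, ⟨hxj, hix⟩, he⟩)
    · rw [Esub, Finset.mem_filter]
      refine ⟨SimpleGraph.mem_edgeFinset.mpr ((G.mem_edgeSet).mpr hix.symm), ?_, ?_⟩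
      · intro hEq
        rw [Sym2.eq_iff] at hEq
        rcases hEq with ⟨h1, h2⟩ | ⟨h1, h2⟩
        · exact G.irrefl (h1 ▸ hix)
        · exact hxj h1
      · intro v hv
        rw [Sym2.mem_iff] at hv
        rcases hv with rfl | rfl
        · exact side_mono hG hij hix.symm hxj self_mem_side
        · exact mem_side.mpr (SimpleGraph.Reachable.refl _)
    · rw [Esub, Finset.mem_filter] at he ⊢
      obtain ⟨heE, hne, hside⟩ := he
      have hie : i ∉ e := fun hie2 => not_mem_side_self hG hix.symm (hside i hie2)
      refine ⟨heE, fun h => hie (h ▸ Sym2.mem_mk_left i j), ?_⟩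
      intro v hv
      exact side_mono hG hij hix.symm hxj (hside v hv)

lemma Esub_subset_Esub {i j x : V} (hij : G.Adj i j) (hix : G.Adj i x) (hxj : x ≠ j) :
    Esub G x i ⊆ Esub G i j := by
  intro e he
  rw [Esub_decomp hG hij]
  refine Finset.mem_union_right _ ?_
  rw [Finset.mem_sup]
  exact ⟨x, Finset.mem_erase.mpr ⟨hxj, (SimpleGraph.mem_neighborFinset _ _ _).mpr hix⟩, he⟩

lemma star_mem_Esub {i j x : V} (hij : G.Adj i j) (hix : G.Adj i x) (hxj : x ≠ j) :
    s(x, i) ∈ Esub G i j := by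
  rw [Esub_decomp hG hij]
  refine Finset.mem_union_left _ ?_
  exact Finset.mem_image_of_mem _ (Finset.mem_erase.mpr ⟨hxj, (SimpleGraph.mem_neighborFinset _ _ _).mpr hix⟩)

lemma star_not_mem_Esub {i x : V} (hix : G.Adj i x) : s(x, i) ∉ Esub G x i := by
  intro h
  exact i_not_mem_Esub hG hix.symm h (Sym2.mem_mk_right x i)

/-- membership in the `i`-local edge set from a side vertex -/
lemma mem_Ki_of_side {x i v : V} (hxi : G.Adj x i) (hv : v ∈ side G x i)
    {e : Sym2 V} (he : e ∈ G.edgeFinset) (hve : v ∈ e) :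
    e ∈ (G.neighborFinset i).image (fun y => s(y, i)) ∪
      (G.neighborFinset i).sup (fun y => Esub G y i) := by
  by_cases hie : i ∈ e
  · refine Finset.mem_union_left _ ?_
    rw [Finset.mem_image]
    induction e with
    | _ a b =>
      have hab : G.Adj a b := (G.mem_edgeSet).mp (SimpleGraph.mem_edgeFinset.mp he)
      rw [Sym2.mem_iff] at hie
      rcases hie with rfl | rfl
      · exact ⟨b, (SimpleGraph.mem_neighborFinset _ _ _).mpr hab, Sym2.eq_swap⟩
      · exact ⟨a, (SimpleGraph.mem_neighborFinset _ _ _).mpr hab.symm, rfl⟩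
  · refine Finset.mem_union_right _ ?_
    rw [Finset.mem_sup]
    refine ⟨x, (SimpleGraph.mem_neighborFinset _ _ _).mpr hxi.symm, ?_⟩
    rw [Esub, Finset.mem_filter]
    refine ⟨he, fun h => hie (h ▸ Sym2.mem_mk_right x i), ?_⟩
    intro u hu
    by_cases huv : u = v
    · exact huv ▸ hv
    · have heq : e = s(v, u) := ((Sym2.mem_and_mem_iff (fun h => huv h.symm)).mp ⟨hve, hu⟩)
      have hadj : G.Adj v u := by
        rw [heq] at he
        exact (G.mem_edgeSet).mp (SimpleGraph.mem_edgeFinset.mp he)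
      refine side_extend hv hadj ?_
      intro h
      exact hie ((heq.trans h) ▸ Sym2.mem_mk_right x i)

end Graph

section Assemble

variable {G : SimpleGraph V} [DecidableRel G.Adj] {w : V → ℕ} {z : ℝ}

lemma mem_star_of_i {i : V} {e : Sym2 V} (he : e ∈ G.edgeFinset) (hie : i ∈ e) :
    e ∈ (G.neighborFinset i).image (fun y => s(y, i)) := by
  rw [Finset.mem_image]
  induction e with
  | _ a b =>
    have hab : G.Adj a b := (G.mem_edgeSet).mp (SimpleGraph.mem_edgeFinset.mp he)
    rw [Sym2.mem_iff] at hie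
    rcases hie with rfl | rfl
    · exact ⟨b, (SimpleGraph.mem_neighborFinset _ _ _).mpr hab, Sym2.eq_swap⟩
    · exact ⟨a, (SimpleGraph.mem_neighborFinset _ _ _).mpr hab.symm, rfl⟩

/-- the one-sided partition functions -/
noncomputable def Z1 (G : SimpleGraph V) [DecidableRel G.Adj] (w : V → ℕ) (z : ℝ)
    (x i : V) : ℝ := Zq w z (Esub G x i) (fun v => if v = x then 1 else 0)

noncomputable def Z0 (G : SimpleGraph V) [DecidableRel G.Adj] (w : V → ℕ) (z : ℝ)
    (x i : V) : ℝ := Zq w z (Esub G x i) (fun _ => 0)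

/-- the canonical message solution -/
noncomputable def Yf (G : SimpleGraph V) [DecidableRel G.Adj] (w : V → ℕ) (z : ℝ) :
    V → V → ℝ := fun x i =>
  if G.Adj x i then z * Z1 G w z x i / Z0 G w z x i else 0

lemma Z0_pos (hz : 0 < z) (x i : V) : 0 < Z0 G w z x i :=
  Zq_pos hz _ (fun _ => Nat.zero_le _)

lemma Z1_pos (hz : 0 < z) (hw : ∀ v, 1 ≤ w v) (x i : V) : 0 < Z1 G w z x i := by
  apply Zq_pos hz
  intro v
  by_cases h : v = x
  · simp only [if_pos h]; exact h ▸ hw x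
  · simp [if_neg h]

lemma Yf_nonneg (hz : 0 < z) (hw : ∀ v, 1 ≤ w v) (x i : V) : 0 ≤ Yf G w z x i := by
  rw [Yf]
  split
  · exact div_nonneg (mul_nonneg hz.le (Z1_pos hz hw x i).le) (Z0_pos hz x i).le
  · exact le_refl 0

lemma hyps_pack (hG : G.IsAcyclic) (i : V) (J : Finset V) (hJ : ∀ x ∈ J, G.Adj x i) :
    i ∉ J ∧ (∀ x ∈ J, ∀ e ∈ Esub G x i, i ∉ e) ∧
      (∀ x ∈ J, ∀ y ∈ J, y ≠ x → ∀ e ∈ Esub G x i, y ∉ e) ∧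
      (∀ x ∈ J, ∀ y ∈ J, x ≠ y → supDisj (Esub G x i) (Esub G y i)) := by
  refine ⟨fun h => G.irrefl (hJ i h), fun x hx e he => i_not_mem_Esub hG (hJ x hx) he,
    ?_, ?_⟩
  · intro x hx y hy hyx e he hye
    have h1 : y ∈ side G x i := by
      rw [Esub, Finset.mem_filter] at he
      exact he.2.2 y hye
    exact side_disj hG (hJ x hx) (hJ y hy) (fun h => hyx h.symm) h1 self_mem_side
  · intro x hx y hy hxy e₁ h1 e₂ h2 v hv1 hv2
    rw [Esub, Finset.mem_filter] at h1 h2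
    exact side_disj hG (hJ x hx) (hJ y hy) hxy (h1.2.2 v hv1) (h2.2.2 v hv2)

set_option maxHeartbeats 2000000 in
lemma Z_eq (hG : G.IsAcyclic) (hw : ∀ v, 1 ≤ w v) {i j : V} (hij : G.Adj i j)
    (c : ℕ) (hc : c ≤ w i) :
    Zq w z (Esub G i j) (fun v => if v = i then c else 0)
    = ∑ T ∈ ((G.neighborFinset i).erase j).powerset.filter (fun T => T.card + c ≤ w i),
        z ^ T.card * ((∏ x ∈ T, Z1 G w z x i) *
          ∏ x ∈ ((G.neighborFinset i).erase j) \ T, Z0 G w z x i) := by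
  set J := (G.neighborFinset i).erase j with hJdef
  have hJ : ∀ x ∈ J, G.Adj x i := by
    intro x hx
    rw [hJdef, Finset.mem_erase, SimpleGraph.mem_neighborFinset] at hx
    exact hx.2.symm
  obtain ⟨hiJ, hPi, hPy, hPd⟩ := hyps_pack hG i J hJ
  set a : V → ℕ := fun v => if v = i then c else 0 with ha
  have haw : ∀ v, a v ≤ w v := by
    intro v
    by_cases h : v = i
    · rw [ha]; simp only [if_pos h]; exact h ▸ hc
    · rw [ha]; simp [if_neg h]
  have hJw : ∀ x ∈ J, a x + 1 ≤ w x := by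
    intro x hx
    have hxi : x ≠ i := fun h => hiJ (h ▸ hx)
    rw [ha]; simp only [if_neg hxi, Nat.zero_add]
    exact hw x
  rw [Esub_decomp hG hij, starFact w z i J hiJ (fun x => Esub G x i) hPi hPy hPd a haw hJw]
  apply Finset.sum_congr
  · apply Finset.filter_congr
    intro T _
    rw [ha]
    simp
  · intro T hT
    rw [Finset.mem_filter, Finset.mem_powerset] at hT
    congr 1
    congr 1
    · apply Finset.prod_congr rfl
      intro x hx
      have hxJ : x ∈ J := hT.1 hx
      have hxi : x ≠ i := fun h => hiJ (h ▸ hxJ)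
      apply Zq_congr
      · rintro v ⟨e, he, hve⟩
        have hvi : v ≠ i := fun h => i_not_mem_Esub hG (hJ x hxJ) he (h ▸ hve)
        rw [ha]; simp [if_neg hvi]
      · intro v
        rw [ha]
        by_cases hvi : v = i
        · have hvx : v ≠ x := fun h => hxi (h.symm.trans hvi)
          simp only [if_pos hvi, if_neg hvx]
          have hcv : c ≤ w v := by rw [hvi]; exact hc
          constructor <;> intro <;> omega
        · simp [if_neg hvi]
    · apply Finset.prod_congr rfl
      intro x hx
      have hxJ : x ∈ J := (Finset.mem_sdiff.mp hx).1
      apply Zq_congr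
      · rintro v ⟨e, he, hve⟩
        have hvi : v ≠ i := fun h => i_not_mem_Esub hG (hJ x hxJ) he (h ▸ hve)
        rw [ha]; simp [if_neg hvi]
      · intro v
        rw [ha]
        by_cases hvi : v = i
        · simp only [if_pos hvi]
          have hcv : c ≤ w v := by rw [hvi]; exact hc
          constructor <;> intro <;> omega
        · simp [if_neg hvi]

lemma sum_fib_eq (hz : 0 < z) (i : V) (J : Finset V) (hJ : ∀ x ∈ J, G.Adj x i)
    (S : Finset (Finset V)) (hS : ∀ T ∈ S, T ⊆ J) :
    ∑ T ∈ S,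
        z ^ T.card * ((∏ x ∈ T, Z1 G w z x i) * ∏ x ∈ J \ T, Z0 G w z x i)
    = (∏ x ∈ J, Z0 G w z x i) *
        ∑ T ∈ S, ∏ x ∈ T, Yf G w z x i := by
  rw [Finset.mul_sum]
  apply Finset.sum_congr rfl
  intro T hT
  have hTJ : T ⊆ J := hS T hT
  have key : ∀ x ∈ T, Yf G w z x i = z * Z1 G w z x i / Z0 G w z x i := by
    intro x hx
    rw [Yf, if_pos (hJ x (hTJ hx))]
  rw [Finset.prod_congr rfl key, ← Finset.prod_sdiff hTJ, mul_assoc, ← Finset.prod_mul_distrib]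
  have hZ0 : ∀ x ∈ T, Z0 G w z x i * (z * Z1 G w z x i / Z0 G w z x i) = z * Z1 G w z x i := by
    intro x hx
    rw [mul_comm, div_mul_cancel₀ _ (ne_of_gt (Z0_pos hz x i))]
  rw [Finset.prod_congr rfl hZ0, Finset.prod_mul_distrib, Finset.prod_const]
  ring

lemma Y_fix (hG : G.IsAcyclic) (hw : ∀ v, 1 ≤ w v) (hz : 0 < z) {i j : V}
    (hij : G.Adj i j) : Yf G w z i j = z * RG G w (Yf G w z) i j := by
  have hJ : ∀ x ∈ (G.neighborFinset i).erase j, G.Adj x i := by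
    intro x hx
    rw [Finset.mem_erase, SimpleGraph.mem_neighborFinset] at hx
    exact hx.2.symm
  have hP : (0:ℝ) < ∏ x ∈ (G.neighborFinset i).erase j, Z0 G w z x i :=
    Finset.prod_pos (fun x _ => Z0_pos hz x i)
  have hnum : Z1 G w z i j
      = (∏ x ∈ (G.neighborFinset i).erase j, Z0 G w z x i) *
        ∑ T ∈ ((G.neighborFinset i).erase j).powerset.filter (fun T => T.card < w i),
          ∏ x ∈ T, Yf G w z x i := by
    rw [Z1, Z_eq hG hw hij 1 (hw i), sum_fib_eq hz i _ hJ _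
      (fun T hT => Finset.mem_powerset.mp (Finset.mem_filter.mp hT).1)]
    congr 1
  have hden : Z0 G w z i j
      = (∏ x ∈ (G.neighborFinset i).erase j, Z0 G w z x i) *
        ∑ T ∈ ((G.neighborFinset i).erase j).powerset.filter (fun T => T.card ≤ w i),
          ∏ x ∈ T, Yf G w z x i := by
    have h0 : (fun v => if v = i then 0 else 0) = (fun _ : V => (0:ℕ)) := by
      funext v; simp
    rw [Z0, ← h0, Z_eq hG hw hij 0 (Nat.zero_le _), sum_fib_eq hz i _ hJ _
      (fun T hT => Finset.mem_powerset.mp (Finset.mem_filter.mp hT).1)]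
    congr 1
  have hYf : Yf G w z i j = z * Z1 G w z i j / Z0 G w z i j := by
    rw [Yf, if_pos hij]
  rw [hYf, RG, hnum, hden]
  rw [mul_div_assoc, mul_div_mul_left _ _ (ne_of_gt hP), ← mul_div_assoc]

lemma RG_congr {Y Y' : V → V → ℝ} (i j : V)
    (h : ∀ x ∈ (G.neighborFinset i).erase j, Y' x i = Y x i) :
    RG G w Y' i j = RG G w Y i j := by
  unfold RG
  congr 1 <;>
  · apply Finset.sum_congr rfl
    intro S hS
    apply Finset.prod_congr rfl
    intro x hx
    exact h x ((Finset.mem_powerset.mp (Finset.mem_filter.mp hS).1) hx)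

lemma Y_unique (hG : G.IsAcyclic) (hw : ∀ v, 1 ≤ w v) (hz : 0 < z)
    (Y' : V → V → ℝ)
    (hY' : ∀ i j, G.Adj i j → 0 ≤ Y' i j ∧ Y' i j = z * RG G w Y' i j) :
    ∀ i j, G.Adj i j → Y' i j = Yf G w z i j := by
  have key : ∀ n i j, G.Adj i j → (Esub G i j).card < n → Y' i j = Yf G w z i j := by
    intro n
    induction n with
    | zero => intro i j _ h; exact absurd h (Nat.not_lt_zero _)
    | succ n ih =>
      intro i j hij hcard
      have hx : ∀ x ∈ (G.neighborFinset i).erase j, Y' x i = Yf G w z x i := by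
        intro x hx
        rw [Finset.mem_erase, SimpleGraph.mem_neighborFinset] at hx
        obtain ⟨hxj, hix⟩ := hx
        have hss : Esub G x i ⊂ Esub G i j := by
          rw [Finset.ssubset_iff_of_subset (Esub_subset_Esub hG hij hix hxj)]
          exact ⟨s(x, i), star_mem_Esub hG hij hix hxj, star_not_mem_Esub hG hix⟩
        exact ih x i hix.symm (lt_of_lt_of_le (Finset.card_lt_card hss)
          (Nat.lt_succ_iff.mp hcard))
      rw [(hY' i j hij).2, RG_congr i j hx, ← Y_fix hG hw hz hij]
  intro i j hij
  exact key ((Esub G i j).card + 1) i j hij (Nat.lt_succ_self _)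



lemma sum_filter_congr' {α : Type*} {p q : α → Prop} {h1 : DecidablePred p}
    {h2 : DecidablePred q} {s : Finset α} (h : ∀ x ∈ s, p x ↔ q x) (f : α → ℝ) :
    ∑ x ∈ @Finset.filter α p h1 s, f x = ∑ x ∈ @Finset.filter α q h2 s, f x :=
  Finset.sum_congr (Finset.filter_congr h) (fun _ _ => rfl)

set_option maxHeartbeats 2000000 in
lemma marginal (hG : G.IsAcyclic) (hw : ∀ v, 1 ≤ w v) (hz : 0 < z) (i : V)
    (T : Finset V) (hT : T ⊆ G.neighborFinset i) :
    (∑ F ∈ (admFinset G w).filter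
        (fun F => (G.neighborFinset i).filter (fun x => s(x, i) ∈ F) = T), z ^ F.card) /
      (∑ F ∈ admFinset G w, z ^ F.card)
    = (if T.card ≤ w i then
        (∏ x ∈ T, Yf G w z x i / (1 + Yf G w z x i)) *
          ∏ x ∈ (G.neighborFinset i) \ T, 1 / (1 + Yf G w z x i)
      else 0) /
      (∑ S ∈ (G.neighborFinset i).powerset.filter (fun S => S.card ≤ w i),
        (∏ x ∈ S, Yf G w z x i / (1 + Yf G w z x i)) *
          ∏ x ∈ (G.neighborFinset i) \ S, 1 / (1 + Yf G w z x i)) := by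
  have hJ : ∀ x ∈ G.neighborFinset i, G.Adj x i :=
    fun x hx => ((SimpleGraph.mem_neighborFinset _ _ _).mp hx).symm
  obtain ⟨hiJ, hPi, hPy, hPd⟩ := hyps_pack hG i _ hJ
  have hKsub : (G.neighborFinset i).image (fun x => s(x, i)) ∪
      (G.neighborFinset i).sup (fun x => Esub G x i) ⊆ G.edgeFinset := by
    intro e he
    rcases Finset.mem_union.mp he with h | h
    · rw [Finset.mem_image] at h
      obtain ⟨x, hx, rfl⟩ := h
      exact SimpleGraph.mem_edgeFinset.mpr ((G.mem_edgeSet).mpr (hJ x hx))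
    · rw [Finset.mem_sup] at h
      obtain ⟨x, _, h⟩ := h
      rw [Esub, Finset.mem_filter] at h
      exact h.1
  have hEF : (G.edgeFinset \ ((G.neighborFinset i).image (fun x => s(x, i)) ∪
        (G.neighborFinset i).sup (fun x => Esub G x i))) ∪
      ((G.neighborFinset i).image (fun x => s(x, i)) ∪
        (G.neighborFinset i).sup (fun x => Esub G x i)) = G.edgeFinset :=
    Finset.sdiff_union_of_subset hKsub
  have hsd : supDisj (G.edgeFinset \ ((G.neighborFinset i).image (fun x => s(x, i)) ∪
        (G.neighborFinset i).sup (fun x => Esub G x i)))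
      ((G.neighborFinset i).image (fun x => s(x, i)) ∪
        (G.neighborFinset i).sup (fun x => Esub G x i)) := by
    intro e₁ h1 e₂ h2 v hv1 hv2
    rw [Finset.mem_sdiff] at h1
    apply h1.2
    rcases Finset.mem_union.mp h2 with h | h
    · rw [Finset.mem_image] at h
      obtain ⟨x, hx, rfl⟩ := h
      rw [Sym2.mem_iff] at hv2
      rcases hv2 with rfl | rfl
      · exact mem_Ki_of_side hG (hJ v hx) self_mem_side h1.1 hv1
      · exact Finset.mem_union_left _ (mem_star_of_i h1.1 hv1)
    · rw [Finset.mem_sup] at h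
      obtain ⟨x, hx, h⟩ := h
      rw [Esub, Finset.mem_filter] at h
      exact mem_Ki_of_side hG (hJ x hx) (h.2.2 v hv2) h1.1 hv1
  have hadm_eq : admFinset G w = G.edgeFinset.powerset.filter (adm w (fun _ => 0)) := by
    unfold admFinset
    apply Finset.filter_congr
    intro F _
    refine ⟨fun h v => ?_, fun h v => ?_⟩
    · simpa [deg] using h v
    · simpa [deg] using h v
  -- denominator
  have hden : ∑ F ∈ admFinset G w, z ^ F.card
      = Zq w z (G.edgeFinset \ ((G.neighborFinset i).image (fun x => s(x, i)) ∪
            (G.neighborFinset i).sup (fun x => Esub G x i))) (fun _ => 0) *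
        Zq w z ((G.neighborFinset i).image (fun x => s(x, i)) ∪
            (G.neighborFinset i).sup (fun x => Esub G x i)) (fun _ => 0) := by
    have h1 : ∑ F ∈ admFinset G w, z ^ F.card = Zq w z G.edgeFinset (fun _ => 0) := by
      rw [hadm_eq]; rfl
    rw [h1]
    conv_lhs => rw [← hEF]
    rw [Zq_split hsd]
  -- numerator
  have hnum : ∑ F ∈ (admFinset G w).filter
        (fun F => (G.neighborFinset i).filter (fun x => s(x, i) ∈ F) = T), z ^ F.card
      = Zq w z (G.edgeFinset \ ((G.neighborFinset i).image (fun x => s(x, i)) ∪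
            (G.neighborFinset i).sup (fun x => Esub G x i))) (fun _ => 0) *
        ∑ F ∈ ((G.neighborFinset i).image (fun x => s(x, i)) ∪
            (G.neighborFinset i).sup (fun x => Esub G x i)).powerset.filter
            (fun F => adm w (fun _ => 0) F ∧
              (G.neighborFinset i).filter (fun x => s(x, i) ∈ F) = T), z ^ F.card := by
    rw [hadm_eq, Finset.filter_filter]
    conv_lhs => rw [← hEF]
    have hpred : ∀ F ∈ ((G.edgeFinset \ ((G.neighborFinset i).image (fun x => s(x, i)) ∪
          (G.neighborFinset i).sup (fun x => Esub G x i))) ∪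
          ((G.neighborFinset i).image (fun x => s(x, i)) ∪
            (G.neighborFinset i).sup (fun x => Esub G x i))).powerset,
        ((adm w (fun _ => 0) F ∧ (G.neighborFinset i).filter (fun x => s(x, i) ∈ F) = T)
          ↔ (adm w (fun _ => 0) F ∧ True ∧
            (G.neighborFinset i).filter (fun x => s(x, i) ∈
              F ∩ ((G.neighborFinset i).image (fun x => s(x, i)) ∪
                (G.neighborFinset i).sup (fun x => Esub G x i))) = T)) := by
      intro F _
      have hfib : (G.neighborFinset i).filter (fun x => s(x, i) ∈
            F ∩ ((G.neighborFinset i).image (fun x => s(x, i)) ∪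
              (G.neighborFinset i).sup (fun x => Esub G x i)))
          = (G.neighborFinset i).filter (fun x => s(x, i) ∈ F) := by
        apply Finset.filter_congr
        intro x hx
        simp only [Finset.mem_inter]
        exact ⟨fun h => h.1, fun h =>
          ⟨h, Finset.mem_union_left _ (Finset.mem_image_of_mem _ hx)⟩⟩
      rw [hfib]
      tauto
    rw [Finset.filter_congr hpred]
    have hsplit := split w z _ _ hsd (fun _ => 0) (fun _ => True)
      (fun F₂ => (G.neighborFinset i).filter (fun x => s(x, i) ∈ F₂) = T)
    refine Eq.trans ?_ (Eq.trans hsplit ?_)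
    · exact sum_filter_congr' (fun F _ => Iff.rfl) _
    · refine congrArg₂ (· * ·) ?_ ?_
      · rw [Zq]
        exact sum_filter_congr' (fun F _ => by tauto) _
      · exact sum_filter_congr' (fun F _ => Iff.rfl) _
  -- evaluate the two K-sums
  have hfibT : ∑ F ∈ ((G.neighborFinset i).image (fun x => s(x, i)) ∪
        (G.neighborFinset i).sup (fun x => Esub G x i)).powerset.filter
        (fun F => adm w (fun _ => 0) F ∧
          (G.neighborFinset i).filter (fun x => s(x, i) ∈ F) = T), z ^ F.card
      = if T.card ≤ w i then
          z ^ T.card * ((∏ x ∈ T, Z1 G w z x i) *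
            ∏ x ∈ (G.neighborFinset i) \ T, Z0 G w z x i)
        else 0 := by
    have hf := fiberFact w z i _ hiJ _ hPi hPy hPd (fun _ => 0) (fun _ => Nat.zero_le _)
      (fun x _ => hw x) T hT
    refine Eq.trans ?_ (Eq.trans hf ?_)
    · exact sum_filter_congr' (fun F _ => Iff.rfl) _
    · simp only [Z1, Z0, Nat.zero_add, Nat.add_zero, Finset.filter_congr_decidable]
  have hKsum : Zq w z ((G.neighborFinset i).image (fun x => s(x, i)) ∪
        (G.neighborFinset i).sup (fun x => Esub G x i)) (fun _ => 0)
      = ∑ S ∈ (G.neighborFinset i).powerset.filter (fun S => S.card ≤ w i),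
          z ^ S.card * ((∏ x ∈ S, Z1 G w z x i) *
            ∏ x ∈ (G.neighborFinset i) \ S, Z0 G w z x i) := by
    have hf := starFact w z i _ hiJ _ hPi hPy hPd (fun _ => 0) (fun _ => Nat.zero_le _)
      (fun x _ => hw x)
    refine Eq.trans hf ?_
    simp only [Z1, Z0, Nat.zero_add, Nat.add_zero, Finset.filter_congr_decidable]
  have hRpos : 0 < Zq w z (G.edgeFinset \ ((G.neighborFinset i).image (fun x => s(x, i)) ∪
        (G.neighborFinset i).sup (fun x => Esub G x i))) (fun _ => 0) :=
    Zq_pos hz _ (fun _ => Nat.zero_le _)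
  have hCpos : 0 < ∏ x ∈ G.neighborFinset i, (Z0 G w z x i + z * Z1 G w z x i) :=
    Finset.prod_pos (fun x _ => add_pos (Z0_pos hz x i)
      (mul_pos hz (Z1_pos hz hw x i)))
  -- per-subset identity
  have perS : ∀ S ⊆ G.neighborFinset i,
      (if S.card ≤ w i then
        (∏ x ∈ S, Yf G w z x i / (1 + Yf G w z x i)) *
          ∏ x ∈ (G.neighborFinset i) \ S, 1 / (1 + Yf G w z x i)
      else 0)
      = (if S.card ≤ w i then
          z ^ S.card * ((∏ x ∈ S, Z1 G w z x i) *
            ∏ x ∈ (G.neighborFinset i) \ S, Z0 G w z x i)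
        else 0) / ∏ x ∈ G.neighborFinset i, (Z0 G w z x i + z * Z1 G w z x i) := by
    intro S hS
    by_cases hc : S.card ≤ w i
    · rw [if_pos hc, if_pos hc]
      have hx1 : ∀ x ∈ S, Yf G w z x i / (1 + Yf G w z x i)
          = z * Z1 G w z x i / (Z0 G w z x i + z * Z1 G w z x i) := by
        intro x hx
        have hadj := hJ x (hS hx)
        have h0 := Z0_pos (G := G) (w := w) hz x i
        rw [Yf, if_pos hadj, one_add_div (ne_of_gt h0), div_div_div_cancel_right₀]
        exact ne_of_gt h0
      have hx2 : ∀ x ∈ (G.neighborFinset i) \ S, 1 / (1 + Yf G w z x i)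
          = Z0 G w z x i / (Z0 G w z x i + z * Z1 G w z x i) := by
        intro x hx
        have hadj := hJ x ((Finset.mem_sdiff.mp hx).1)
        have h0 := Z0_pos (G := G) (w := w) hz x i
        rw [Yf, if_pos hadj, one_add_div (ne_of_gt h0), one_div_div]
      rw [Finset.prod_congr rfl hx1, Finset.prod_congr rfl hx2,
        Finset.prod_div_distrib, Finset.prod_div_distrib, div_mul_div_comm,
        mul_comm (∏ x ∈ S, (Z0 G w z x i + z * Z1 G w z x i))
          (∏ x ∈ (G.neighborFinset i) \ S, (Z0 G w z x i + z * Z1 G w z x i)),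
        Finset.prod_sdiff hS, Finset.prod_mul_distrib, Finset.prod_const, mul_assoc]
    · rw [if_neg hc, if_neg hc, zero_div]
  -- assemble
  rw [hnum, hden, hfibT, hKsum, mul_div_mul_left _ _ (ne_of_gt hRpos)]
  have hdenR : ∑ S ∈ (G.neighborFinset i).powerset.filter (fun S => S.card ≤ w i),
        (∏ x ∈ S, Yf G w z x i / (1 + Yf G w z x i)) *
          ∏ x ∈ (G.neighborFinset i) \ S, 1 / (1 + Yf G w z x i)
      = (∑ S ∈ (G.neighborFinset i).powerset.filter (fun S => S.card ≤ w i),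
          z ^ S.card * ((∏ x ∈ S, Z1 G w z x i) *
            ∏ x ∈ (G.neighborFinset i) \ S, Z0 G w z x i)) /
        ∏ x ∈ G.neighborFinset i, (Z0 G w z x i + z * Z1 G w z x i) := by
    rw [Finset.sum_div]
    apply Finset.sum_congr rfl
    intro S hS
    rw [Finset.mem_filter, Finset.mem_powerset] at hS
    have h := perS S hS.1
    rw [if_pos hS.2, if_pos hS.2] at h
    exact h
  rw [perS T hT, hdenR, div_div_div_cancel_right₀]
  exact ne_of_gt hCpos

end Assemble

end BPaux

set_option maxHeartbeats 2000000

/-- On a finite acyclic graph, for every `z > 0` the fixed-point equation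
`Y = z·R_G(Y)` has a unique nonnegative solution on oriented edges; moreover, for every
vertex `i`, the joint law under the Gibbs measure `μ_G^z` of the indicators of the edges
incident to `i` equals the law of independent Bernoulli variables `β_{x→i}` with
`P(β_{x→i} = 1) = Y_{x→i}(z)/(1+Y_{x→i}(z))`, conditioned on `Σ_x β_{x→i} ≤ w i`. -/
theorem statement_10 (G : SimpleGraph V) [DecidableRel G.Adj] (hG : G.IsAcyclic)
    (w : V → ℕ) (hw : ∀ v, 1 ≤ w v) (z : ℝ) (hz : 0 < z) :
    ∃ Y : V → V → ℝ,
      (∀ i j, G.Adj i j → 0 ≤ Y i j ∧ Y i j = z * RG G w Y i j) ∧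
      (∀ Y' : V → V → ℝ,
        (∀ i j, G.Adj i j → 0 ≤ Y' i j ∧ Y' i j = z * RG G w Y' i j) →
        ∀ i j, G.Adj i j → Y' i j = Y i j) ∧
      ∀ i : V, ∀ T ∈ (G.neighborFinset i).powerset,
        (∑ F ∈ (admFinset G w).filter
            (fun F => (G.neighborFinset i).filter (fun x => s(x, i) ∈ F) = T),
          z ^ F.card) / (∑ F ∈ admFinset G w, z ^ F.card)
        =
        (if T.card ≤ w i then
            (∏ x ∈ T, Y x i / (1 + Y x i)) *
              ∏ x ∈ (G.neighborFinset i) \ T, 1 / (1 + Y x i)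
          else 0) /
        (∑ S ∈ (G.neighborFinset i).powerset.filter (fun S => S.card ≤ w i),
          (∏ x ∈ S, Y x i / (1 + Y x i)) *
            ∏ x ∈ (G.neighborFinset i) \ S, 1 / (1 + Y x i)) := by
  refine ⟨BPaux.Yf G w z,
    fun i j hij => ⟨BPaux.Yf_nonneg hz hw i j, BPaux.Y_fix hG hw hz hij⟩,
    fun Y' hY' i j hij => BPaux.Y_unique hG hw hz Y' hY' i j hij, ?_⟩
  intro i T hT
  exact BPaux.marginal hG hw hz i T (Finset.mem_powerset.mp hT)
end

section
/- Let G = (V,E) be a finite acyclic simple graph with degree constraints w = (w_v)_{v∈V}. Then there is a unique vector I ∈ {0,1}^{oriented edges of G} satisfying I = P_G(I), and 2·M(G) = Σ_{v∈V} ( w_v · 1( Σ_{e∈∂v} I_e ≥ w_v + 1 ) + min( w_v, Σ_{e∈∂v} I_e ) ), where ∂v is the set of oriented edges pointing to v. -/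
open scoped Classical

variable {V : Type*} [Fintype V] [DecidableEq V]

/-- `M(G)`: maximum size of an admissible spanning subgraph. -/
noncomputable def MG (G : SimpleGraph V) [DecidableRel G.Adj] (w : V → ℕ) : ℕ :=
  (admFinset G w).sup Finset.card

/-- The operator `P_G` on `{0,1}`-messages: the `(i→j)`-entry of `P_G(I)` is `1` iff
`Σ_{f ∈ ∂i, f ≠ (j→i)} I_f < w i`. Here `I x i` is the message on the oriented edge
`x → i`. -/
def PGop (G : SimpleGraph V) [DecidableRel G.Adj] (w : V → ℕ)
    (I : V → V → Bool) : V → V → Bool := fun i j =>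
  decide ((((G.neighborFinset i).erase j).filter fun x => I x i = true).card < w i)

section Auxiliary

open SimpleGraph Finset

lemma exists_leaf' (G : SimpleGraph V) (hG : G.IsAcyclic)
    {a b : V} (hab : G.Adj a b) :
    ∃ u v, G.Adj u v ∧ ∀ x, G.Adj u x → x = v := by
  have hN : 0 < Fintype.card V := Fintype.card_pos_iff.2 ⟨a⟩
  set P : ℕ → Prop := fun n => ∃ (x y : V) (p : G.Walk x y), p.IsPath ∧ p.length = n with hPdef
  have hP1 : P 1 := ⟨a, b, Walk.cons hab Walk.nil, by simp [hab.ne], by simp⟩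
  have hPL : P (Nat.findGreatest P (Fintype.card V)) := Nat.findGreatest_spec hN hP1
  have hmax : ∀ (x y : V) (q : G.Walk x y), q.IsPath →
      q.length ≤ Nat.findGreatest P (Fintype.card V) := by
    intro x y q hq
    by_contra hlt
    push_neg at hlt
    exact Nat.findGreatest_is_greatest hlt hq.length_lt.le ⟨x, y, q, hq, rfl⟩
  obtain ⟨x, y, p, hp, hplen⟩ := hPL
  have hL1 : 1 ≤ Nat.findGreatest P (Fintype.card V) := Nat.le_findGreatest hN hP1
  have hrp : p.reverse.IsPath := hp.reverse
  have hrlen : p.reverse.length = Nat.findGreatest P (Fintype.card V) := by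
    simpa using hplen
  cases hr : p.reverse with
  | nil => rw [hr] at hrlen; simp at hrlen; omega
  | @cons _ z _ h' r' =>
    rw [hr] at hrp hrlen
    rw [Walk.cons_isPath_iff] at hrp
    obtain ⟨hr'path, hynotin⟩ := hrp
    refine ⟨y, z, h', ?_⟩
    intro xx hxx
    have hxxy : xx ≠ y := hxx.ne'
    have hmem : xx ∈ r'.support := by
      by_contra hns
      have hext : (Walk.cons hxx.symm (Walk.cons h' r')).IsPath := by
        rw [Walk.cons_isPath_iff]
        refine ⟨by rw [Walk.cons_isPath_iff]; exact ⟨hr'path, hynotin⟩, ?_⟩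
        rw [Walk.support_cons]
        simp only [List.mem_cons]
        push_neg
        exact ⟨hxxy, hns⟩
      have := hmax _ _ _ hext
      simp only [Walk.length_cons] at this hrlen
      omega
    by_contra hne
    have ht : (r'.takeUntil xx hmem).IsPath := hr'path.takeUntil hmem
    have hcyc : (Walk.cons hxx.symm (Walk.cons h' (r'.takeUntil xx hmem))).IsCycle := by
      rw [Walk.cons_isCycle_iff]
      constructor
      · rw [Walk.cons_isPath_iff]
        exact ⟨ht, fun hy => hynotin (Walk.support_takeUntil_subset _ _ hy)⟩
      · rw [Walk.edges_cons]
        rw [List.mem_cons]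
        push_neg
        constructor
        · intro h1
          rcases Sym2.eq_iff.mp h1 with ⟨rfl, rfl⟩ | ⟨h3, _⟩
          · exact hxxy rfl
          · exact hne h3
        · intro h2
          exact hynotin (Walk.support_takeUntil_subset _ _
            (Walk.snd_mem_support_of_mem_edges _ h2))
    exact hG _ hcyc

lemma mem_admFinset {G : SimpleGraph V} [DecidableRel G.Adj] {w : V → ℕ} {F : Finset (Sym2 V)} :
    F ∈ admFinset G w ↔ F ⊆ G.edgeFinset ∧ ∀ v : V, (F.filter fun e => v ∈ e).card ≤ w v := by
  simp [admFinset]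

lemma le_MG {G : SimpleGraph V} [DecidableRel G.Adj] {w : V → ℕ} {F : Finset (Sym2 V)}
    (h : F ∈ admFinset G w) : F.card ≤ MG G w := Finset.le_sup h

lemma MG_le {G : SimpleGraph V} [DecidableRel G.Adj] {w : V → ℕ} {m : ℕ}
    (h : ∀ F ∈ admFinset G w, F.card ≤ m) : MG G w ≤ m := Finset.sup_le h

lemma MG_leaf (G G' : SimpleGraph V) [DecidableRel G.Adj] [DecidableRel G'.Adj]
    (u v : V) (w : V → ℕ) (huv : G.Adj u v)
    (hE : G'.edgeFinset = G.edgeFinset.erase s(u, v))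
    (hleafE : ∀ e ∈ G.edgeFinset, u ∈ e → e = s(u, v))
    (hu : 0 < w u) (hv : 0 < w v) :
    MG G w = MG G' (Function.update w v (w v - 1)) + 1 := by
  set w' := Function.update w v (w v - 1) with hw'
  have hw'v : w' v = w v - 1 := Function.update_self _ _ _
  have hw'i : ∀ i, i ≠ v → w' i = w i := fun i hi => Function.update_of_ne hi _ _
  apply le_antisymm
  · apply MG_le
    intro F hF
    rw [mem_admFinset] at hF
    obtain ⟨hF1, hF2⟩ := hF
    by_cases he : s(u, v) ∈ F
    · have hmem : F.erase s(u, v) ∈ admFinset G' w' := by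
        rw [mem_admFinset]
        constructor
        · intro f hf
          rw [Finset.mem_erase] at hf
          rw [hE, Finset.mem_erase]
          exact ⟨hf.1, hF1 hf.2⟩
        · intro i
          rw [Finset.filter_erase]
          by_cases hiv : i = v
          · have hin : s(u, v) ∈ F.filter fun e => i ∈ e := by
              rw [Finset.mem_filter]
              exact ⟨he, by rw [hiv]; simp⟩
            rw [Finset.card_erase_of_mem hin, hiv, hw'v]
            exact Nat.sub_le_sub_right (hF2 _) 1
          · rw [hw'i i hiv]
            exact le_trans (Finset.card_le_card (Finset.erase_subset _ _)) (hF2 i)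
      have := le_MG hmem
      have hc : F.card = (F.erase s(u, v)).card + 1 := by
        rw [Finset.card_erase_of_mem he]
        have : 0 < F.card := Finset.card_pos.2 ⟨_, he⟩
        omega
      omega
    · by_cases hc : (F.filter fun e => v ∈ e).card ≤ w v - 1
      · have hmem : F ∈ admFinset G' w' := by
          rw [mem_admFinset]
          constructor
          · intro f hf
            rw [hE, Finset.mem_erase]
            exact ⟨fun h => he (h ▸ hf), hF1 hf⟩
          · intro i
            by_cases hiv : i = v
            · rw [hiv, hw'v]; exact hc
            · rw [hw'i i hiv]; exact hF2 i
        exact le_trans (le_MG hmem) (Nat.le_succ _)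
      · push_neg at hc
        have hne : (F.filter fun e => v ∈ e).Nonempty := by
          rw [← Finset.card_pos]; omega
        obtain ⟨e', he'⟩ := hne
        rw [Finset.mem_filter] at he'
        have hmem : F.erase e' ∈ admFinset G' w' := by
          rw [mem_admFinset]
          constructor
          · intro f hf
            rw [Finset.mem_erase] at hf
            rw [hE, Finset.mem_erase]
            exact ⟨fun h => he (h ▸ hf.2), hF1 hf.2⟩
          · intro i
            rw [Finset.filter_erase]
            by_cases hiv : i = v
            · have hin : e' ∈ F.filter fun e => i ∈ e := Finset.mem_filter.2 (hiv ▸ he')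
              rw [Finset.card_erase_of_mem hin, hiv, hw'v]
              exact Nat.sub_le_sub_right (hF2 _) 1
            · rw [hw'i i hiv]
              exact le_trans (Finset.card_le_card (Finset.erase_subset _ _)) (hF2 i)
        have := le_MG hmem
        have hc2 : F.card = (F.erase e').card + 1 := by
          rw [Finset.card_erase_of_mem he'.1]
          have : 0 < F.card := Finset.card_pos.2 ⟨_, he'.1⟩
          omega
        omega
  · have hne : (admFinset G' w').Nonempty := by
      refine ⟨∅, ?_⟩
      rw [mem_admFinset]
      exact ⟨Finset.empty_subset _, fun i => by simp⟩
    obtain ⟨F', hF', hsup⟩ := Finset.exists_mem_eq_sup _ hne Finset.card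
    rw [mem_admFinset] at hF'
    obtain ⟨hF'1, hF'2⟩ := hF'
    have hnotin : s(u, v) ∉ F' := by
      intro h
      have := hF'1 h
      rw [hE, Finset.mem_erase] at this
      exact this.1 rfl
    have hFu : ∀ f ∈ F', u ∉ f := by
      intro f hf hus
      have hfe := hF'1 hf
      rw [hE, Finset.mem_erase] at hfe
      exact hfe.1 (hleafE f hfe.2 hus)
    have hmem : insert s(u, v) F' ∈ admFinset G w := by
      rw [mem_admFinset]
      constructor
      · intro f hf
        rw [Finset.mem_insert] at hf
        rcases hf with rfl | hf
        · rw [mem_edgeFinset]; exact huv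
        · have := hF'1 hf; rw [hE] at this; exact Finset.mem_of_mem_erase this
      · intro i
        rw [Finset.filter_insert]
        by_cases hie : i ∈ s(u, v)
        · rw [if_pos hie, Finset.card_insert_of_notMem
            (fun h => hnotin (Finset.mem_of_mem_filter _ h))]
          rcases Sym2.mem_iff.mp hie with rfl | rfl
          · have : (F'.filter fun e => i ∈ e) = ∅ := by
              rw [Finset.filter_eq_empty_iff]
              intro x hx hix
              exact hFu x hx hix
            rw [this]; simpa [Nat.one_le_iff_ne_zero, Nat.pos_iff_ne_zero] using hu
          · have := hF'2 i
            rw [hw'v] at this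
            omega
        · rw [if_neg hie]
          by_cases hiv : i = v
          · exact absurd (hiv ▸ hie) (by simp)
          · have := hF'2 i; rwa [hw'i i hiv] at this
    have := le_MG hmem
    rw [Finset.card_insert_of_notMem hnotin] at this
    have hMG : MG G' w' = F'.card := hsup
    omega

lemma MG_eq (G G' : SimpleGraph V) [DecidableRel G.Adj] [DecidableRel G'.Adj]
    (u v : V) (w : V → ℕ)
    (hE : G'.edgeFinset = G.edgeFinset.erase s(u, v))
    (h0 : w u = 0 ∨ w v = 0) :
    MG G w = MG G' w := by
  apply le_antisymm
  · apply MG_le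
    intro F hF
    rw [mem_admFinset] at hF
    obtain ⟨hF1, hF2⟩ := hF
    have hnotin : s(u, v) ∉ F := by
      intro h
      rcases h0 with h0 | h0
      · have hm : s(u, v) ∈ F.filter fun e => u ∈ e := Finset.mem_filter.2 ⟨h, by simp⟩
        have hcard : 0 < (F.filter fun e => u ∈ e).card := Finset.card_pos.2 ⟨_, hm⟩
        have := hF2 u; omega
      · have hm : s(u, v) ∈ F.filter fun e => v ∈ e := Finset.mem_filter.2 ⟨h, by simp⟩
        have hcard : 0 < (F.filter fun e => v ∈ e).card := Finset.card_pos.2 ⟨_, hm⟩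
        have := hF2 v; omega
    apply le_MG (w := w)
    rw [mem_admFinset]
    refine ⟨fun f hf => ?_, hF2⟩
    rw [hE, Finset.mem_erase]
    exact ⟨fun h => hnotin (h ▸ hf), hF1 hf⟩
  · apply MG_le
    intro F hF
    rw [mem_admFinset] at hF
    apply le_MG (w := w)
    rw [mem_admFinset]
    refine ⟨fun f hf => ?_, hF.2⟩
    have := hF.1 hf
    rw [hE] at this
    exact Finset.mem_of_mem_erase this

def goalProp (G : SimpleGraph V) [DecidableRel G.Adj] (w : V → ℕ) : Prop :=
  ∃ I : V → V → Bool,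
      (∀ i j, G.Adj i j → I i j = PGop G w I i j) ∧
      (∀ I' : V → V → Bool,
        (∀ i j, G.Adj i j → I' i j = PGop G w I' i j) →
        ∀ i j, G.Adj i j → I' i j = I i j) ∧
      2 * MG G w = ∑ v : V,
        ((if w v + 1 ≤ ((G.neighborFinset v).filter fun x => I x v = true).card
            then w v else 0)
          + min (w v) ((G.neighborFinset v).filter fun x => I x v = true).card)

lemma key : ∀ (n : ℕ) (G : SimpleGraph V) (inst : DecidableRel G.Adj),
    G.IsAcyclic → ∀ w : V → ℕ, G.edgeFinset.card = n → goalProp G w := by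
  intro n
  induction n using Nat.strong_induction_on with
  | _ n IH =>
  intro G inst hG w hn
  by_cases hn0 : G.edgeFinset.card = 0
  · -- base case : no edges
    have hbot : ∀ i j : V, ¬ G.Adj i j := by
      intro i j h
      have hm : s(i, j) ∈ G.edgeFinset := mem_edgeFinset.2 h
      rw [Finset.card_eq_zero] at hn0
      rw [hn0] at hm
      exact absurd hm (Finset.notMem_empty _)
    refine ⟨fun _ _ => false, fun i j h => absurd h (hbot i j),
      fun I' _ i j h => absurd h (hbot i j), ?_⟩
    have hMG0 : MG G w = 0 := by
      have hle : MG G w ≤ 0 := by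
        apply MG_le
        intro F hF
        rw [mem_admFinset] at hF
        have : F = ∅ := by
          rw [← Finset.subset_empty, ← Finset.card_eq_zero.1 hn0]
          exact hF.1
        simp [this]
      omega
    have hnbr : ∀ i : V, G.neighborFinset i = ∅ := by
      intro i; ext x
      simp [SimpleGraph.mem_neighborFinset, hbot]
    have hsum0 : (∑ v : V,
        ((if w v + 1 ≤ ((G.neighborFinset v).filter fun x => (fun (_ _ : V) => false) x v = true).card
            then w v else 0)
          + min (w v) ((G.neighborFinset v).filter fun x => (fun (_ _ : V) => false) x v = true).card)) = 0 := by
      apply Finset.sum_eq_zero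
      intro i _
      rw [hnbr i]
      simp
    rw [hMG0, hsum0]
  · -- inductive step
    have hEne : ∃ a b : V, G.Adj a b := by
      obtain ⟨e, he⟩ := Finset.card_pos.1 (Nat.pos_of_ne_zero hn0)
      revert he
      exact Sym2.ind (fun a b he => ⟨a, b, mem_edgeFinset.1 he⟩) e
    obtain ⟨a0, b0, hab⟩ := hEne
    obtain ⟨u, v, huv, hleaf⟩ := exists_leaf' G hG hab
    have hleafE : ∀ e ∈ G.edgeFinset, u ∈ e → e = s(u, v) := by
      intro e
      induction e using Sym2.ind with
      | _ a b =>
        intro he hue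
        rw [mem_edgeFinset, SimpleGraph.mem_edgeSet] at he
        rcases Sym2.mem_iff.mp hue with rfl | rfl
        · rw [hleaf b he]
        · have : a = v := hleaf a he.symm
          rw [this, Sym2.eq_swap]
    set G' : SimpleGraph V := G.deleteEdges {s(u, v)} with hG'def
    haveI instG' : DecidableRel G'.Adj := Classical.decRel _
    have hG'adj : ∀ i j : V, G'.Adj i j ↔ G.Adj i j ∧ s(i, j) ≠ s(u, v) := by
      intro i j
      rw [hG'def]
      simp [SimpleGraph.deleteEdges_adj]
    have hle : G' ≤ G := by rw [hG'def]; exact SimpleGraph.deleteEdges_le _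
    have hG'ac : G'.IsAcyclic := fun a c hc => hG (c.mapLe hle) (hc.mapLe hle)
    have hG'E : G'.edgeFinset = G.edgeFinset.erase s(u, v) := by
      ext e
      induction e using Sym2.ind with
      | _ a b =>
        rw [mem_edgeFinset, Finset.mem_erase, mem_edgeFinset,
          SimpleGraph.mem_edgeSet, SimpleGraph.mem_edgeSet, hG'adj]
        tauto
    have hcard' : G'.edgeFinset.card < n := by
      rw [hG'E, Finset.card_erase_of_mem (mem_edgeFinset.2 huv)]
      omega
    have hadjG' : ∀ a b : V, G.Adj a b → a ≠ u → ¬(a = v ∧ b = u) → G'.Adj a b := by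
      intro a b hab' hau hnav
      rw [hG'adj]
      refine ⟨hab', fun hc => ?_⟩
      rcases Sym2.eq_iff.mp hc with ⟨h1, _⟩ | ⟨h1, h2⟩
      · exact hau h1
      · exact hnav ⟨h1, h2⟩
    -- neighbor finset facts
    have hnu : G.neighborFinset u = {v} := by
      ext x
      rw [SimpleGraph.mem_neighborFinset, Finset.mem_singleton]
      exact ⟨fun h => hleaf x h, fun h => h ▸ huv⟩
    have hnu' : G'.neighborFinset u = ∅ := by
      ext x
      simp only [SimpleGraph.mem_neighborFinset, Finset.notMem_empty, iff_false]
      rw [hG'adj]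
      rintro ⟨h1, h2⟩
      exact h2 (by rw [hleaf x h1])
    have hnv' : G'.neighborFinset v = (G.neighborFinset v).erase u := by
      ext x
      rw [SimpleGraph.mem_neighborFinset, Finset.mem_erase,
        SimpleGraph.mem_neighborFinset, hG'adj]
      constructor
      · rintro ⟨h1, h2⟩
        refine ⟨fun hxu => h2 ?_, h1⟩
        rw [hxu, Sym2.eq_swap]
      · rintro ⟨hxu, h1⟩
        refine ⟨h1, fun hc => ?_⟩
        rcases Sym2.eq_iff.mp hc with ⟨h3, _⟩ | ⟨_, h4⟩
        · exact huv.ne' h3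
        · exact hxu h4
    have hni : ∀ i, i ≠ u → i ≠ v → G'.neighborFinset i = G.neighborFinset i := by
      intro i hiu hiv
      ext x
      rw [SimpleGraph.mem_neighborFinset, SimpleGraph.mem_neighborFinset, hG'adj]
      constructor
      · exact fun h => h.1
      · intro h
        refine ⟨h, fun hc => ?_⟩
        rcases Sym2.eq_iff.mp hc with ⟨h1, _⟩ | ⟨h1, _⟩
        · exact hiu h1
        · exact hiv h1
    have humem : u ∈ G.neighborFinset v := by
      rw [SimpleGraph.mem_neighborFinset]; exact huv.symm
    have hunotinfull : u ∉ G'.neighborFinset v := by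
      rw [hnv']
      simp
    have hunotin : ∀ x : V, u ∉ (G'.neighborFinset v).erase x := by
      intro x h
      exact hunotinfull (Finset.mem_of_mem_erase h)
    have hins : ∀ x : V, x ≠ u →
        (G.neighborFinset v).erase x = insert u ((G'.neighborFinset v).erase x) := by
      intro x hxu
      have hm : u ∈ (G.neighborFinset v).erase x := Finset.mem_erase.2 ⟨hxu.symm, humem⟩
      rw [hnv', (by ext y; simp only [Finset.mem_erase]; tauto :
        ((G.neighborFinset v).erase u).erase x = ((G.neighborFinset v).erase x).erase u), Finset.insert_erase hm]
    have hinsfull : G.neighborFinset v = insert u (G'.neighborFinset v) := by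
      rw [hnv', Finset.insert_erase humem]
    have hcardins : ∀ (s : Finset V) (p : V → Bool), u ∉ s →
        ((insert u s).filter fun y => p y = true).card
          = (s.filter fun y => p y = true).card + (if p u = true then 1 else 0) := by
      intro s p hus
      rw [Finset.filter_insert]
      split_ifs with h
      · rw [Finset.card_insert_of_notMem (fun hc => hus (Finset.mem_of_mem_filter _ hc))]
      · omega
    -- w'
    set w' : V → ℕ := Function.update w v (if 0 < w u then w v - 1 else w v) with hw'def
    have hw'v : w' v = if 0 < w u then w v - 1 else w v := Function.update_self _ _ _
    have hw'i : ∀ i, i ≠ v → w' i = w i := fun i hi => Function.update_of_ne hi _ _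
    have hcond : ∀ c : ℕ, (c + (if 0 < w u then 1 else 0) < w v) ↔ c < w' v := by
      intro c
      rw [hw'v]
      split_ifs <;> omega
    -- apply IH
    obtain ⟨J, hJfix, hJuniq, hJsum⟩ := IH G'.edgeFinset.card hcard' G' instG' hG'ac w' rfl
    set cnt : ℕ := ((G'.neighborFinset v).filter fun x => J x v = true).card with hcnt
    set I : V → V → Bool := fun i j =>
      if i = u then decide (0 < w u)
      else if i = v ∧ j = u then decide (cnt < w v) else J i j with hIdef
    have hIu : ∀ j, I u j = decide (0 < w u) := fun j => by simp [hIdef]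
    have hIvu : I v u = decide (cnt < w v) := by simp [hIdef, huv.ne']
    have hIother : ∀ i j, i ≠ u → ¬(i = v ∧ j = u) → I i j = J i j := by
      intro i j h1 h2
      simp only [hIdef]
      rw [if_neg h1, if_neg h2]
    have hIJ : ∀ i x : V, G'.Adj i x → I x i = J x i := by
      intro i x h
      rw [hG'adj] at h
      apply hIother
      · intro hxu
        have hiv : i = v := hleaf i (hxu ▸ h.1).symm
        exact h.2 (by rw [hiv, hxu, Sym2.eq_swap])
      · rintro ⟨hxv, hiu⟩
        exact h.2 (by rw [hxv, hiu])
    have hfcongr : ∀ (i : V) (s : Finset V), (∀ x ∈ s, G'.Adj i x) →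
        (s.filter fun x => I x i = true) = (s.filter fun x => J x i = true) := by
      intro i s hs
      apply Finset.filter_congr
      intro x hx
      rw [hIJ i x (hs x hx)]
    have herase_u : (G.neighborFinset u).erase v = ∅ := by
      rw [hnu]; exact Finset.erase_singleton v
    -- counting at v, for an arbitrary message function with the forced u→v value
    have hcountK : ∀ (K : V → V → Bool), K u v = decide (0 < w u) → ∀ x : V, x ≠ u →
        (((G.neighborFinset v).erase x).filter fun y => K y v = true).card
          = (((G'.neighborFinset v).erase x).filter fun y => K y v = true).card
            + (if 0 < w u then 1 else 0) := by
      intro K hK x hxu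
      rw [hins x hxu, hcardins _ _ (hunotin x), hK]
      simp
    have hcountKfull : ∀ (K : V → V → Bool), K u v = decide (0 < w u) →
        ((G.neighborFinset v).filter fun y => K y v = true).card
          = ((G'.neighborFinset v).filter fun y => K y v = true).card
            + (if 0 < w u then 1 else 0) := by
      intro K hK
      rw [hinsfull, hcardins _ _ hunotinfull, hK]
      simp
    have hIJv : ∀ x : V, (((G'.neighborFinset v).erase x).filter fun y => I y v = true)
        = (((G'.neighborFinset v).erase x).filter fun y => J y v = true) := by
      intro x
      exact hfcongr v _ (fun y hy =>
        (SimpleGraph.mem_neighborFinset _ _ _).1 (Finset.mem_of_mem_erase hy))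
    have hIJvfull : ((G'.neighborFinset v).filter fun y => I y v = true)
        = ((G'.neighborFinset v).filter fun y => J y v = true) :=
      hfcongr v _ (fun y hy => (SimpleGraph.mem_neighborFinset _ _ _).1 hy)
    refine ⟨I, ?_, ?_, ?_⟩
    · -- fixed point
      intro i j hij
      by_cases hiu : i = u
      · subst hiu
        have hjv : j = v := hleaf j hij
        subst hjv
        rw [hIu]
        simp only [PGop]
        rw [herase_u]
        simp
      · by_cases hiv : i = v
        · rw [hiv] at hij ⊢
          by_cases hju : j = u
          · rw [hju] at hij ⊢
            rw [hIvu]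
            simp only [PGop]
            rw [decide_eq_decide, ← hnv', hIJvfull, ← hcnt]
          · have hadj' : G'.Adj v j := hadjG' v j hij huv.ne' (fun hc => hju hc.2)
            have hIvj : I v j = J v j := hIother v j huv.ne' (fun hc => hju hc.2)
            rw [hIvj, hJfix v j hadj']
            simp only [PGop]
            rw [decide_eq_decide]
            rw [hcountK I (hIu v) j hju, hIJv j]
            exact (hcond _).symm
        · have hadj' : G'.Adj i j := hadjG' i j hij hiu (fun hc => hiv hc.1)
          have hIij : I i j = J i j := hIother i j hiu (fun hc => hiv hc.1)
          rw [hIij, hJfix i j hadj']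
          simp only [PGop]
          rw [decide_eq_decide, hw'i i hiv]
          have hset : ((G.neighborFinset i).erase j).filter (fun x => I x i = true)
              = ((G'.neighborFinset i).erase j).filter (fun x => J x i = true) := by
            rw [← hni i hiu hiv]
            exact hfcongr i _ (fun x hx =>
              (SimpleGraph.mem_neighborFinset _ _ _).1 (Finset.mem_of_mem_erase hx))
          rw [hset]
    · -- uniqueness
      intro I'' hI'' i j hij
      have h1 : I'' u v = decide (0 < w u) := by
        rw [hI'' u v huv]
        simp only [PGop]
        rw [herase_u]
        simp
      have h2 : ∀ a b : V, G'.Adj a b → I'' a b = PGop G' w' I'' a b := by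
        intro a b hab'
        have habG : G.Adj a b := ((hG'adj a b).1 hab').1
        have hcne : s(a, b) ≠ s(u, v) := ((hG'adj a b).1 hab').2
        rw [hI'' a b habG]
        simp only [PGop]
        rw [decide_eq_decide]
        by_cases hav : a = v
        · subst hav
          have hbu : b ≠ u := fun hc => hcne (by rw [hc, Sym2.eq_swap])
          rw [hcountK I'' h1 b hbu]
          exact hcond _
        · have hau : a ≠ u := by
            intro hc
            subst hc
            exact hcne (by rw [hleaf b habG])
          rw [hni a hau hav, hw'i a hav]
      have h3 : ∀ a b : V, G'.Adj a b → I'' a b = J a b := hJuniq I'' h2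
      by_cases hiu : i = u
      · subst hiu
        have hjv : j = v := hleaf j hij
        subst hjv
        rw [h1, hIu]
      · by_cases hijvu : i = v ∧ j = u
        · obtain ⟨hiv2, hju2⟩ := hijvu
          rw [hiv2, hju2] at hij ⊢
          rw [hI'' _ _ hij, hIvu]
          simp only [PGop]
          rw [decide_eq_decide, ← hnv']
          have hff : ((G'.neighborFinset v).filter fun x => I'' x v = true)
              = ((G'.neighborFinset v).filter fun x => J x v = true) := by
            apply Finset.filter_congr
            intro x hx
            rw [h3 x v ((SimpleGraph.mem_neighborFinset _ _ _).1 hx).symm]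
          rw [hff, ← hcnt]
        · have hadj' : G'.Adj i j := hadjG' i j hij hiu hijvu
          rw [h3 i j hadj', hIother i j hiu hijvu]
    · -- the sum formula
      have hMGrel : MG G w = MG G' w' + (if 0 < w u ∧ 0 < w v then 1 else 0) := by
        by_cases hA : 0 < w u ∧ 0 < w v
        · rw [if_pos hA]
          have hwrw : w' = Function.update w v (w v - 1) := by
            rw [hw'def, if_pos hA.1]
          rw [hwrw]
          exact MG_leaf G G' u v w huv hG'E hleafE hA.1 hA.2
        · rw [if_neg hA]
          have hw'w : w' = w := by
            funext i
            by_cases hiv : i = v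
            · rw [hiv, hw'v]
              split_ifs with h
              · have : ¬(0 < w v) := fun hv => hA ⟨h, hv⟩
                omega
              · rfl
            · exact hw'i i hiv
          rw [hw'w]
          apply MG_eq G G' u v w hG'E
          rcases Nat.eq_zero_or_pos (w u) with h | h
          · exact Or.inl h
          · right
            by_contra h2
            exact hA ⟨h, Nat.pos_of_ne_zero h2⟩
      rw [hMGrel, Nat.mul_add, hJsum]
      have hv_mem : v ∈ Finset.univ.erase u := Finset.mem_erase.2 ⟨huv.ne', Finset.mem_univ v⟩
      have hsplit : ∀ f : V → ℕ,
          ∑ i, f i = f u + f v + ∑ i ∈ (Finset.univ.erase u).erase v, f i := by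
        intro f
        rw [← Finset.sum_erase_add Finset.univ f (Finset.mem_univ u),
          ← Finset.sum_erase_add (Finset.univ.erase u) f hv_mem]
        ring
      rw [hsplit, hsplit]
      have hterm : ∀ i ∈ (Finset.univ.erase u).erase v,
          ((if w' i + 1 ≤ ((G'.neighborFinset i).filter fun x => J x i = true).card
              then w' i else 0)
            + min (w' i) (((G'.neighborFinset i).filter fun x => J x i = true).card))
          = ((if w i + 1 ≤ ((G.neighborFinset i).filter fun x => I x i = true).card
              then w i else 0)
            + min (w i) (((G.neighborFinset i).filter fun x => I x i = true).card)) := by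
        intro i hi
        rw [Finset.mem_erase] at hi
        obtain ⟨hiv, hi2⟩ := hi
        rw [Finset.mem_erase] at hi2
        obtain ⟨hiu, _⟩ := hi2
        have hset : ((G.neighborFinset i).filter fun x => I x i = true)
            = ((G'.neighborFinset i).filter fun x => J x i = true) := by
          rw [← hni i hiu hiv]
          exact hfcongr i _ (fun x hx => (SimpleGraph.mem_neighborFinset _ _ _).1 hx)
        rw [hset, hw'i i hiv]
      rw [Finset.sum_congr rfl hterm]
      -- now only the u and v terms matter
      have hcu : ((G.neighborFinset u).filter fun x => I x u = true).card
          = if cnt < w v then 1 else 0 := by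
        rw [hnu, Finset.filter_singleton, hIvu]
        rcases Nat.lt_or_ge cnt (w v) with h | h
        · simp [h]
        · simp [Nat.not_lt.2 h]
      have hcu' : ((G'.neighborFinset u).filter fun x => J x u = true).card = 0 := by
        rw [hnu']
        simp
      have hcv : ((G.neighborFinset v).filter fun x => I x v = true).card
          = cnt + (if 0 < w u then 1 else 0) := by
        rw [hcountKfull I (hIu v), hIJvfull, hcnt]
      rw [hcu, hcu', hcv, hw'v, hw'i u huv.ne]
      split_ifs <;> omega

end Auxiliary

/-- On a finite acyclic graph there is a unique solution (on oriented edges) of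
`I = P_G(I)`, and `2·M(G) = Σ_v ( w_v·1(Σ_{e∈∂v} I_e ≥ w_v+1) + min(w_v, Σ_{e∈∂v} I_e) )`. -/
theorem statement_11 (G : SimpleGraph V) [DecidableRel G.Adj] (hG : G.IsAcyclic)
    (w : V → ℕ) :
    ∃ I : V → V → Bool,
      (∀ i j, G.Adj i j → I i j = PGop G w I i j) ∧
      (∀ I' : V → V → Bool,
        (∀ i j, G.Adj i j → I' i j = PGop G w I' i j) →
        ∀ i j, G.Adj i j → I' i j = I i j) ∧
      2 * MG G w = ∑ v : V,
        ((if w v + 1 ≤ ((G.neighborFinset v).filter fun x => I x v = true).card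
            then w v else 0)
          + min (w v) ((G.neighborFinset v).filter fun x => I x v = true).card) := by
  have h := key (V := V) G.edgeFinset.card G inferInstance hG w rfl
  unfold goalProp at h
  exact h
end

section
/- Let G = (V,E) be a finite simple graph with degree constraints w = (w_v)_{v∈V}. Then for every s > 1, M(G) ≤ s·P'_G(s)/P_G(s) + |E|·(log 2)/(log s). -/
open scoped Classical

variable {V : Type*} [Fintype V] [DecidableEq V]

/-- The partition function `P_G(z) = Σ_{F admissible} z^{|F|}`. -/
noncomputable def PGz (G : SimpleGraph V) [DecidableRel G.Adj] (w : V → ℕ)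
    (z : ℝ) : ℝ :=
  ∑ F ∈ admFinset G w, z ^ F.card

/-- For every `s > 1`, `M(G) ≤ s·P'_G(s)/P_G(s) + |E|·log 2/log s`. -/
theorem statement_15 (G : SimpleGraph V) [DecidableRel G.Adj] (w : V → ℕ)
    (s : ℝ) (hs : 1 < s) :
    (MG G w : ℝ) ≤ s * deriv (PGz G w) s / PGz G w s
      + G.edgeFinset.card * Real.log 2 / Real.log s := by
  have hs0 : (0:ℝ) < s := lt_trans one_pos hs
  have hlogs : 0 < Real.log s := Real.log_pos hs
  set A := admFinset G w with hA
  set M := MG G w with hM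
  set n := G.edgeFinset.card with hn
  set P := PGz G w s with hP
  have hempty : (∅ : Finset (Sym2 V)) ∈ A := by
    simp [hA, admFinset]
  have hAne : A.Nonempty := ⟨∅, hempty⟩
  have hcard : ∀ F ∈ A, F.card ≤ M := fun F hF => Finset.le_sup hF
  have hPsum : P = ∑ F ∈ A, s ^ F.card := rfl
  have hPpos : 0 < P := by
    rw [hPsum]; exact Finset.sum_pos (fun F _ => pow_pos hs0 _) hAne
  have hsM : s ^ M ≤ P := by
    obtain ⟨F0, hF0, hF0c⟩ := Finset.exists_mem_eq_sup A hAne Finset.card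
    rw [hPsum, hM, MG, ← hA, hF0c]
    exact Finset.single_le_sum (fun F _ => le_of_lt (pow_pos hs0 F.card)) hF0
  have hderiv : deriv (PGz G w) s = ∑ F ∈ A, (F.card : ℝ) * s ^ (F.card - 1) := by
    have heq : PGz G w = fun z => ∑ F ∈ A, z ^ F.card := by
      funext z; rfl
    have h : HasDerivAt (PGz G w) (∑ F ∈ A, (F.card : ℝ) * s ^ (F.card - 1)) s := by
      rw [heq]
      exact HasDerivAt.fun_sum (fun F _ => hasDerivAt_pow F.card s)
    exact h.deriv
  set Q := ∑ F ∈ A, (F.card : ℝ) * s ^ F.card with hQ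
  have hsQ : s * deriv (PGz G w) s = Q := by
    rw [hderiv, Finset.mul_sum, hQ]
    refine Finset.sum_congr rfl fun F _ => ?_
    rcases Nat.eq_zero_or_pos F.card with h | h
    · simp [h]
    · rw [mul_comm s, mul_assoc, ← pow_succ, Nat.sub_add_cancel h]
  have hApos : (0:ℝ) < A.card := by exact_mod_cast Finset.card_pos.mpr hAne
  have hAcard : (A.card : ℝ) ≤ 2 ^ n := by
    have hsub : A ⊆ G.edgeFinset.powerset := Finset.filter_subset _ _
    have h1 : A.card ≤ 2 ^ n := by
      have := Finset.card_le_card hsub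
      rwa [Finset.card_powerset] at this
    exact_mod_cast h1
  set c : ℝ := s ^ M * A.card / P with hc
  have hcpos : 0 < c := div_pos (mul_pos (pow_pos hs0 _) hApos) hPpos
  have htan : ∀ x : ℝ, 0 < x → Real.log x ≤ Real.log c + (x - c) / c := by
    intro x hx
    have h1 : Real.log (x / c) = Real.log x - Real.log c :=
      Real.log_div hx.ne' hcpos.ne'
    have h2 : Real.log (x / c) ≤ x / c - 1 :=
      Real.log_le_sub_one_of_pos (div_pos hx hcpos)
    have h3 : (x - c) / c = x / c - 1 := by field_simp
    rw [h3]; linarith [h1 ▸ h2]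
  have hmain : ∑ F ∈ A, s ^ F.card * Real.log (s ^ (M - F.card)) ≤ P * Real.log c := by
    have hstep : ∑ F ∈ A, s ^ F.card * Real.log (s ^ (M - F.card))
        ≤ ∑ F ∈ A, (s ^ F.card * Real.log c + s ^ F.card * s ^ (M - F.card) / c - s ^ F.card) := by
      refine Finset.sum_le_sum fun F hF => ?_
      have := mul_le_mul_of_nonneg_left (htan _ (pow_pos hs0 (M - F.card)))
        (le_of_lt (pow_pos hs0 F.card))
      calc s ^ F.card * Real.log (s ^ (M - F.card))
          ≤ s ^ F.card * (Real.log c + (s ^ (M - F.card) - c) / c) := this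
        _ = s ^ F.card * Real.log c + s ^ F.card * s ^ (M - F.card) / c - s ^ F.card := by
            field_simp; ring
    refine hstep.trans ?_
    have hsum2 : ∑ F ∈ A, s ^ F.card * s ^ (M - F.card) = A.card * s ^ M := by
      rw [Finset.sum_congr rfl (fun F hF => by
        rw [← pow_add, Nat.add_sub_cancel' (hcard F hF)]), Finset.sum_const, nsmul_eq_mul]
    have hcP : (A.card : ℝ) * s ^ M / c = P := by
      rw [hc]; field_simp
    rw [Finset.sum_sub_distrib, Finset.sum_add_distrib, ← Finset.sum_mul, ← Finset.sum_div,
      hsum2, hcP, ← hPsum]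
    linarith
  have hLHS : ∑ F ∈ A, s ^ F.card * Real.log (s ^ (M - F.card))
      = Real.log s * ((M : ℝ) * P - Q) := by
    have h1 : ∀ F ∈ A, s ^ F.card * Real.log (s ^ (M - F.card))
        = Real.log s * ((M : ℝ) * s ^ F.card - (F.card : ℝ) * s ^ F.card) := by
      intro F hF
      rw [Real.log_pow, Nat.cast_sub (hcard F hF)]
      ring
    rw [Finset.sum_congr rfl h1, ← Finset.mul_sum]
    congr 1
    rw [Finset.sum_sub_distrib, ← Finset.mul_sum, hPsum, hQ]
  have hcle : c ≤ (A.card : ℝ) := by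
    rw [hc, div_le_iff₀ hPpos]
    nlinarith [hsM, hApos]
  have hlogc : Real.log c ≤ (n : ℝ) * Real.log 2 := by
    calc Real.log c ≤ Real.log ((2:ℝ) ^ n) :=
          Real.log_le_log hcpos (hcle.trans hAcard)
      _ = (n : ℝ) * Real.log 2 := by rw [Real.log_pow]
  have key : Real.log s * ((M : ℝ) * P - Q) ≤ P * ((n : ℝ) * Real.log 2) := by
    rw [← hLHS]
    exact hmain.trans (mul_le_mul_of_nonneg_left hlogc hPpos.le)
  rw [hsQ, div_add_div _ _ (ne_of_gt hPpos) (ne_of_gt hlogs),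
    le_div_iff₀ (mul_pos hPpos hlogs)]
  nlinarith [key]
end

section
/- Let h > ℓ ≥ 1 and k ≥ 1 be integers and c > 0. Define g^A(x) = P(Bin(h−1,x) < ℓ) = Σ_{j=0}^{ℓ−1} C(h−1,j) x^j (1−x)^{h−1−j}, g^B(q) = 1 − Q(chq, k), h^B(q) = ch·e^{−chq}(chq)^{k−1}/(k−1)!, and F(q) = E[min(ℓ, Bin(h, g^B(q)))] + k·Q(chq, k+1)/c for q ∈ [0,1]. Then F is differentiable on (0,1) and F'(q) = h · h^B(q) · ( q − g^A(g^B(q)) ). -/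
/-- `Q x y = e^{-x} ∑_{j ≥ y} x^j / j!`. -/
noncomputable def Q (x : ℝ) (y : ℕ) : ℝ :=
  Real.exp (-x) * ∑' j : ℕ, if y ≤ j then x ^ j / (Nat.factorial j : ℝ) else 0

/-- `P(Bin(n,p) = j)`. -/
noncomputable def binomPMF (n j : ℕ) (p : ℝ) : ℝ :=
  (n.choose j : ℝ) * p ^ j * (1 - p) ^ (n - j)

/-- `g^A(x) = P(Bin(h−1,x) < ℓ)`. -/
noncomputable def gA (h ℓ : ℕ) (x : ℝ) : ℝ :=
  ∑ j ∈ Finset.range ℓ, binomPMF (h - 1) j x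

/-- `g^B(q) = 1 − Q(chq, k)`. -/
noncomputable def gB (h k : ℕ) (c q : ℝ) : ℝ := 1 - Q (c * h * q) k

/-- `h^B(q) = ch·e^{−chq}·(chq)^{k−1}/(k−1)!`. -/
noncomputable def hB (h k : ℕ) (c q : ℝ) : ℝ :=
  c * h * Real.exp (-(c * h * q)) * (c * h * q) ^ (k - 1) / (Nat.factorial (k - 1) : ℝ)

/-- `F(q) = E[min(ℓ, Bin(h, g^B(q)))] + k·Q(chq, k+1)/c`. -/
noncomputable def Fcal (h ℓ k : ℕ) (c q : ℝ) : ℝ :=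
  (∑ j ∈ Finset.range (h + 1), binomPMF h j (gB h k c q) * min (ℓ : ℝ) (j : ℝ))
    + k * Q (c * h * q) (k + 1) / c

lemma Q_eq (x : ℝ) (y : ℕ) :
    Q x y = 1 - Real.exp (-x) * ∑ j ∈ Finset.range y, x ^ j / (Nat.factorial j : ℝ) := by
  have hs : Summable (fun j : ℕ => x ^ j / (Nat.factorial j : ℝ)) :=
    Real.summable_pow_div_factorial x
  have hs2 : Summable (fun j : ℕ => if j ∈ Finset.range y then x ^ j / (Nat.factorial j : ℝ) else 0) :=
    summable_of_ne_finset_zero (s := Finset.range y) (fun j hj => if_neg hj)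
  have hfin : (∑' j : ℕ, if j ∈ Finset.range y then x ^ j / (Nat.factorial j : ℝ) else 0)
      = ∑ j ∈ Finset.range y, x ^ j / (Nat.factorial j : ℝ) := by
    rw [tsum_eq_sum (s := Finset.range y) (fun j hj => if_neg hj)]
    exact Finset.sum_congr rfl fun j hj => if_pos hj
  have hexp : (∑' j : ℕ, x ^ j / (Nat.factorial j : ℝ)) = Real.exp x := by
    rw [Real.exp_eq_exp_ℝ, NormedSpace.exp_eq_tsum_div]
  have hsplit : (∑' j : ℕ, if y ≤ j then x ^ j / (Nat.factorial j : ℝ) else 0)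
      = Real.exp x - ∑ j ∈ Finset.range y, x ^ j / (Nat.factorial j : ℝ) := by
    rw [← hexp, ← hfin, ← Summable.tsum_sub hs hs2]
    apply tsum_congr
    intro j
    by_cases hj : y ≤ j
    · simp [hj, Finset.mem_range, not_lt.mpr hj]
    · simp [hj, Finset.mem_range, not_le.mp hj]
  rw [Q, hsplit, mul_sub, ← Real.exp_add, neg_add_cancel, Real.exp_zero]
lemma poly_hasDerivAt (m : ℕ) (x : ℝ) :
    HasDerivAt (fun x : ℝ => ∑ j ∈ Finset.range (m + 1), x ^ j / (Nat.factorial j : ℝ))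
      (∑ j ∈ Finset.range m, x ^ j / (Nat.factorial j : ℝ)) x := by
  have hD : HasDerivAt (fun x : ℝ => ∑ j ∈ Finset.range (m + 1), x ^ j / (Nat.factorial j : ℝ))
      (∑ j ∈ Finset.range (m + 1), (j : ℝ) * x ^ (j - 1) / (Nat.factorial j : ℝ)) x :=
    HasDerivAt.fun_sum fun j _ => (hasDerivAt_pow j x).div_const _
  convert hD using 1
  rw [Finset.sum_range_succ']
  simp only [Nat.cast_zero, zero_mul, zero_div, add_zero]
  apply Finset.sum_congr rfl
  intro i _
  simp only [Nat.add_sub_cancel, Nat.factorial_succ, Nat.cast_mul, Nat.cast_add, Nat.cast_one]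
  have h1 : ((i : ℝ) + 1) ≠ 0 := by positivity
  have h2 : ((Nat.factorial i : ℝ)) ≠ 0 := Nat.cast_ne_zero.mpr i.factorial_ne_zero
  field_simp
lemma Q_hasDerivAt (x : ℝ) (y : ℕ) (hy : 1 ≤ y) :
    HasDerivAt (fun x => Q x y)
      (Real.exp (-x) * x ^ (y - 1) / (Nat.factorial (y - 1) : ℝ)) x := by
  obtain ⟨m, rfl⟩ : ∃ m, y = m + 1 := ⟨y - 1, (Nat.succ_pred_eq_of_pos hy).symm⟩
  have hE : HasDerivAt (fun x : ℝ => Real.exp (-x)) (-Real.exp (-x)) x := by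
    simpa using (hasDerivAt_neg x).exp
  have hP := poly_hasDerivAt m x
  have hfull := ((hE.mul hP).const_sub 1)
  have hfun : (fun x => Q x (m + 1))
      = fun x => 1 - Real.exp (-x) * ∑ j ∈ Finset.range (m + 1), x ^ j / (Nat.factorial j : ℝ) :=
    funext fun x => Q_eq x (m + 1)
  rw [hfun]
  refine hfull.congr_deriv ?_
  rw [Finset.sum_range_succ]
  simp only [Nat.add_sub_cancel]
  ring
lemma binom_hasDerivAt (n j : ℕ) (p : ℝ) :
    HasDerivAt (fun p => binomPMF n j p)
      ((n.choose j : ℝ) * ((j : ℝ) * p ^ (j - 1) * (1 - p) ^ (n - j)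
        - ((n - j : ℕ) : ℝ) * p ^ j * (1 - p) ^ (n - j - 1))) p := by
  have hi : HasDerivAt (fun p : ℝ => 1 - p) (-1) p := by
    simpa using ((hasDerivAt_id p).const_sub 1)
  have h1 : HasDerivAt (fun p : ℝ => (1 - p) ^ (n - j))
      (((n - j : ℕ) : ℝ) * (1 - p) ^ (n - j - 1) * (-1)) p :=
    (hasDerivAt_pow (n - j) (1 - p)).comp p hi
  have h2 := ((hasDerivAt_pow j p).mul h1).const_mul ((n.choose j : ℝ))
  refine (h2.congr_of_eventuallyEq (Filter.Eventually.of_forall fun x => ?_)).congr_deriv ?_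
  · simp only [binomPMF, Pi.mul_apply]; ring
  · ring
lemma m_step (ℓ i : ℕ) : min (ℓ : ℝ) ((i : ℝ) + 1) - min (ℓ : ℝ) (i : ℝ)
    = if i < ℓ then 1 else 0 := by
  by_cases hi : i < ℓ
  · rw [if_pos hi, min_eq_right (by exact_mod_cast Nat.succ_le_of_lt hi),
      min_eq_right (by exact_mod_cast hi.le)]
    ring
  · rw [if_neg hi, min_eq_left (by exact_mod_cast Nat.le_succ_of_le (not_lt.mp hi)),
      min_eq_left (by exact_mod_cast not_lt.mp hi), sub_self]
lemma choose_id1 (h i : ℕ) (hh : 1 ≤ h) :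
    ((h.choose (i + 1)) : ℝ) * ((i : ℝ) + 1) = (h : ℝ) * ((h - 1).choose i : ℝ) := by
  have := Nat.add_one_mul_choose_eq (h - 1) i
  have h' : h - 1 + 1 = h := Nat.sub_add_cancel hh
  simp only [Nat.succ_eq_add_one, h'] at this
  exact_mod_cast congrArg (Nat.cast (R := ℝ)) this.symm
lemma choose_id2 (h j : ℕ) :
    ((h.choose j) : ℝ) * ((h - j : ℕ) : ℝ) = ((h.choose (j + 1)) : ℝ) * ((j : ℝ) + 1) := by
  exact_mod_cast congrArg (Nat.cast (R := ℝ)) (Nat.choose_succ_right_eq h j).symm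
lemma G_hasDerivAt (h ℓ : ℕ) (hℓ1 : 1 ≤ ℓ) (hℓh : ℓ < h) (p : ℝ) :
    HasDerivAt (fun p => ∑ j ∈ Finset.range (h + 1), binomPMF h j p * min (ℓ : ℝ) (j : ℝ))
      ((h : ℝ) * gA h ℓ p) p := by
  have hh : 1 ≤ h := le_trans hℓ1 hℓh.le
  have hD : HasDerivAt (fun p => ∑ j ∈ Finset.range (h + 1), binomPMF h j p * min (ℓ : ℝ) (j : ℝ))
      (∑ j ∈ Finset.range (h + 1),
        ((h.choose j : ℝ) * ((j : ℝ) * p ^ (j - 1) * (1 - p) ^ (h - j)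
          - ((h - j : ℕ) : ℝ) * p ^ j * (1 - p) ^ (h - j - 1))) * min (ℓ : ℝ) (j : ℝ)) p :=
    HasDerivAt.fun_sum fun j _ => (binom_hasDerivAt h j p).mul_const _
  convert hD using 1
  have key1 : (∑ j ∈ Finset.range (h + 1),
      (h.choose j : ℝ) * (j : ℝ) * p ^ (j - 1) * (1 - p) ^ (h - j) * min (ℓ : ℝ) (j : ℝ))
      = ∑ i ∈ Finset.range h,
        (h : ℝ) * ((h - 1).choose i : ℝ) * p ^ i * (1 - p) ^ (h - 1 - i) * min (ℓ : ℝ) ((i : ℝ) + 1) := by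
    rw [Finset.sum_range_succ']
    simp only [Nat.cast_zero, mul_zero, zero_mul, add_zero]
    apply Finset.sum_congr rfl
    intro i _
    have e1 : h - (i + 1) = h - 1 - i := by omega
    rw [Nat.add_sub_cancel, e1]
    have hc := choose_id1 h i hh
    push_cast
    linear_combination (p ^ i * (1 - p) ^ (h - 1 - i) * min (ℓ : ℝ) ((i : ℝ) + 1)) * hc
  have key2 : (∑ j ∈ Finset.range (h + 1),
      (h.choose j : ℝ) * ((h - j : ℕ) : ℝ) * p ^ j * (1 - p) ^ (h - j - 1) * min (ℓ : ℝ) (j : ℝ))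
      = ∑ j ∈ Finset.range h,
        (h : ℝ) * ((h - 1).choose j : ℝ) * p ^ j * (1 - p) ^ (h - 1 - j) * min (ℓ : ℝ) (j : ℝ) := by
    rw [Finset.sum_range_succ]
    simp only [Nat.sub_self, Nat.cast_zero, mul_zero, zero_mul, add_zero]
    apply Finset.sum_congr rfl
    intro j _
    have e1 : h - j - 1 = h - 1 - j := by omega
    rw [e1]
    have hc := (choose_id2 h j).trans (choose_id1 h j hh)
    linear_combination (p ^ j * (1 - p) ^ (h - 1 - j) * min (ℓ : ℝ) (j : ℝ)) * hc
  have key3 : (∑ i ∈ Finset.range h, binomPMF (h - 1) i p * (if i < ℓ then (1 : ℝ) else 0))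
      = gA h ℓ p := by
    rw [show (∑ i ∈ Finset.range h, binomPMF (h - 1) i p * (if i < ℓ then (1 : ℝ) else 0))
        = ∑ i ∈ Finset.range h, (if i < ℓ then binomPMF (h - 1) i p else 0) from
      Finset.sum_congr rfl (fun i _ => by by_cases hi : i < ℓ <;> simp [hi])]
    rw [← Finset.sum_subset (Finset.range_subset_range.mpr hℓh.le)
      (fun i _ hi => if_neg (by simpa using hi))]
    unfold gA
    exact Finset.sum_congr rfl fun i hi => if_pos (Finset.mem_range.mp hi)
  have expand : (∑ j ∈ Finset.range (h + 1),
      ((h.choose j : ℝ) * ((j : ℝ) * p ^ (j - 1) * (1 - p) ^ (h - j)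
        - ((h - j : ℕ) : ℝ) * p ^ j * (1 - p) ^ (h - j - 1))) * min (ℓ : ℝ) (j : ℝ))
      = (∑ j ∈ Finset.range (h + 1),
          (h.choose j : ℝ) * (j : ℝ) * p ^ (j - 1) * (1 - p) ^ (h - j) * min (ℓ : ℝ) (j : ℝ))
        - ∑ j ∈ Finset.range (h + 1),
          (h.choose j : ℝ) * ((h - j : ℕ) : ℝ) * p ^ j * (1 - p) ^ (h - j - 1) * min (ℓ : ℝ) (j : ℝ) := by
    rw [← Finset.sum_sub_distrib]
    exact Finset.sum_congr rfl fun j _ => by ring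
  rw [expand, key1, key2, ← Finset.sum_sub_distrib, ← key3, Finset.mul_sum]
  apply Finset.sum_congr rfl
  intro i _
  rw [← m_step ℓ i]
  unfold binomPMF
  ring
lemma inner_hasDerivAt (h : ℕ) (c q : ℝ) :
    HasDerivAt (fun q : ℝ => c * h * q) (c * h) q := by
  simpa using (hasDerivAt_id q).const_mul (c * (h : ℝ))
lemma gB_hasDerivAt (h k : ℕ) (hk : 1 ≤ k) (c q : ℝ) :
    HasDerivAt (fun q => gB h k c q) (-hB h k c q) q := by
  have hQ := (Q_hasDerivAt (c * h * q) k hk).comp q (inner_hasDerivAt h c q)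
  have h2 := hQ.const_sub 1
  refine h2.congr_deriv ?_
  unfold hB
  ring
lemma last_hasDerivAt (h k : ℕ) (hk : 1 ≤ k) (c q : ℝ) (hc : c ≠ 0) :
    HasDerivAt (fun q : ℝ => (k : ℝ) * Q (c * h * q) (k + 1) / c)
      ((h : ℝ) * hB h k c q * q) q := by
  obtain ⟨m, rfl⟩ : ∃ m, k = m + 1 := ⟨k - 1, (Nat.succ_pred_eq_of_pos hk).symm⟩
  have hQ := (Q_hasDerivAt (c * h * q) (m + 2) (by omega)).comp q (inner_hasDerivAt h c q)
  have h2 := (hQ.const_mul ((m : ℝ) + 1)).div_const c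
  refine (h2.congr_of_eventuallyEq (Filter.Eventually.of_forall fun x => ?_)).congr_deriv ?_
  · simp only [Function.comp]; push_cast; ring
  have e : m + 2 - 1 = m + 1 := rfl
  rw [e]
  simp only [Nat.add_sub_cancel, hB]
  have hm : ((Nat.factorial m : ℝ)) ≠ 0 := Nat.cast_ne_zero.mpr m.factorial_ne_zero
  rw [Nat.factorial_succ, pow_succ]
  push_cast
  field_simp

/-- `F` is differentiable on `(0,1)` with `F'(q) = h·h^B(q)·(q − g^A(g^B(q)))`. -/
theorem statement_18 (h ℓ k : ℕ) (hℓ1 : 1 ≤ ℓ) (hℓh : ℓ < h) (hk1 : 1 ≤ k)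
    (c : ℝ) (hc : 0 < c) :
    ∀ q ∈ Set.Ioo (0 : ℝ) 1,
      HasDerivAt (fun q' : ℝ => Fcal h ℓ k c q')
        ((h : ℝ) * hB h k c q * (q - gA h ℓ (gB h k c q))) q := by
  intro q _
  have hG := (G_hasDerivAt h ℓ hℓ1 hℓh (gB h k c q)).comp q (gB_hasDerivAt h k hk1 c q)
  have hL := last_hasDerivAt h k hk1 c q hc.ne'
  have hsum := hG.add hL
  refine hsum.congr_deriv ?_
  ring
end

section
/- Let h > ℓ ≥ 1 and k ≥ 1 be integers and c > 0. Define g^A(x) = P(Bin(h−1,x) < ℓ), g^B(q) = 1 − Q(chq, k), and Δ(x) = x − g^A(g^B(x)) for x ∈ [0,1]. Then Δ(0) = 0, Δ(1) > 0, and exactly one of the following holds: either Δ(x) ≥ 0 for all x ∈ [0,1], or there exist 0 ≤ u < v < 1 such that Δ(x) ≥ 0 for x ∈ [0,u] ∪ [v,1] and Δ(x) ≤ 0 for x ∈ [u,v]. -/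
open scoped Nat
open Finset Real Set

noncomputable def SS (k : ℕ) (z : ℝ) : ℝ := ∑ j ∈ Finset.range k, z ^ j / (j ! : ℝ)

noncomputable def MM (k : ℕ) (z : ℝ) : ℝ := ∑' j : ℕ, z ^ j / ((j + k)! : ℝ)

lemma summable_MM (k : ℕ) (z : ℝ) : Summable (fun j : ℕ => z ^ j / ((j + k)! : ℝ)) := by
  apply Summable.of_norm
  refine Summable.of_nonneg_of_le (fun j => norm_nonneg _) (fun j => ?_)
    (Real.summable_pow_div_factorial |z|)
  rw [Real.norm_eq_abs, abs_div, abs_pow, Nat.abs_cast]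
  apply div_le_div_of_nonneg_left (by positivity) (by positivity)
  exact_mod_cast Nat.factorial_le (Nat.le_add_right j k)

lemma exp_eq_tsum (z : ℝ) : Real.exp z = ∑' j : ℕ, z ^ j / (j ! : ℝ) := by
  rw [Real.exp_eq_exp_ℝ, NormedSpace.exp_eq_tsum_div]

lemma exp_sub_SS (k : ℕ) (z : ℝ) : Real.exp z - SS k z = z ^ k * MM k z := by
  have hsum : Summable (fun j : ℕ => z ^ j / (j ! : ℝ)) := Real.summable_pow_div_factorial z
  have h := Summable.sum_add_tsum_nat_add (f := fun j : ℕ => z ^ j / (j ! : ℝ)) k hsum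
  rw [exp_eq_tsum, ← h, SS]
  have : (∑' j : ℕ, z ^ (j + k) / ((j + k)! : ℝ)) = z ^ k * MM k z := by
    rw [MM, ← tsum_mul_left]
    congr 1 with j
    rw [pow_add]; ring
  rw [this]; ring

lemma MM_pos (k : ℕ) {z : ℝ} (hz : 0 ≤ z) : 0 < MM k z := by
  have h0 : (0:ℝ) < 1 / ((0 + k)! : ℝ) := by positivity
  refine Summable.tsum_pos (summable_MM k z) (fun j => by positivity) 0 ?_
  simpa using h0

lemma MM_lt (k : ℕ) {z₁ z₂ : ℝ} (h0 : 0 ≤ z₁) (h : z₁ < z₂) : MM k z₁ < MM k z₂ := by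
  refine Summable.tsum_lt_tsum (i := 1) (fun j => ?_) ?_ (summable_MM k z₁) (summable_MM k z₂)
  · exact div_le_div_of_nonneg_right (pow_le_pow_left₀ h0 h.le j) (by positivity)
  · have hc : (0:ℝ) < ((1 + k)! : ℝ) := by positivity
    rw [pow_one, pow_one]
    exact (div_lt_div_iff_of_pos_right hc).mpr h

lemma Q_eq_s19 (k : ℕ) (z : ℝ) : Q z k = 1 - Real.exp (-z) * SS k z := by
  have hsum : Summable (fun j : ℕ => (if k ≤ j then z ^ j / (j ! : ℝ) else 0)) := by
    apply Summable.of_norm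
    refine Summable.of_nonneg_of_le (fun j => norm_nonneg _) (fun j => ?_)
      (Real.summable_pow_div_factorial |z|)
    rw [Real.norm_eq_abs]
    split
    · rw [abs_div, abs_pow, Nat.abs_cast]
    · simp only [abs_zero]
      positivity
  have h := Summable.sum_add_tsum_nat_add (f := fun j : ℕ => (if k ≤ j then z ^ j / (j ! : ℝ) else 0)) k hsum
  have h1 : ∑ j ∈ Finset.range k, (if k ≤ j then z ^ j / (j ! : ℝ) else 0) = 0 := by
    apply Finset.sum_eq_zero
    intro j hj
    rw [if_neg (Finset.mem_range.mp hj).not_ge]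
  have h2 : (∑' j : ℕ, (if k ≤ j + k then z ^ (j + k) / ((j + k)! : ℝ) else 0))
      = z ^ k * MM k z := by
    rw [MM, ← tsum_mul_left]
    congr 1 with j
    rw [if_pos (Nat.le_add_left k j), pow_add]; ring
  rw [Q, ← h, h1, zero_add, h2, ← exp_sub_SS]
  rw [mul_sub, ← Real.exp_add]
  simp

noncomputable def sB (lam : ℝ) (k : ℕ) (x : ℝ) : ℝ :=
  Real.exp (-(lam * x)) * SS k (lam * x)

lemma one_le_SS {k : ℕ} (hk : 1 ≤ k) {z : ℝ} (hz : 0 ≤ z) : 1 ≤ SS k z := by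
  rw [SS]
  calc (1:ℝ) = ∑ j ∈ Finset.range 1, z ^ j / (j ! : ℝ) := by simp
  _ ≤ _ := Finset.sum_le_sum_of_subset_of_nonneg
      (Finset.range_subset_range.mpr hk) (fun j _ _ => by positivity)

lemma sB_pos {lam : ℝ} {k : ℕ} (hk : 1 ≤ k) {x : ℝ} (hz : 0 ≤ lam * x) :
    0 < sB lam k x :=
  mul_pos (Real.exp_pos _) (lt_of_lt_of_le one_pos (one_le_SS hk hz))

lemma sB_lt_one {lam : ℝ} {k : ℕ} {x : ℝ} (hz : 0 < lam * x) : sB lam k x < 1 := by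
  rw [sB]
  have h1 : 0 < (lam * x) ^ k * MM k (lam * x) := by
    have := MM_pos k hz.le
    positivity
  rw [← exp_sub_SS] at h1
  calc Real.exp (-(lam * x)) * SS k (lam * x)
      < Real.exp (-(lam * x)) * Real.exp (lam * x) := by
        exact mul_lt_mul_of_pos_left (by linarith) (Real.exp_pos _)
  _ = 1 := by rw [← Real.exp_add]; simp

lemma sB_zero {lam : ℝ} {k : ℕ} (hk : 1 ≤ k) : sB lam k 0 = 1 := by
  obtain ⟨m, rfl⟩ := Nat.exists_eq_add_of_le hk
  rw [add_comm] at *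
  rw [sB, mul_zero]
  rw [SS, Finset.sum_range_succ']
  have : ∀ i ∈ Finset.range m, (0:ℝ) ^ (i+1) / ((i+1)! : ℝ) = 0 := by
    intro i _; simp
  rw [Finset.sum_congr rfl this]
  simp

lemma hasDerivAt_SS (m : ℕ) (z : ℝ) : HasDerivAt (SS (m + 1)) (SS m z) z := by
  have h : ∀ j ∈ Finset.range (m + 1), HasDerivAt (fun w : ℝ => w ^ j / (j ! : ℝ))
      ((j : ℝ) * z ^ (j - 1) / (j ! : ℝ)) z := fun j _ => (hasDerivAt_pow j z).div_const _
  have hsum := HasDerivAt.fun_sum h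
  have : ∑ j ∈ Finset.range (m + 1), (j : ℝ) * z ^ (j - 1) / (j ! : ℝ) = SS m z := by
    rw [Finset.sum_range_succ']
    simp only [Nat.cast_zero, zero_mul, zero_div, add_zero]
    rw [SS]
    apply Finset.sum_congr rfl
    intro i _
    rw [Nat.factorial_succ, Nat.add_sub_cancel]
    push_cast
    have : (i : ℝ) + 1 ≠ 0 := by positivity
    field_simp
  rw [this] at hsum
  exact hsum

lemma SS_succ_sub (m : ℕ) (z : ℝ) : SS (m + 1) z - SS m z = z ^ m / (m ! : ℝ) := by
  rw [SS, SS, Finset.sum_range_succ]; ring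

lemma hasDerivAt_sB (lam : ℝ) (m : ℕ) (x : ℝ) :
    HasDerivAt (sB lam (m + 1))
      (-(lam * Real.exp (-(lam * x)) * (lam * x) ^ m / (m ! : ℝ))) x := by
  have hz : HasDerivAt (fun w : ℝ => lam * w) lam x := by
    simpa using (hasDerivAt_id x).const_mul lam
  have he : HasDerivAt (fun w : ℝ => Real.exp (-(lam * w)))
      (Real.exp (-(lam * x)) * -lam) x := by
    have := (Real.hasDerivAt_exp (-(lam * x))).comp x (hz.neg)
    simpa [Function.comp_def] using this
  have hS : HasDerivAt (fun w : ℝ => SS (m + 1) (lam * w)) (SS m (lam * x) * lam) x :=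
    (hasDerivAt_SS m (lam * x)).comp x hz
  have hprod := he.mul hS
  have heq : Real.exp (-(lam * x)) * -lam * SS (m + 1) (lam * x)
      + Real.exp (-(lam * x)) * (SS m (lam * x) * lam)
      = -(lam * Real.exp (-(lam * x)) * (lam * x) ^ m / (m ! : ℝ)) := by
    have h := SS_succ_sub m (lam * x)
    have : SS m (lam * x) = SS (m + 1) (lam * x) - (lam * x) ^ m / (m ! : ℝ) := by
      linarith
    rw [this]; ring
  rw [heq] at hprod
  exact hprod

lemma sB_antitone {lam : ℝ} (hlam : 0 < lam) (m : ℕ) :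
    AntitoneOn (sB lam (m + 1)) (Set.Ici 0) := by
  apply antitoneOn_of_deriv_nonpos (convex_Ici 0)
  · exact fun x _ => ((hasDerivAt_sB lam m x).continuousAt).continuousWithinAt
  · intro x _
    exact (hasDerivAt_sB lam m x).differentiableAt.differentiableWithinAt
  · intro x hx
    rw [interior_Ici] at hx
    rw [(hasDerivAt_sB lam m x).deriv]
    have hz : 0 < lam * x := mul_pos hlam hx
    have : (0:ℝ) ≤ lam * Real.exp (-(lam * x)) * (lam * x) ^ m / (m ! : ℝ) := by positivity
    linarith

noncomputable def gAn (n ℓ : ℕ) (y : ℝ) : ℝ :=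
  ∑ j ∈ Finset.range ℓ, (n.choose j : ℝ) * y ^ j * (1 - y) ^ (n - j)

lemma gAn_nonneg (n ℓ : ℕ) {y : ℝ} (h0 : 0 ≤ y) (h1 : y ≤ 1) : 0 ≤ gAn n ℓ y :=
  Finset.sum_nonneg fun j _ => by
    have : (0:ℝ) ≤ 1 - y := by linarith
    positivity

lemma gAn_pos (n : ℕ) {ℓ : ℕ} (hℓ : 1 ≤ ℓ) {y : ℝ} (h0 : 0 ≤ y) (h1 : y < 1) :
    0 < gAn n ℓ y := by
  have h1' : (0:ℝ) < 1 - y := by linarith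
  refine Finset.sum_pos' (fun j _ => ?_) ⟨0, Finset.mem_range.mpr hℓ, ?_⟩
  · have : (0:ℝ) ≤ 1 - y := h1'.le
    positivity
  · simp only [Nat.choose_zero_right, Nat.cast_one, pow_zero, one_mul, Nat.sub_zero]
    positivity

lemma gAn_one (n : ℕ) {ℓ : ℕ} (hn : ℓ ≤ n) : gAn n ℓ 1 = 0 := by
  apply Finset.sum_eq_zero
  intro j hj
  have hj' : j < n := lt_of_lt_of_le (Finset.mem_range.mp hj) hn
  rw [sub_self, zero_pow (by omega)]
  ring

lemma gAn_lt_one (n : ℕ) {ℓ : ℕ} (hn : ℓ ≤ n) {y : ℝ} (h0 : 0 < y) (h1 : y < 1) :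
    gAn n ℓ y < 1 := by
  have hb : (1:ℝ) = ∑ j ∈ Finset.range (n+1), y ^ j * (1-y) ^ (n-j) * (n.choose j : ℝ) := by
    rw [← add_pow]; norm_num
  have hterm : (0:ℝ) < (n.choose ℓ : ℝ) * y ^ ℓ * (1-y) ^ (n-ℓ) := by
    have hc : 0 < n.choose ℓ := Nat.choose_pos hn
    have h1' : (0:ℝ) < 1 - y := by linarith
    positivity
  have hsub : gAn n ℓ y + (n.choose ℓ : ℝ) * y ^ ℓ * (1-y) ^ (n-ℓ)
      ≤ ∑ j ∈ Finset.range (n+1), (n.choose j : ℝ) * y ^ j * (1-y) ^ (n-j) := by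
    rw [gAn, ← Finset.sum_range_succ]
    apply Finset.sum_le_sum_of_subset_of_nonneg
    · exact Finset.range_subset_range.mpr (by omega)
    · intro j _ _
      have h1' : (0:ℝ) ≤ 1 - y := by linarith
      positivity
  have : ∑ j ∈ Finset.range (n+1), (n.choose j : ℝ) * y ^ j * (1-y) ^ (n-j)
      = ∑ j ∈ Finset.range (n+1), y ^ j * (1-y) ^ (n-j) * (n.choose j : ℝ) := by
    apply Finset.sum_congr rfl; intro j _; ring
  linarith [hb ▸ (this ▸ hsub)]

lemma choose_id1_s19 (n j : ℕ) (hn : 1 ≤ n) :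
    n * (n-1).choose j = n.choose (j+1) * (j+1) := by
  have := Nat.add_one_mul_choose_eq (n-1) j
  rwa [Nat.sub_add_cancel hn] at this

lemma choose_id2_s19 (n j : ℕ) (hn : 1 ≤ n) :
    n.choose j * (n - j) = n * (n-1).choose j := by
  rw [choose_id1_s19 n j hn, ← Nat.choose_succ_right_eq]

lemma hasDerivAt_term (c : ℝ) (a b : ℕ) (y : ℝ) :
    HasDerivAt (fun w : ℝ => c * w ^ a * (1 - w) ^ b)
      (c * ((a:ℝ) * y ^ (a-1)) * (1-y) ^ b - c * y ^ a * ((b:ℝ) * (1-y) ^ (b-1))) y := by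
  have h1 : HasDerivAt (fun w : ℝ => w ^ a) ((a:ℝ) * y ^ (a - 1)) y := hasDerivAt_pow a y
  have h2 : HasDerivAt (fun w : ℝ => (1 - w) ^ b) (-((b:ℝ) * (1 - y) ^ (b - 1))) y := by
    have hin : HasDerivAt (fun w : ℝ => 1 - w) (-1) y := by
      simpa using (hasDerivAt_id y).const_sub 1
    have := (hasDerivAt_pow b (1 - y)).comp y hin
    simpa [Function.comp_def] using this
  have h3 := (h1.const_mul c).mul h2
  refine h3.congr_deriv ?_
  ring

lemma hasDerivAt_gAn (n e : ℕ) (hn : e + 1 ≤ n) (y : ℝ) :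
    HasDerivAt (gAn n (e+1))
      (-((n:ℝ) * ((n-1).choose e : ℝ) * y ^ e * (1-y) ^ (n-(e+1)))) y := by
  have hn1 : 1 ≤ n := by omega
  have key : ∀ j, HasDerivAt (fun w : ℝ => (n.choose (j+1) : ℝ) * w ^ (j+1) * (1 - w) ^ (n-(j+1)))
      (((n:ℝ) * ((n-1).choose j : ℝ) * y ^ j * (1-y) ^ (n-1-j))
        - ((n:ℝ) * ((n-1).choose (j+1) : ℝ) * y ^ (j+1) * (1-y) ^ (n-1-(j+1)))) y := by
    intro j
    have h := hasDerivAt_term ((n.choose (j+1) : ℝ)) (j+1) (n-(j+1)) y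
    convert h using 1
    have c1 : ((n.choose (j+1) : ℝ)) * ((j+1 : ℕ) : ℝ) = (n:ℝ) * ((n-1).choose j : ℝ) := by
      rw [← Nat.cast_mul, ← Nat.cast_mul, choose_id1_s19 n j hn1]
    have c2 : ((n.choose (j+1) : ℝ)) * (((n-(j+1) : ℕ)) : ℝ) = (n:ℝ) * ((n-1).choose (j+1) : ℝ) := by
      rw [← Nat.cast_mul, ← Nat.cast_mul, choose_id2_s19 n (j+1) hn1]
    have e1 : n - (j+1) = n - 1 - j := by omega
    have e2 : n - 1 - j - 1 = n - 1 - (j+1) := by omega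
    rw [Nat.add_sub_cancel, e1, e2]
    have c2' : ((n.choose (j+1) : ℝ)) * (((n-1-j : ℕ)) : ℝ) = (n:ℝ) * ((n-1).choose (j+1) : ℝ) := by
      rw [← e1]; exact c2
    linear_combination (-(y ^ j * (1-y) ^ (n-1-j))) * c1 + (y ^ (j+1) * (1-y) ^ (n-1-(j+1))) * c2'
  have h0 : HasDerivAt (fun w : ℝ => (n.choose 0 : ℝ) * w ^ 0 * (1 - w) ^ (n-0))
      (-((n:ℝ) * ((n-1).choose 0 : ℝ) * y ^ 0 * (1-y) ^ (n-1-0))) y := by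
    have h := hasDerivAt_term ((n.choose 0 : ℝ)) 0 (n-0) y
    convert h using 1
    simp only [Nat.choose_zero_right, Nat.cast_one, pow_zero, Nat.sub_zero, Nat.cast_zero,
      one_mul, mul_one]
    ring
  have hsum : HasDerivAt (gAn n (e+1))
      ((∑ j ∈ Finset.range e,
        (((n:ℝ) * ((n-1).choose j : ℝ) * y ^ j * (1-y) ^ (n-1-j))
        - ((n:ℝ) * ((n-1).choose (j+1) : ℝ) * y ^ (j+1) * (1-y) ^ (n-1-(j+1)))))
        + (-((n:ℝ) * ((n-1).choose 0 : ℝ) * y ^ 0 * (1-y) ^ (n-1-0)))) y := by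
    have : gAn n (e+1) = fun w : ℝ =>
        (∑ j ∈ Finset.range e, (n.choose (j+1) : ℝ) * w ^ (j+1) * (1 - w) ^ (n-(j+1)))
        + (n.choose 0 : ℝ) * w ^ 0 * (1 - w) ^ (n-0) := by
      funext w
      rw [gAn, Finset.sum_range_succ']
    rw [this]
    exact (HasDerivAt.fun_sum (fun j _ => key j)).add h0
  convert hsum using 1
  rw [Finset.sum_range_sub' (f := fun j => (n:ℝ) * ((n-1).choose j : ℝ) * y ^ j * (1-y) ^ (n-1-j))]
  have : n - 1 - e = n - (e+1) := by omega
  rw [this]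
  ring

lemma coeff_ineq {n ℓ j : ℕ} (hn : ℓ ≤ n) (hj : j + 1 ≤ ℓ - 1) (hℓ : 1 ≤ ℓ) :
    ((n:ℝ) - ℓ + 1) * (n.choose j : ℝ) ≤ ((ℓ:ℝ) - 1) * (n.choose (j+1) : ℝ) := by
  have hjn : j + 1 ≤ n := by omega
  have hCpos : (0:ℝ) < (n.choose j : ℝ) := by
    exact_mod_cast Nat.choose_pos (by omega : j ≤ n)
  have hrec : (n.choose (j+1) : ℝ) * ((j:ℝ)+1) = (n.choose j : ℝ) * ((n:ℝ) - j) := by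
    have := Nat.choose_succ_right_eq n j
    have hc : ((n.choose (j+1) * (j+1) : ℕ) : ℝ) = ((n.choose j * (n - j) : ℕ) : ℝ) := by
      exact_mod_cast congrArg Nat.cast this
    push_cast [Nat.cast_sub (by omega : j ≤ n)] at hc
    linarith
  -- multiply target by (j+1) > 0
  rw [← mul_le_mul_iff_left₀ (by positivity : (0:ℝ) < (j:ℝ)+1)]
  have hR : ((ℓ:ℝ) - 1) * (n.choose (j+1) : ℝ) * ((j:ℝ)+1) = ((ℓ:ℝ)-1) * ((n.choose j : ℝ) * ((n:ℝ) - j)) := by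
    rw [mul_assoc, hrec]
  rw [hR]
  have hnum : ((n:ℝ) - ℓ + 1) * ((j:ℝ)+1) ≤ ((ℓ:ℝ)-1) * ((n:ℝ) - j) := by
    have h1 : (j:ℝ) + 1 ≤ (ℓ:ℝ) - 1 := by
      have : (j:ℝ) + 1 + 1 ≤ (ℓ:ℝ) := by exact_mod_cast (by omega : j + 1 + 1 ≤ ℓ)
      linarith
    have h2 : (ℓ:ℝ) ≤ (n:ℝ) := by exact_mod_cast hn
    nlinarith [h1, h2, sub_nonneg.mpr h2]
  calc ((n:ℝ) - ℓ + 1) * (n.choose j : ℝ) * ((j:ℝ)+1)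
      = (n.choose j : ℝ) * (((n:ℝ) - ℓ + 1) * ((j:ℝ)+1)) := by ring
    _ ≤ (n.choose j : ℝ) * (((ℓ:ℝ)-1) * ((n:ℝ) - j)) := by
        apply mul_le_mul_of_nonneg_left hnum hCpos.le
    _ = ((ℓ:ℝ)-1) * ((n.choose j : ℝ) * ((n:ℝ) - j)) := by ring

lemma ineq_A {n ℓ : ℕ} (hℓ : 1 ≤ ℓ) (hn : ℓ ≤ n) {y : ℝ} (h0 : 0 ≤ y) (h1 : y ≤ 1) :
    (((n:ℝ) - ℓ + 1) * y - ((ℓ:ℝ) - 1) * (1 - y)) * gAn n ℓ y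
      ≤ (n:ℝ) * ((n-1).choose (ℓ-1) : ℝ) * y ^ ℓ * (1-y) ^ (n-ℓ+1) := by
  obtain ⟨e, rfl⟩ : ∃ e, ℓ = e + 1 := ⟨ℓ - 1, by omega⟩
  simp only [Nat.add_sub_cancel]
  push_cast
  have h1y : (0:ℝ) ≤ 1 - y := by linarith
  set p : ℕ → ℝ := fun j => (n.choose j : ℝ) * y ^ j * (1-y) ^ (n-j) with hp
  have hp_nonneg : ∀ j, 0 ≤ p j := fun j => by rw [hp]; positivity
  have hterm : ∀ j ∈ Finset.range e, ((n:ℝ) - (e+1) + 1) * y * p j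
      ≤ (((e:ℝ)+1) - 1) * (1-y) * p (j+1) := by
    intro j hj
    have hje : j + 1 ≤ e := by simpa using Finset.mem_range.mp hj
    have hxp : ((n:ℝ) - (e+1) + 1) * y * p j
        = (((n:ℝ) - (e+1) + 1) * (n.choose j : ℝ)) * (y ^ (j+1) * (1-y) ^ (n-j)) := by
      simp only [hp]; push_cast; ring
    have hyp : (((e:ℝ)+1) - 1) * (1-y) * p (j+1)
        = ((((e:ℝ)+1) - 1) * (n.choose (j+1) : ℝ)) * (y ^ (j+1) * (1-y) ^ (n-j)) := by
      simp only [hp]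
      have hnj : n - j = (n - (j+1)) + 1 := by omega
      rw [hnj]
      push_cast; ring
    rw [hxp, hyp]
    apply mul_le_mul_of_nonneg_right _ (by positivity)
    have := coeff_ineq (n := n) (ℓ := e+1) (j := j) hn (by omega) hℓ
    push_cast at this
    linarith
  have htop : ((n:ℝ) - (e+1) + 1) * y * p e = (((e:ℝ)+1)) * (1-y) * p (e+1) := by
    have hrec := Nat.choose_succ_right_eq n e
    have hcast : (n.choose (e+1) : ℝ) * ((e:ℝ)+1) = (n.choose e : ℝ) * ((n:ℝ) - e) := by
      have hc : ((n.choose (e+1) * (e+1) : ℕ) : ℝ) = ((n.choose e * (n - e) : ℕ) : ℝ) := by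
        exact_mod_cast congrArg Nat.cast hrec
      push_cast [Nat.cast_sub (by omega : e ≤ n)] at hc
      linarith
    simp only [hp]
    have hne : n - e = (n - (e+1)) + 1 := by omega
    rw [hne]
    push_cast
    linear_combination (-(y ^ (e+1) * (1-y) ^ (n-(e+1)) * (1-y))) * hcast
  have hsum : ∑ j ∈ Finset.range (e+1), ((n:ℝ) - (e+1) + 1) * y * p j
      ≤ (((e:ℝ)+1) - 1) * (1-y) * (∑ j ∈ Finset.range (e+1), p j)
        + (((e:ℝ)+1)) * (1-y) * p (e+1) := by
    rw [Finset.sum_range_succ, htop]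
    have hb : ∑ j ∈ Finset.range e, ((n:ℝ) - (e+1) + 1) * y * p j
        ≤ ∑ j ∈ Finset.range e, (((e:ℝ)+1) - 1) * (1-y) * p (j+1) :=
      Finset.sum_le_sum hterm
    have hshift : ∑ j ∈ Finset.range e, (((e:ℝ)+1) - 1) * (1-y) * p (j+1)
        ≤ (((e:ℝ)+1) - 1) * (1-y) * (∑ j ∈ Finset.range (e+1), p j) := by
      rw [← Finset.mul_sum]
      apply mul_le_mul_of_nonneg_left _ (by have := Nat.cast_nonneg (α := ℝ) e; nlinarith)
      rw [Finset.sum_range_succ' (f := p)]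
      have := hp_nonneg 0
      linarith
    linarith
  have hgA : gAn n (e+1) y = ∑ j ∈ Finset.range (e+1), p j := rfl
  have hfinal : (((n:ℝ) - (e+1) + 1) * y - (((e:ℝ)+1) - 1) * (1 - y)) * gAn n (e+1) y
      ≤ (((e:ℝ)+1)) * (1-y) * p (e+1) := by
    rw [hgA]
    have hl : (((n:ℝ) - (e+1) + 1) * y - (((e:ℝ)+1) - 1) * (1 - y)) * (∑ j ∈ Finset.range (e+1), p j)
        = ∑ j ∈ Finset.range (e+1), ((n:ℝ) - (e+1) + 1) * y * p j
          - (((e:ℝ)+1) - 1) * (1-y) * (∑ j ∈ Finset.range (e+1), p j) := by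
      rw [Finset.mul_sum, Finset.mul_sum, ← Finset.sum_sub_distrib]
      apply Finset.sum_congr rfl; intro j _; ring
    rw [hl]
    linarith
  have hR : (((e:ℝ)+1)) * (1-y) * p (e+1)
      = (n:ℝ) * ((n-1).choose e : ℝ) * y ^ (e+1) * (1-y) ^ (n-(e+1)+1) := by
    simp only [hp]
    have hcoef : ((e+1) : ℕ) * (n.choose (e+1)) = n * ((n-1).choose e) := by
      rw [choose_id1_s19 n e (by omega)]; ring
    have hcast : (((e:ℝ)+1)) * (n.choose (e+1) : ℝ) = (n:ℝ) * ((n-1).choose e : ℝ) := by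
      exact_mod_cast congrArg Nat.cast hcoef
    linear_combination (y ^ (e+1) * (1-y) ^ (n-(e+1)) * (1-y)) * hcast
  have := hR ▸ hfinal
  linarith

noncomputable def A2 (n ℓ : ℕ) (y : ℝ) : ℝ :=
  (n:ℝ) * ((n-1).choose (ℓ-1) : ℝ) * y ^ (ℓ-1) * (1-y) ^ (n-ℓ+1) / gAn n ℓ y

lemma A2_monotone {n ℓ : ℕ} (hℓ : 1 ≤ ℓ) (hn : ℓ ≤ n) :
    MonotoneOn (A2 n ℓ) (Set.Ioo (0:ℝ) 1) := by
  rcases eq_or_lt_of_le hℓ with h1 | h2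
  · -- ℓ = 1 : A2 is constant n
    have hval : ∀ y ∈ Set.Ioo (0:ℝ) 1, A2 n ℓ y = n := by
      intro y hy
      have h1y : (1:ℝ) - y ≠ 0 := by have := hy.2; intro h; linarith [sub_eq_zero.mp h]
      rw [A2, ← h1, gAn]
      simp only [Finset.sum_range_one, Nat.choose_zero_right, Nat.cast_one, pow_zero,
        one_mul, Nat.sub_zero]
      have hnn : n - 1 + 1 = n := by omega
      rw [hnn]
      field_simp
      simp
    intro a ha b hb hab
    rw [hval a ha, hval b hb]
  · -- 2 ≤ ℓ
    have hℓ2 : 2 ≤ ℓ := h2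
    obtain ⟨e, rfl⟩ : ∃ e, ℓ = e + 2 := ⟨ℓ - 2, by omega⟩
    obtain ⟨m, hm⟩ : ∃ m, n - (e+2) = m := ⟨_, rfl⟩
    have hnm : n = m + e + 2 := by omega
    set coef : ℝ := (n:ℝ) * ((n-1).choose (e+1) : ℝ) with hcoef
    have hcoef_nonneg : 0 ≤ coef := by rw [hcoef]; positivity
    have hA2eq : A2 n (e+2) = fun y : ℝ => coef * y ^ (e+1) * (1-y) ^ (m+1) / gAn n (e+2) y := by
      funext y
      rw [A2]
      have h1 : e + 2 - 1 = e + 1 := by omega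
      have h2' : n - (e+2) + 1 = m + 1 := by omega
      rw [h1, h2', hcoef]
    have key : ∀ y ∈ Set.Ioo (0:ℝ) 1,
        HasDerivAt (A2 n (e+2))
          ((coef * y ^ e * (1-y) ^ m *
            ((((e:ℝ)+1) * (1-y) - ((m:ℝ)+1) * y) * gAn n (e+2) y
              + coef * y ^ (e+2) * (1-y) ^ (m+1))) / (gAn n (e+2) y)^2) y
        ∧ 0 ≤ (coef * y ^ e * (1-y) ^ m *
            ((((e:ℝ)+1) * (1-y) - ((m:ℝ)+1) * y) * gAn n (e+2) y
              + coef * y ^ (e+2) * (1-y) ^ (m+1))) / (gAn n (e+2) y)^2 := by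
      intro y hy
      obtain ⟨hy0, hy1⟩ := hy
      have hgApos : 0 < gAn n (e+2) y := gAn_pos n (by omega) hy0.le hy1
      have hN1 : HasDerivAt (fun w : ℝ => coef * w ^ (e+1) * (1-w) ^ (m+1))
          (coef * (((e+1:ℕ):ℝ) * y ^ e) * (1-y) ^ (m+1)
            - coef * y ^ (e+1) * (((m+1:ℕ):ℝ) * (1-y) ^ m)) y := by
        have h := hasDerivAt_term coef (e+1) (m+1) y
        simpa using h
      have hGd : HasDerivAt (gAn n (e+2))
          (-((n:ℝ) * ((n-1).choose (e+1) : ℝ) * y ^ (e+1) * (1-y) ^ (n-(e+2)))) y :=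
        hasDerivAt_gAn n (e+1) (by omega) y
      rw [hm] at hGd
      have hdiv := hN1.div hGd (ne_of_gt hgApos)
      have hBr : 0 ≤ ((((e:ℝ)+1) * (1-y) - ((m:ℝ)+1) * y) * gAn n (e+2) y
          + coef * y ^ (e+2) * (1-y) ^ (m+1)) := by
        have hA := ineq_A (n := n) (ℓ := e+2) (by omega) hn hy0.le hy1.le
        have h1 : e + 2 - 1 = e + 1 := by omega
        have h2' : n - (e+2) + 1 = m + 1 := by omega
        rw [h1, h2'] at hA
        have hc : ((n:ℝ) - ((e+2:ℕ):ℝ) + 1) = (m:ℝ) + 1 := by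
          have : (n:ℝ) = (m:ℝ) + (e:ℝ) + 2 := by exact_mod_cast congrArg Nat.cast hnm
          push_cast
          linarith
      -- hA : ((↑n - ↑(e+2) + 1) * y - (↑(e+2) - 1) * (1-y)) * gAn ≤ coef * y^(e+2) * (1-y)^(m+1)
        rw [hc] at hA
        have hc2 : ((e+2:ℕ):ℝ) - 1 = (e:ℝ) + 1 := by push_cast; ring
        rw [hc2] at hA
        rw [← hcoef] at hA
        nlinarith [hA]
      constructor
      · rw [hA2eq]
        refine hdiv.congr_deriv ?_
        have h1y : (0:ℝ) < 1 - y := by linarith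
        field_simp
        push_cast
        ring
      · have hnum : 0 ≤ coef * y ^ e * (1-y) ^ m *
            ((((e:ℝ)+1) * (1-y) - ((m:ℝ)+1) * y) * gAn n (e+2) y
              + coef * y ^ (e+2) * (1-y) ^ (m+1)) := by
          have h1y : (0:ℝ) ≤ 1 - y := by linarith
          have : (0:ℝ) ≤ coef * y ^ e * (1-y) ^ m := by positivity
          exact mul_nonneg this hBr
        positivity
    apply monotoneOn_of_deriv_nonneg (convex_Ioo 0 1)
    · exact fun y hy => ((key y hy).1).continuousAt.continuousWithinAt
    · intro y hy
      rw [interior_Ioo] at hy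
      exact ((key y hy).1).differentiableAt.differentiableWithinAt
    · intro y hy
      rw [interior_Ioo] at hy
      rw [((key y hy).1).deriv]
      exact (key y hy).2

noncomputable def GG (k : ℕ) (z : ℝ) : ℝ := z ^ k / (((k-1)! : ℝ) * (Real.exp z - SS k z))

lemma GG_eq {k : ℕ} {z : ℝ} (hz : 0 < z) : GG k z = 1 / (((k-1)! : ℝ) * MM k z) := by
  rw [GG, exp_sub_SS]
  have hM := MM_pos k hz.le
  have hzk : z ^ k ≠ 0 := by positivity
  have hf : (((k-1)! : ℝ)) ≠ 0 := by positivity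
  field_simp

lemma GG_pos {k : ℕ} {z : ℝ} (hz : 0 < z) : 0 < GG k z := by
  rw [GG_eq hz]
  have hM := MM_pos k hz.le
  positivity

lemma GG_anti {k : ℕ} {z₁ z₂ : ℝ} (h1 : 0 < z₁) (h12 : z₁ < z₂) : GG k z₂ < GG k z₁ := by
  rw [GG_eq h1, GG_eq (h1.trans h12)]
  have hM1 := MM_pos k h1.le
  have hM2 := MM_pos k (h1.trans h12).le
  apply one_div_lt_one_div_of_lt (by positivity)
  have := MM_lt k h1.le h12
  have hf : (0:ℝ) < ((k-1)! : ℝ) := by positivity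
  nlinarith

lemma A2_pos {n ℓ : ℕ} (hℓ : 1 ≤ ℓ) (hn : ℓ ≤ n) {y : ℝ} (h0 : 0 < y) (h1 : y < 1) :
    0 < A2 n ℓ y := by
  rw [A2]
  have hgA := gAn_pos n hℓ h0.le h1
  have hc : 0 < ((n-1).choose (ℓ-1) : ℝ) := by
    exact_mod_cast Nat.choose_pos (by omega : ℓ - 1 ≤ n - 1)
  have hn0 : (0:ℝ) < (n:ℝ) := by exact_mod_cast (by omega : 0 < n)
  have h1y : (0:ℝ) < 1 - y := by linarith
  positivity

noncomputable def Wfun (lam : ℝ) (n ℓ k : ℕ) (x : ℝ) : ℝ :=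
  A2 n ℓ (sB lam k x) * GG k (lam * x)

lemma sB_mem {lam : ℝ} {k : ℕ} (hlam : 0 < lam) (hk : 1 ≤ k) {x : ℝ} (hx : 0 < x) :
    sB lam k x ∈ Set.Ioo (0:ℝ) 1 :=
  ⟨sB_pos hk (by positivity), sB_lt_one (by positivity)⟩

lemma Wfun_strictAnti {lam : ℝ} (hlam : 0 < lam) {n ℓ k : ℕ}
    (hℓ : 1 ≤ ℓ) (hn : ℓ ≤ n) (hk : 1 ≤ k) :
    StrictAntiOn (Wfun lam n ℓ k) (Set.Ioi 0) := by
  obtain ⟨m, rfl⟩ : ∃ m, k = m + 1 := ⟨k - 1, by omega⟩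
  intro x₁ hx₁ x₂ hx₂ h12
  rw [Set.mem_Ioi] at hx₁ hx₂
  have hy₁ := sB_mem hlam hk hx₁
  have hy₂ := sB_mem hlam hk hx₂
  have hy21 : sB lam (m+1) x₂ ≤ sB lam (m+1) x₁ :=
    sB_antitone hlam m (Set.mem_Ici.mpr hx₁.le) (Set.mem_Ici.mpr hx₂.le) h12.le
  have hA2le : A2 n ℓ (sB lam (m+1) x₂) ≤ A2 n ℓ (sB lam (m+1) x₁) :=
    A2_monotone hℓ hn hy₂ hy₁ hy21
  have hz1 : 0 < lam * x₁ := by positivity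
  have hz12 : lam * x₁ < lam * x₂ := by nlinarith
  have hG := GG_anti (k := m+1) hz1 hz12
  have hGpos : 0 < GG (m+1) (lam * x₂) := GG_pos (hz1.trans hz12)
  have hA2pos : 0 < A2 n ℓ (sB lam (m+1) x₁) := A2_pos hℓ hn hy₁.1 hy₁.2
  rw [Wfun, Wfun]
  calc A2 n ℓ (sB lam (m+1) x₂) * GG (m+1) (lam * x₂)
      ≤ A2 n ℓ (sB lam (m+1) x₁) * GG (m+1) (lam * x₂) :=
        mul_le_mul_of_nonneg_right hA2le hGpos.le
    _ < A2 n ℓ (sB lam (m+1) x₁) * GG (m+1) (lam * x₁) :=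
        mul_lt_mul_of_pos_left hG hA2pos

noncomputable def ff (lam : ℝ) (n ℓ k : ℕ) (x : ℝ) : ℝ := gAn n ℓ (sB lam k x)

lemma hasDerivAt_ff {lam : ℝ} {n ℓ m : ℕ} (hℓ : 1 ≤ ℓ) (hn : ℓ ≤ n) (x : ℝ) :
    HasDerivAt (ff lam n ℓ (m+1))
      (((n:ℝ) * ((n-1).choose (ℓ-1) : ℝ) * (sB lam (m+1) x) ^ (ℓ-1)
          * (1 - sB lam (m+1) x) ^ (n-ℓ))
        * (lam * Real.exp (-(lam * x)) * (lam * x) ^ m / (m ! : ℝ))) x := by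
  obtain ⟨e, rfl⟩ : ∃ e, ℓ = e + 1 := ⟨ℓ - 1, by omega⟩
  have hg := hasDerivAt_gAn n e hn (sB lam (m+1) x)
  have hs := hasDerivAt_sB lam m x
  have hc := hg.comp x hs
  refine hc.congr_deriv ?_
  simp only [Nat.add_sub_cancel]
  ring

lemma ff_identity {lam : ℝ} (hlam : 0 < lam) {n ℓ m : ℕ} (hℓ : 1 ≤ ℓ) (hn : ℓ ≤ n)
    {x : ℝ} (hx : 0 < x) :
    x * (((n:ℝ) * ((n-1).choose (ℓ-1) : ℝ) * (sB lam (m+1) x) ^ (ℓ-1)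
          * (1 - sB lam (m+1) x) ^ (n-ℓ))
        * (lam * Real.exp (-(lam * x)) * (lam * x) ^ m / (m ! : ℝ)))
      = Wfun lam n ℓ (m+1) x * ff lam n ℓ (m+1) x := by
  have hk1 : 1 ≤ m + 1 := by omega
  have hy := sB_mem hlam hk1 hx
  set y := sB lam (m+1) x with hyd
  have hz : 0 < lam * x := by positivity
  have hgApos : 0 < gAn n ℓ y := gAn_pos n hℓ hy.1.le hy.2
  have hR : Real.exp (lam * x) - SS (m+1) (lam * x) = (lam*x) ^ (m+1) * MM (m+1) (lam*x) :=
    exp_sub_SS (m+1) (lam*x)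
  have hRpos : 0 < Real.exp (lam * x) - SS (m+1) (lam * x) := by
    rw [hR]; have := MM_pos (m+1) hz.le; positivity
  have h1y : 1 - y = Real.exp (-(lam * x)) * (Real.exp (lam * x) - SS (m+1) (lam * x)) := by
    rw [hyd, sB, mul_sub, ← Real.exp_add]
    simp
  rw [Wfun, ff, A2, GG]
  rw [← hyd]
  have hfact : ((m+1)-1)! = m ! := by norm_num
  rw [hfact]
  have hsplit : (1 - y) ^ (n-ℓ+1) = (1-y) ^ (n-ℓ) * (1 - y) := by rw [pow_succ]
  have hzk : (lam * x) ^ (m+1) = (lam * x) ^ m * (lam * x) := by rw [pow_succ]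
  rw [hsplit, hzk, h1y]
  have hgA : gAn n ℓ y ≠ 0 := ne_of_gt hgApos
  have hRne : Real.exp (lam * x) - SS (m+1) (lam * x) ≠ 0 := ne_of_gt hRpos
  have hm : (m ! : ℝ) ≠ 0 := by positivity
  generalize Real.exp (lam * x) - SS (m+1) (lam * x) = R at hRne ⊢
  field_simp

lemma key_no_dip {lam : ℝ} (hlam : 0 < lam) {n ℓ m : ℕ} (hℓ : 1 ≤ ℓ) (hn : ℓ ≤ n)
    {a b c : ℝ} (ha : 0 < a) (hab : a < b) (hbc : b < c)
    (hfa : a < ff lam n ℓ (m+1) a) (hfb : ff lam n ℓ (m+1) b < b)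
    (hfc : c < ff lam n ℓ (m+1) c) : False := by
  set k := m + 1 with hkd
  set F := ff lam n ℓ k with hFd
  set r : ℝ → ℝ := fun x => F x / x with hrd
  have hk1 : 1 ≤ k := by omega
  -- r has derivative F x * (W x - 1) / x^2 at any x > 0
  have hr : ∀ x : ℝ, 0 < x →
      HasDerivAt r (F x * (Wfun lam n ℓ k x - 1) / x ^ 2) x := by
    intro x hx
    have hF := hasDerivAt_ff (lam := lam) hℓ hn x (m := m)
    have hdiv := hF.div (hasDerivAt_id x) (ne_of_gt hx)
    have hid := ff_identity hlam hℓ hn hx (n := n) (ℓ := ℓ) (m := m)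
    simp only [id_eq, mul_one] at hdiv
    refine hdiv.congr_deriv ?_
    linear_combination hid / x ^ 2
  have hcont : ∀ s : Set ℝ, (∀ x ∈ s, 0 < x) → ContinuousOn r s := by
    intro s hs
    exact fun x hx => ((hr x (hs x hx)).continuousAt).continuousWithinAt
  -- MVT on [a,b]
  obtain ⟨p, hp, hp'⟩ := exists_hasDerivAt_eq_slope r
    (fun x => F x * (Wfun lam n ℓ k x - 1) / x ^ 2) hab
    (hcont _ (fun x hx => lt_of_lt_of_le ha hx.1))
    (fun x hx => hr x (ha.trans hx.1))
  obtain ⟨q, hq, hq'⟩ := exists_hasDerivAt_eq_slope r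
    (fun x => F x * (Wfun lam n ℓ k x - 1) / x ^ 2) hbc
    (hcont _ (fun x hx => lt_of_lt_of_le (ha.trans hab) hx.1))
    (fun x hx => hr x ((ha.trans hab).trans hx.1))
  have hb0 : 0 < b := ha.trans hab
  have hc0 : 0 < c := hb0.trans hbc
  have hra : 1 < r a := by rw [hrd]; exact (one_lt_div ha).mpr hfa
  have hrb : r b < 1 := by rw [hrd]; exact (div_lt_one hb0).mpr hfb
  have hrc : 1 < r c := by rw [hrd]; exact (one_lt_div hc0).mpr hfc
  have hp0 : 0 < p := ha.trans hp.1
  have hq0 : 0 < q := hb0.trans hq.1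
  -- slope signs
  have hslope1 : F p * (Wfun lam n ℓ k p - 1) / p ^ 2 < 0 := by
    rw [hp']; apply div_neg_of_neg_of_pos (by linarith) (by linarith)
  have hslope2 : 0 < F q * (Wfun lam n ℓ k q - 1) / q ^ 2 := by
    rw [hq']; apply div_pos (by linarith) (by linarith)
  have hFppos : 0 < F p := gAn_pos n hℓ (sB_mem hlam hk1 hp0).1.le (sB_mem hlam hk1 hp0).2
  have hFqpos : 0 < F q := gAn_pos n hℓ (sB_mem hlam hk1 hq0).1.le (sB_mem hlam hk1 hq0).2
  have hWp : Wfun lam n ℓ k p < 1 := by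
    by_contra h
    push_neg at h
    have : 0 ≤ F p * (Wfun lam n ℓ k p - 1) / p ^ 2 := by
      apply div_nonneg (mul_nonneg hFppos.le (by linarith)) (by positivity)
    linarith
  have hWq : 1 < Wfun lam n ℓ k q := by
    by_contra h
    push_neg at h
    have : F q * (Wfun lam n ℓ k q - 1) / q ^ 2 ≤ 0 := by
      apply div_nonpos_of_nonpos_of_nonneg
        (mul_nonpos_of_nonneg_of_nonpos hFqpos.le (by linarith)) (by positivity)
    linarith
  have hpq : p < q := hp.2.trans hq.1
  have := Wfun_strictAnti hlam hℓ hn hk1 (Set.mem_Ioi.mpr hp0) (Set.mem_Ioi.mpr hq0) hpq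
  linarith

lemma hasDerivAt_ratio {lam : ℝ} (hlam : 0 < lam) {n ℓ m : ℕ} (hℓ : 1 ≤ ℓ) (hn : ℓ ≤ n)
    {x : ℝ} (hx : 0 < x) :
    HasDerivAt (fun w => ff lam n ℓ (m+1) w / w)
      (ff lam n ℓ (m+1) x * (Wfun lam n ℓ (m+1) x - 1) / x ^ 2) x := by
  have hF := hasDerivAt_ff (lam := lam) hℓ hn x (m := m)
  have hdiv := hF.div (hasDerivAt_id x) (ne_of_gt hx)
  have hid := ff_identity hlam hℓ hn hx (n := n) (ℓ := ℓ) (m := m)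
  simp only [id_eq, mul_one] at hdiv
  refine hdiv.congr_deriv ?_
  linear_combination hid / x ^ 2

/-- `Δ(x) = x − g^A(g^B(x))`. -/
noncomputable def Δfun (h ℓ k : ℕ) (c x : ℝ) : ℝ := x - gA h ℓ (gB h k c x)

lemma gA_eq (h ℓ : ℕ) : gA h ℓ = gAn (h-1) ℓ := rfl

lemma gB_eq (h k : ℕ) (c q : ℝ) : gB h k c q = sB (c * h) k q := by
  rw [gB, Q_eq_s19, sB, mul_assoc]
  ring

lemma Δfun_eq (h ℓ k : ℕ) (c x : ℝ) :
    Δfun h ℓ k c x = x - ff (c * h) (h-1) ℓ k x := by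
  rw [Δfun, gB_eq, gA_eq, ff]

/-- `Δ(0) = 0`, `Δ(1) > 0`, and exactly one of: `Δ ≥ 0` on `[0,1]`, or there exist
`0 ≤ u < v < 1` with `Δ ≥ 0` on `[0,u] ∪ [v,1]` and `Δ ≤ 0` on `[u,v]`. -/
theorem statement_19 (h ℓ k : ℕ) (hℓ1 : 1 ≤ ℓ) (hℓh : ℓ < h) (hk1 : 1 ≤ k)
    (c : ℝ) (hc : 0 < c) :
    Δfun h ℓ k c 0 = 0 ∧ 0 < Δfun h ℓ k c 1 ∧
    Xor' (∀ x ∈ Set.Icc (0 : ℝ) 1, 0 ≤ Δfun h ℓ k c x)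
      (∃ u v : ℝ, 0 ≤ u ∧ u < v ∧ v < 1 ∧
        (∀ x ∈ Set.Icc (0 : ℝ) u, 0 ≤ Δfun h ℓ k c x) ∧
        (∀ x ∈ Set.Icc v (1 : ℝ), 0 ≤ Δfun h ℓ k c x) ∧
        ∀ x ∈ Set.Icc u v, Δfun h ℓ k c x ≤ 0) := by
  obtain ⟨m, rfl⟩ : ∃ m, k = m + 1 := ⟨k - 1, by omega⟩
  have hk' : 1 ≤ m + 1 := by omega
  set n := h - 1 with hnd
  have hn : ℓ ≤ n := by omega
  have hh0 : 0 < (h:ℝ) := by exact_mod_cast (by omega : 0 < h)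
  set lam := c * (h:ℝ) with hlamd
  have hlam : 0 < lam := mul_pos hc hh0
  set F := ff lam n ℓ (m+1) with hFd
  set Δ := Δfun h ℓ (m+1) c with hΔd
  have hΔeq : ∀ x, Δ x = x - F x := fun x => Δfun_eq h ℓ (m+1) c x
  have hFcont : Continuous F := by
    rw [continuous_iff_continuousAt]
    exact fun x => (hasDerivAt_ff (lam := lam) hℓ1 hn x (m := m)).continuousAt
  have hΔcont : Continuous Δ := by
    have : Δ = fun x => x - F x := funext hΔeq
    rw [this]
    exact continuous_id.sub hFcont
  -- Part 0 : Δ 0 = 0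
  have part0 : Δ 0 = 0 := by
    rw [hΔeq 0, hFd, ff, sB_zero hk', gAn_one n hn]
    ring
  -- Part 1 : 0 < Δ 1
  have part1 : 0 < Δ 1 := by
    rw [hΔeq 1]
    have hy := sB_mem hlam hk' one_pos
    have := gAn_lt_one n hn hy.1 hy.2
    rw [hFd, ff]
    linarith
  -- KEY wrapper
  have KEY : ∀ a b c' : ℝ, 0 < a → a < b → b < c' →
      Δ a < 0 → 0 < Δ b → Δ c' < 0 → False := by
    intro a b c' ha hab hbc hΔa hΔb hΔc
    rw [hΔeq a] at hΔa
    rw [hΔeq b] at hΔb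
    rw [hΔeq c'] at hΔc
    exact key_no_dip hlam hℓ1 hn ha hab hbc (by linarith) (by linarith) (by linarith)
  refine ⟨part0, part1, ?_⟩
  by_cases hA : ∀ x ∈ Set.Icc (0:ℝ) 1, 0 ≤ Δ x
  · left
    refine ⟨hA, ?_⟩
    rintro ⟨u, v, hu0, huv, hv1, hl, hr, hmid⟩
    set x₁ := u + (v - u)/3 with hx₁d
    set x₂ := u + 2*(v - u)/3 with hx₂d
    have hux1 : u < x₁ := by rw [hx₁d]; linarith
    have hx12 : x₁ < x₂ := by rw [hx₁d, hx₂d]; linarith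
    have hx2v : x₂ < v := by rw [hx₂d]; linarith
    have hΔ0 : ∀ x ∈ Set.Ioo u v, F x = x := by
      intro x hx
      have h1 : Δ x ≤ 0 := hmid x ⟨hx.1.le, hx.2.le⟩
      have h2 : 0 ≤ Δ x := hA x ⟨by linarith [hx.1], by linarith [hx.2]⟩
      have : Δ x = 0 := le_antisymm h1 h2
      rw [hΔeq x] at this
      linarith
    have hW1 : ∀ x ∈ Set.Ioo u v, Wfun lam n ℓ (m+1) x = 1 := by
      intro x hx
      have hx0 : 0 < x := lt_of_le_of_lt hu0 hx.1
      have hEv : (fun w => F w / w) =ᶠ[nhds x] (fun _ => (1:ℝ)) := by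
        filter_upwards [Ioo_mem_nhds hx.1 hx.2] with w hw
        have hw0 : 0 < w := lt_of_le_of_lt hu0 hw.1
        rw [hΔ0 w hw, div_self (ne_of_gt hw0)]
      have hd1 : HasDerivAt (fun w => F w / w) 0 x :=
        (hasDerivAt_const x (1:ℝ)).congr_of_eventuallyEq hEv
      have hd2 := hasDerivAt_ratio hlam hℓ1 hn hx0 (m := m)
      rw [← hFd] at hd2
      have := hd1.unique hd2
      have hFx : F x = x := hΔ0 x hx
      rw [hFx] at this
      have hx2 : (x:ℝ) ^ 2 ≠ 0 := by positivity
      have h4 : x * (Wfun lam n ℓ (m+1) x - 1) = 0 := by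
        have h5 := this.symm
        rwa [div_eq_zero_iff, or_iff_left hx2] at h5
      rcases mul_eq_zero.mp h4 with h | h
      · exact absurd h (ne_of_gt hx0)
      · linarith
    have hW1' := hW1 x₁ ⟨hux1, hx12.trans hx2v⟩
    have hW2' := hW1 x₂ ⟨hux1.trans hx12, hx2v⟩
    have := Wfun_strictAnti hlam hℓ1 hn hk'
      (Set.mem_Ioi.mpr (lt_of_le_of_lt hu0 hux1))
      (Set.mem_Ioi.mpr (lt_of_le_of_lt hu0 (hux1.trans hx12))) hx12
    rw [hW1', hW2'] at this
    exact lt_irrefl 1 this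
  · right
    refine ⟨?_, hA⟩
    push_neg at hA
    obtain ⟨x₀, hx₀mem, hx₀⟩ := hA
    set N : Set ℝ := {x | x ∈ Set.Icc (0:ℝ) 1 ∧ Δ x < 0} with hNd
    have hNsub : N ⊆ Set.Icc 0 1 := fun x hx => hx.1
    have hNne : N.Nonempty := ⟨x₀, hx₀mem, hx₀⟩
    have hbddA : BddAbove N := ⟨1, fun x hx => hx.1.2⟩
    have hbddB : BddBelow N := ⟨0, fun x hx => hx.1.1⟩
    set u := sInf N with hud
    set v := sSup N with hvd
    have hu0 : 0 ≤ u := le_csInf hNne (fun x hx => hx.1.1)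
    have hv1 : v ≤ 1 := csSup_le hNne (fun x hx => hx.1.2)
    have hΔclosed : IsClosed {x : ℝ | Δ x ≤ 0} := isClosed_le hΔcont continuous_const
    have hΔu : Δ u ≤ 0 := by
      have := csInf_mem_closure hNne hbddB
      have hsub : closure N ⊆ {x : ℝ | Δ x ≤ 0} :=
        closure_minimal (fun x hx => le_of_lt hx.2) hΔclosed
      exact hsub this
    have hΔv : Δ v ≤ 0 := by
      have := csSup_mem_closure hNne hbddA
      have hsub : closure N ⊆ {x : ℝ | Δ x ≤ 0} :=
        closure_minimal (fun x hx => le_of_lt hx.2) hΔclosed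
      exact hsub this
    have hvlt1 : v < 1 := lt_of_le_of_ne hv1 (fun hv => by rw [hv] at hΔv; linarith)
    -- x₀ is interior
    have hx₀0 : 0 < x₀ := by
      rcases eq_or_lt_of_le hx₀mem.1 with h | h
      · rw [← h] at hx₀; linarith
      · exact h
    have hx₀1 : x₀ < 1 := by
      rcases eq_or_lt_of_le hx₀mem.2 with h | h
      · rw [h] at hx₀; linarith
      · exact h
    have hopen : IsOpen {x : ℝ | Δ x < 0} := isOpen_lt hΔcont continuous_const
    obtain ⟨ε, hε, hball⟩ := Metric.isOpen_iff.mp hopen x₀ hx₀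
    set δ := min (ε/2) (min (x₀/2) ((1 - x₀)/2)) with hδd
    have hδ : 0 < δ := by
      apply lt_min (by linarith) (lt_min (by linarith) (by linarith))
    have hδε : δ < ε := by
      calc δ ≤ ε/2 := min_le_left _ _
        _ < ε := by linarith
    have hmem : ∀ w : ℝ, |w - x₀| ≤ δ → w ∈ N := by
      intro w hw
      have hwball : w ∈ Metric.ball x₀ ε := by
        rw [Metric.mem_ball, Real.dist_eq]
        linarith [hw]
      have hΔw : Δ w < 0 := hball hwball
      have habs := abs_le.mp hw
      have hδ1 : δ ≤ x₀/2 := le_trans (min_le_right _ _) (min_le_left _ _)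
      have hδ2 : δ ≤ (1 - x₀)/2 := le_trans (min_le_right _ _) (min_le_right _ _)
      exact ⟨⟨by linarith [habs.1], by linarith [habs.2]⟩, hΔw⟩
    have hm1 : x₀ - δ ∈ N := hmem _ (by rw [abs_of_nonpos (by linarith)]; linarith)
    have hm2 : x₀ + δ ∈ N := hmem _ (by rw [abs_of_nonneg (by linarith)]; linarith)
    have huv : u < v := by
      have h1 : u ≤ x₀ - δ := csInf_le hbddB hm1
      have h2 : x₀ + δ ≤ v := le_csSup hbddA hm2
      linarith
    -- Δ ≥ 0 left of u
    have hleft' : ∀ x, 0 ≤ x → x < u → 0 ≤ Δ x := by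
      intro x hx0' hxu
      by_contra hneg
      push_neg at hneg
      have hxN : x ∈ N := ⟨⟨hx0', by linarith [le_trans (csInf_le hbddB hm1) (by linarith : x₀ - δ ≤ (1:ℝ))]⟩, hneg⟩
      exact absurd (csInf_le hbddB hxN) (not_le.mpr hxu)
    have hleft : ∀ x ∈ Set.Icc (0:ℝ) u, 0 ≤ Δ x := by
      rcases eq_or_lt_of_le hu0 with h0u | h0u
      · intro x hx
        have : x = 0 := le_antisymm (by rw [h0u]; exact hx.2) hx.1
        rw [this, part0]
      · have hclosed2 : IsClosed {x : ℝ | 0 ≤ Δ x} := isClosed_le continuous_const hΔcont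
        have hsub : Set.Ico (0:ℝ) u ⊆ {x : ℝ | 0 ≤ Δ x} := fun x hx => hleft' x hx.1 hx.2
        have : Set.Icc (0:ℝ) u ⊆ {x : ℝ | 0 ≤ Δ x} := by
          rw [← closure_Ico (ne_of_lt h0u)]
          exact closure_minimal hsub hclosed2
        exact fun x hx => this hx
    -- Δ ≥ 0 right of v
    have hright' : ∀ x, v < x → x ≤ 1 → 0 ≤ Δ x := by
      intro x hvx hx1
      by_contra hneg
      push_neg at hneg
      have hxN : x ∈ N := ⟨⟨le_trans hu0 (by linarith), hx1⟩, hneg⟩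
      exact absurd (le_csSup hbddA hxN) (not_le.mpr hvx)
    have hright : ∀ x ∈ Set.Icc v (1:ℝ), 0 ≤ Δ x := by
      have hclosed2 : IsClosed {x : ℝ | 0 ≤ Δ x} := isClosed_le continuous_const hΔcont
      have hsub : Set.Ioc v (1:ℝ) ⊆ {x : ℝ | 0 ≤ Δ x} := fun x hx => hright' x hx.1 hx.2
      have : Set.Icc v (1:ℝ) ⊆ {x : ℝ | 0 ≤ Δ x} := by
        rw [← closure_Ioc (ne_of_lt hvlt1)]
        exact closure_minimal hsub hclosed2
      exact fun x hx => this hx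
    -- Δ ≤ 0 on [u,v]
    have hmid : ∀ x ∈ Set.Icc u v, Δ x ≤ 0 := by
      intro b hb
      by_contra hpos
      push_neg at hpos
      have hbu : u < b := by
        rcases eq_or_lt_of_le hb.1 with h | h
        · rw [← h] at hpos; linarith
        · exact h
      have hbv : b < v := by
        rcases eq_or_lt_of_le hb.2 with h | h
        · rw [h] at hpos; linarith
        · exact h
      obtain ⟨a, haN, hab⟩ := exists_lt_of_csInf_lt hNne hbu
      obtain ⟨c', hcN, hbc⟩ := exists_lt_of_lt_csSup hNne hbv
      have ha0 : 0 < a := by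
        rcases eq_or_lt_of_le haN.1.1 with h | h
        · exfalso; rw [← h] at haN; have := haN.2; rw [part0] at this; linarith
        · exact h
      exact KEY a b c' ha0 hab hbc haN.2 hpos hcN.2
    exact ⟨u, v, hu0, huv, hvlt1, hleft, hright, hmid⟩
end
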